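/- arXiv:2508.15177 — 7 statements merged into one kernel-verified Lean document; each statement's English description precedes it below -/
import Mathlib

section
/- Every finite simple graph that admits a proper colouring with 3 colours is word-representable. -/
namespace WR3

open List

set_option linter.unusedSectionVars false

variable {V : Type*} [DecidableEq V]

/-- The filter function for the pair `x, y`. -/
def F (x y : V) (l : List V) : List V := l.filter (fun z => decide (z = x ∨ z = y))

lemma F_symm (x y : V) (l : List V) : F x y l = F y x l := by
  unfold F
  apply List.filter_congr
  intro z _
  exact decide_eq_decide.mpr or_comm

lemma F_append (x y : V) (l₁ l₂ : List V) : F x y (l₁ ++ l₂) = F x y l₁ ++ F x y l₂ :=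
  List.filter_append _ _

lemma F_reverse (x y : V) (l : List V) : F x y l.reverse = (F x y l).reverse :=
  List.filter_reverse

lemma F_flatMap {α : Type*} (x y : V) (f : α → List V) (l : List α) :
    F x y (l.flatMap f) = (l.map (fun a => F x y (f a))).flatten := by
  induction l with
  | nil => rfl
  | cons a t ih => simp only [List.flatMap_cons, F_append, ih, List.map_cons,
      List.flatten_cons]

lemma F_cons_left (x y : V) (t : List V) : F x y (x :: t) = x :: F x y t := by
  simp [F, List.filter_cons]

lemma F_cons_right (x y : V) (t : List V) : F x y (y :: t) = y :: F x y t := by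
  simp [F, List.filter_cons]

lemma F_cons_other {x y a : V} (hax : a ≠ x) (hay : a ≠ y) (t : List V) :
    F x y (a :: t) = F x y t := by
  simp [F, List.filter_cons, hax, hay]

lemma F_none {x y : V} {l : List V} (hx : x ∉ l) (hy : y ∉ l) : F x y l = [] := by
  apply List.filter_eq_nil_iff.mpr
  intro a ha
  simp only [decide_eq_true_eq]
  rintro (rfl | rfl) <;> [exact hx ha; exact hy ha]

lemma F_single {x y : V} {l : List V} (hl : l.Nodup) (hx : x ∈ l) (hy : y ∉ l) :
    F x y l = [x] := by
  induction l with
  | nil => cases hx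
  | cons a t ih =>
    have hyt : y ∉ t := fun h => hy (List.mem_cons_of_mem _ h)
    have hya : a ≠ y := fun h => hy (h ▸ List.mem_cons_self)
    rcases List.nodup_cons.mp hl with ⟨hat, ht⟩
    by_cases hax : a = x
    · subst hax
      rw [F_cons_left, F_none hat hyt]
    · have hxt : x ∈ t := by
        rcases List.mem_cons.mp hx with h | h
        · exact absurd h.symm hax
        · exact h
      rw [F_cons_other hax hya, ih ht hxt hyt]

lemma F_single' {x y : V} {l : List V} (hl : l.Nodup) (hy : y ∈ l) (hx : x ∉ l) :
    F x y l = [y] := by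
  rw [F_symm]
  exact F_single hl hy hx

lemma F_pair {x y : V} {l : List V} (hl : l.Nodup) (hx : x ∈ l) (hy : y ∈ l) (hxy : x ≠ y) :
    F x y l = [x, y] ∨ F x y l = [y, x] := by
  induction l with
  | nil => cases hx
  | cons a t ih =>
    rcases List.nodup_cons.mp hl with ⟨hat, ht⟩
    by_cases hax : a = x
    · subst hax
      have hyt : y ∈ t := by
        rcases List.mem_cons.mp hy with h | h
        · exact absurd h.symm hxy
        · exact h
      left
      rw [F_cons_left, F_single' ht hyt hat]
    · by_cases hay : a = y
      · subst hay
        have hxt : x ∈ t := by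
          rcases List.mem_cons.mp hx with h | h
          · exact absurd h.symm (Ne.symm hxy)
          · exact h
        right
        rw [F_cons_right, F_single ht hxt hat]
      · have hxt : x ∈ t := by
          rcases List.mem_cons.mp hx with h | h
          · exact absurd h.symm hax
          · exact h
        have hyt : y ∈ t := by
          rcases List.mem_cons.mp hy with h | h
          · exact absurd h.symm hay
          · exact h
        rw [F_cons_other hax hay]
        exact ih ht hxt hyt

/-! Chain' helpers -/

lemma not_chain'_double (U T : List V) (z : V) :
    ¬ (U ++ z :: z :: T).Chain' (· ≠ ·) := by
  intro h
  have h2 := (List.isChain_append.mp h).2.1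
  exact (List.isChain_cons_cons.mp h2).1 rfl

lemma chain'_pair_cons {u v : V} (huv : u ≠ v) {t : List V}
    (ht : t.Chain' (· ≠ ·)) (hh : ∀ z ∈ t.head?, z ≠ v) :
    (u :: v :: t).Chain' (· ≠ ·) := by
  refine List.isChain_cons_cons.mpr ⟨huv, List.isChain_cons.mpr ⟨?_, ht⟩⟩
  intro z hz
  exact (hh z hz).symm

lemma chain'_flatten_const {u v : V} (huv : u ≠ v) :
    ∀ (L : List (List V)) (t : List V), (∀ l ∈ L, l = [u, v]) →
      t.Chain' (· ≠ ·) → (∀ z ∈ t.head?, z ≠ v) →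
      ((L.flatten ++ t).Chain' (· ≠ ·))
  | [], t, _, ht, _ => by simpa using ht
  | l :: L, t, hL, ht, hh => by
    have hl : l = [u, v] := hL _ (List.mem_cons_self)
    subst hl
    have ih := chain'_flatten_const huv L t (fun l hl => hL l (List.mem_cons_of_mem _ hl)) ht hh
    have heq : (([u, v] :: L).flatten ++ t) = u :: v :: (L.flatten ++ t) := by
      simp
    rw [heq]
    apply chain'_pair_cons huv ih
    intro z hz
    cases L with
    | nil =>
      simp only [List.flatten_nil, List.nil_append] at hz
      exact hh z hz
    | cons l' L' =>
      have hl' : l' = [u, v] := hL _ (by simp)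
      subst hl'
      simp only [List.flatten_cons, List.cons_append, List.head?_cons,
        Option.mem_def, Option.some.injEq] at hz
      subst hz
      exact huv

lemma chain'_cons_flatten {u v : V} (huv : u ≠ v) :
    ∀ (L : List (List V)), (∀ l ∈ L, l = [v, u]) →
      ((u :: L.flatten).Chain' (· ≠ ·))
  | [], _ => by exact List.isChain_singleton _
  | l :: L, hL => by
    have hl : l = [v, u] := hL _ (List.mem_cons_self)
    subst hl
    have ih := chain'_cons_flatten huv L (fun l hl => hL l (List.mem_cons_of_mem _ hl))
    have heq : (u :: ([v, u] :: L).flatten) = u :: v :: (u :: L.flatten) := by simp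
    rw [heq]
    exact List.isChain_cons_cons.mpr ⟨huv, List.isChain_cons_cons.mpr ⟨huv.symm, ih⟩⟩

lemma flatten_const_head {u : V} {r : List V} :
    ∀ (L : List (List V)) (s : List V), (∀ l ∈ L, l = u :: r) →
      ∃ s', L.flatten ++ (u :: s) = u :: s'
  | [], s, _ => ⟨s, rfl⟩
  | l :: L, s, hL => by
    have hl : l = u :: r := hL _ (List.mem_cons_self)
    subst hl
    exact ⟨r ++ (L.flatten ++ (u :: s)), by simp⟩


/-! ## The word associated to a 3-colouring -/

section Graph

variable {V : Type*} [Fintype V] [DecidableEq V] {G : SimpleGraph V} [DecidableRel G.Adj]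
  (C : G.Coloring (Fin 3))

/-- The list of vertices of colour `i`. -/
noncomputable def cl (i : Fin 3) : List V := (Finset.univ.filter fun v => C v = i).toList

lemma mem_cl {v : V} {i : Fin 3} : v ∈ cl C i ↔ C v = i := by simp [cl]

lemma not_mem_cl {v : V} {i : Fin 3} (h : C v ≠ i) : v ∉ cl C i := fun hv => h ((mem_cl C).mp hv)

lemma nodup_cl (i : Fin 3) : (cl C i).Nodup := Finset.nodup_toList _

/-- Non-adjacent pairs with colours `(i, j)`. -/
noncomputable def pr (i j : Fin 3) : List (V × V) :=
  (Finset.univ.filter fun p : V × V => C p.1 = i ∧ C p.2 = j ∧ ¬ G.Adj p.1 p.2).toList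

lemma mem_pr {p : V × V} {i j : Fin 3} :
    p ∈ pr C i j ↔ C p.1 = i ∧ C p.2 = j ∧ ¬G.Adj p.1 p.2 := by simp [pr]

lemma nodup_pr (i j : Fin 3) : (pr C i j).Nodup := Finset.nodup_toList _

/-- Breaking round for a non-adjacent pair of colours (0,2). -/
noncomputable def rAC (p : V × V) : List V :=
  ((cl C 0).erase p.1) ++ ([p.2, p.1] ++ (((cl C 2).erase p.2) ++ cl C 1))

/-- Breaking round for a non-adjacent pair of colours (1,2). -/
noncomputable def rBC (p : V × V) : List V :=
  cl C 0 ++ (((cl C 2).erase p.2) ++ ([p.1, p.2] ++ ((cl C 1).erase p.1)))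

/-- Breaking round for a non-adjacent pair of colours (0,1). -/
noncomputable def rAB (p : V × V) : List V :=
  ((cl C 1).erase p.2) ++ ([p.1, p.2] ++ (((cl C 0).erase p.1) ++ cl C 2))

/-- The representing word. -/
noncomputable def word : List V :=
  (cl C 0 ++ (cl C 2 ++ cl C 1)) ++
  (((cl C 0).reverse ++ ((cl C 2).reverse ++ (cl C 1).reverse)) ++
  (((pr C 0 2).flatMap (rAC C)) ++
  (((pr C 1 2).flatMap (rBC C)) ++
  ((cl C 0 ++ cl C 2) ++
  (((pr C 0 1).flatMap (rAB C)) ++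
  (cl C 1 ++ (cl C 0 ++ cl C 2)))))))

lemma fin3_cases (c : Fin 3) : c = 0 ∨ c = 1 ∨ c = 2 := by omega

lemma mem_word (v : V) : v ∈ word C := by
  have h : v ∈ cl C 0 ∨ v ∈ cl C 1 ∨ v ∈ cl C 2 := by
    rcases fin3_cases (C v) with h | h | h
    · exact Or.inl ((mem_cl C).mpr h)
    · exact Or.inr (Or.inl ((mem_cl C).mpr h))
    · exact Or.inr (Or.inr ((mem_cl C).mpr h))
  unfold word
  rcases h with h | h | h <;> simp [h]


/-! Erase helpers -/

lemma F_nil (x y : V) : F x y ([] : List V) = [] := rfl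

lemma F_erase_pos {x y a : V} {l : List V} (hl : l.Nodup) (hx : x ∈ l) (hy : y ∉ l)
    (hxa : x ≠ a) : F x y (l.erase a) = [x] :=
  F_single (hl.erase a) ((hl.mem_erase_iff).mpr ⟨hxa, hx⟩)
    (fun h => hy (List.mem_of_mem_erase h))

lemma F_erase_pos' {x y a : V} {l : List V} (hl : l.Nodup) (hy : y ∈ l) (hx : x ∉ l)
    (hya : y ≠ a) : F x y (l.erase a) = [y] := by
  rw [F_symm]; exact F_erase_pos hl hy hx hya

lemma F_erase_self {x y : V} {l : List V} (hl : l.Nodup) (hy : y ∉ l) :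
    F x y (l.erase x) = [] :=
  F_none (fun h => ((hl.mem_erase_iff).mp h).1 rfl) (fun h => hy (List.mem_of_mem_erase h))

lemma F_erase_self' {x y : V} {l : List V} (hl : l.Nodup) (hx : x ∉ l) :
    F x y (l.erase y) = [] := by
  rw [F_symm]; exact F_erase_self hl hx

lemma F_erase_none {x y a : V} {l : List V} (hx : x ∉ l) (hy : y ∉ l) :
    F x y (l.erase a) = [] :=
  F_none (fun h => hx (List.mem_of_mem_erase h)) (fun h => hy (List.mem_of_mem_erase h))

lemma not_chain'_double' {w : List V} (U T : List V) (z : V)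
    (h : w = U ++ z :: z :: T) : ¬ w.Chain' (· ≠ ·) := by
  rw [h]; exact not_chain'_double U T z

lemma chain'_pair {x y : V} (hxy : x ≠ y) : ([x, y] : List V).Chain' (· ≠ ·) :=
  List.isChain_cons_cons.mpr ⟨hxy, List.isChain_singleton _⟩

section Case02

variable {x y : V}

lemma case02 (hxy : x ≠ y) (hx : C x = 0) (hy : C y = 2) :
    (F x y (word C)).Chain' (· ≠ ·) ↔ G.Adj x y := by
  have hx0 : x ∈ cl C 0 := (mem_cl C).mpr hx
  have hxn1 : x ∉ cl C 1 := not_mem_cl C (by rw [hx]; decide)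
  have hxn2 : x ∉ cl C 2 := not_mem_cl C (by rw [hx]; decide)
  have hy2 : y ∈ cl C 2 := (mem_cl C).mpr hy
  have hyn0 : y ∉ cl C 0 := not_mem_cl C (by rw [hy]; decide)
  have hyn1 : y ∉ cl C 1 := not_mem_cl C (by rw [hy]; decide)
  have e0 : F x y (cl C 0) = [x] := F_single (nodup_cl C 0) hx0 hyn0
  have e1 : F x y (cl C 1) = [] := F_none hxn1 hyn1
  have e2 : F x y (cl C 2) = [y] := F_single' (nodup_cl C 2) hy2 hxn2
  have hAC : ∀ p ∈ pr C 0 2, p ≠ (x, y) → F x y (rAC C p) = [x, y] := by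
    intro p hp hne
    obtain ⟨hp1, hp2, hpadj⟩ := (mem_pr C).mp hp
    have hp2x : p.2 ≠ x := fun h => by rw [h, hx] at hp2; exact absurd hp2 (by decide)
    unfold rAC
    by_cases h1 : p.1 = x
    · have h2 : p.2 ≠ y := fun h => hne (Prod.ext h1 h)
      rw [F_append, F_append, F_append, h1, F_erase_self (nodup_cl C 0) hyn0,
        F_cons_other hp2x h2, F_cons_left, F_nil,
        F_erase_pos' (nodup_cl C 2) hy2 hxn2 (Ne.symm h2), e1]
      rfl
    · have h1x : x ≠ p.1 := fun h => h1 h.symm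
      have h1y : p.1 ≠ y := fun h => by rw [h, hy] at hp1; exact absurd hp1 (by decide)
      rw [F_append, F_append, F_append, F_erase_pos (nodup_cl C 0) hx0 hyn0 h1x]
      by_cases h2 : p.2 = y
      · rw [h2, F_cons_right, F_cons_other h1 h1y, F_nil,
          F_erase_self' (nodup_cl C 2) hxn2, e1]
        rfl
      · rw [F_cons_other hp2x h2, F_cons_other h1 h1y, F_nil,
          F_erase_pos' (nodup_cl C 2) hy2 hxn2 (fun h => h2 h.symm), e1]
        rfl
  have hACown : F x y (rAC C (x, y)) = [y, x] := by
    unfold rAC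
    rw [F_append, F_append, F_append, F_erase_self (nodup_cl C 0) hyn0,
      F_cons_right, F_cons_left, F_nil, F_erase_self' (nodup_cl C 2) hxn2, e1]
    rfl
  have hBC : ∀ p ∈ pr C 1 2, F x y (rBC C p) = [x, y] := by
    intro p hp
    obtain ⟨hp1, hp2, hpadj⟩ := (mem_pr C).mp hp
    have h1x : p.1 ≠ x := fun h => by rw [h, hx] at hp1; exact absurd hp1 (by decide)
    have h1y : p.1 ≠ y := fun h => by rw [h, hy] at hp1; exact absurd hp1 (by decide)
    have h2x : p.2 ≠ x := fun h => by rw [h, hx] at hp2; exact absurd hp2 (by decide)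
    unfold rBC
    rw [F_append, F_append, F_append, e0]
    by_cases h2 : p.2 = y
    · rw [h2, F_erase_self' (nodup_cl C 2) hxn2, F_cons_other h1x h1y, F_cons_right,
        F_nil, F_erase_none hxn1 hyn1]
      rfl
    · rw [F_erase_pos' (nodup_cl C 2) hy2 hxn2 (fun h => h2 h.symm),
        F_cons_other h1x h1y, F_cons_other h2x h2, F_nil, F_erase_none hxn1 hyn1]
      rfl
  have hAB : ∀ p ∈ pr C 0 1, F x y (rAB C p) = [x, y] := by
    intro p hp
    obtain ⟨hp1, hp2, hpadj⟩ := (mem_pr C).mp hp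
    have h2x : p.2 ≠ x := fun h => by rw [h, hx] at hp2; exact absurd hp2 (by decide)
    have h2y : p.2 ≠ y := fun h => by rw [h, hy] at hp2; exact absurd hp2 (by decide)
    unfold rAB
    rw [F_append, F_append, F_append, F_erase_none hxn1 hyn1]
    by_cases h1 : p.1 = x
    · rw [h1, F_cons_left, F_cons_other h2x h2y, F_nil,
        F_erase_self (nodup_cl C 0) hyn0, e2]
      rfl
    · rw [F_cons_other h1 (fun h => by rw [h, hy] at hp1; exact absurd hp1 (by decide)),
        F_cons_other h2x h2y, F_nil,
        F_erase_pos (nodup_cl C 0) hx0 hyn0 (fun h => h1 h.symm), e2]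
      rfl
  have hM2 : ∀ l ∈ (pr C 1 2).map (fun a => F x y (rBC C a)), l = [x, y] := by
    intro l hl
    obtain ⟨p, hp, rfl⟩ := List.mem_map.mp hl
    exact hBC p hp
  have hM3 : ∀ l ∈ (pr C 0 1).map (fun a => F x y (rAB C a)), l = [x, y] := by
    intro l hl
    obtain ⟨p, hp, rfl⟩ := List.mem_map.mp hl
    exact hAB p hp
  unfold word
  simp only [F_append, F_reverse, F_flatMap, e0, e1, e2, List.reverse_singleton,
    List.reverse_nil, List.append_assoc, List.cons_append, List.nil_append, List.append_nil]
  by_cases hadj : G.Adj x y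
  · refine iff_of_true ?_ hadj
    have hM1 : ∀ l ∈ (pr C 0 2).map (fun a => F x y (rAC C a)), l = [x, y] := by
      intro l hl
      obtain ⟨p, hp, rfl⟩ := List.mem_map.mp hl
      refine hAC p hp ?_
      rintro rfl
      exact ((mem_pr C).mp hp).2.2 hadj
    have c5 : (((pr C 0 1).map (fun a => F x y (rAB C a))).flatten ++ [x, y]).Chain' (· ≠ ·) :=
      chain'_flatten_const hxy _ _ hM3 (chain'_pair hxy)
        (by intro z hz; simp at hz; subst hz; exact hxy)
    obtain ⟨s5, hs5⟩ := flatten_const_head ((pr C 0 1).map (fun a => F x y (rAB C a))) [y] hM3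
    have c4 : (x :: y :: (((pr C 0 1).map (fun a => F x y (rAB C a))).flatten ++
        [x, y])).Chain' (· ≠ ·) := by
      refine chain'_pair_cons hxy c5 ?_
      rw [show ((pr C 0 1).map (fun a => F x y (rAB C a))).flatten ++ [x, y] =
        ((pr C 0 1).map (fun a => F x y (rAB C a))).flatten ++ (x :: [y]) from rfl, hs5]
      intro z hz; simp at hz; subst hz; exact hxy
    have c3 : (((pr C 1 2).map (fun a => F x y (rBC C a))).flatten ++
        (x :: y :: (((pr C 0 1).map (fun a => F x y (rAB C a))).flatten ++
          [x, y]))).Chain' (· ≠ ·) := by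
      refine chain'_flatten_const hxy _ _ hM2 c4 ?_
      intro z hz; simp at hz; subst hz; exact hxy
    obtain ⟨s3, hs3⟩ := flatten_const_head ((pr C 1 2).map (fun a => F x y (rBC C a)))
      (y :: (((pr C 0 1).map (fun a => F x y (rAB C a))).flatten ++ [x, y])) hM2
    have c2 : (((pr C 0 2).map (fun a => F x y (rAC C a))).flatten ++
        (((pr C 1 2).map (fun a => F x y (rBC C a))).flatten ++
        (x :: y :: (((pr C 0 1).map (fun a => F x y (rAB C a))).flatten ++
          [x, y])))).Chain' (· ≠ ·) := by
      refine chain'_flatten_const hxy _ _ hM1 c3 ?_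
      rw [hs3]
      intro z hz; simp at hz; subst hz; exact hxy
    obtain ⟨s2, hs2⟩ := flatten_const_head ((pr C 0 2).map (fun a => F x y (rAC C a))) s3 hM1
    refine chain'_pair_cons hxy (chain'_pair_cons hxy c2 ?_) ?_
    · rw [hs3, hs2]
      intro z hz; simp at hz; subst hz; exact hxy
    · intro z hz; simp at hz; subst hz; exact hxy
  · refine iff_of_false ?_ hadj
    have hmem : (x, y) ∈ pr C 0 2 := (mem_pr C).mpr ⟨hx, hy, hadj⟩
    obtain ⟨l1, l2, hsplit⟩ := List.append_of_mem hmem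
    have hnd : ((x, y) : V × V) ∉ l2 := by
      have hnd0 : (pr C 0 2 (G := G)).Nodup := nodup_pr C 0 2
      rw [hsplit] at hnd0
      exact (List.nodup_cons.mp hnd0.of_append_right).1
    have hM1l2 : ∀ l ∈ l2.map (fun a => F x y (rAC C a)), l = [x, y] := by
      intro l hl
      obtain ⟨p, hp, rfl⟩ := List.mem_map.mp hl
      refine hAC p ?_ ?_
      · rw [hsplit]; exact List.mem_append_right _ (List.mem_cons_of_mem _ hp)
      · rintro rfl; exact hnd hp
    obtain ⟨s1, hs1⟩ := flatten_const_head ((pr C 1 2).map (fun a => F x y (rBC C a)))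
      (y :: (((pr C 0 1).map (fun a => F x y (rAB C a))).flatten ++ [x, y])) hM2
    obtain ⟨s2, hs2⟩ := flatten_const_head (l2.map (fun a => F x y (rAC C a))) s1 hM1l2
    refine not_chain'_double'
      (x :: y :: x :: y :: ((l1.map (fun a => F x y (rAC C a))).flatten ++ [y])) s2 x ?_
    rw [hsplit]
    simp only [List.map_append, List.map_cons, List.flatten_append, List.flatten_cons,
      hACown, List.append_assoc, List.cons_append, List.nil_append]
    rw [hs1, hs2]

end Case02

section Case01

variable {x y : V}

lemma case01 (hxy : x ≠ y) (hx : C x = 0) (hy : C y = 1) :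
    (F x y (word C)).Chain' (· ≠ ·) ↔ G.Adj x y := by
  have hx0 : x ∈ cl C 0 := (mem_cl C).mpr hx
  have hxn1 : x ∉ cl C 1 := not_mem_cl C (by rw [hx]; decide)
  have hxn2 : x ∉ cl C 2 := not_mem_cl C (by rw [hx]; decide)
  have hy1 : y ∈ cl C 1 := (mem_cl C).mpr hy
  have hyn0 : y ∉ cl C 0 := not_mem_cl C (by rw [hy]; decide)
  have hyn2 : y ∉ cl C 2 := not_mem_cl C (by rw [hy]; decide)
  have e0 : F x y (cl C 0) = [x] := F_single (nodup_cl C 0) hx0 hyn0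
  have e1 : F x y (cl C 1) = [y] := F_single' (nodup_cl C 1) hy1 hxn1
  have e2 : F x y (cl C 2) = [] := F_none hxn2 hyn2
  have hAC : ∀ p ∈ pr C 0 2, F x y (rAC C p) = [x, y] := by
    intro p hp
    obtain ⟨hp1, hp2, hpadj⟩ := (mem_pr C).mp hp
    have h2x : p.2 ≠ x := fun h => by rw [h, hx] at hp2; exact absurd hp2 (by decide)
    have h2y : p.2 ≠ y := fun h => by rw [h, hy] at hp2; exact absurd hp2 (by decide)
    unfold rAC
    by_cases h1 : p.1 = x
    · rw [F_append, F_append, F_append, h1, F_erase_self (nodup_cl C 0) hyn0,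
        F_cons_other h2x h2y, F_cons_left, F_nil, F_erase_none hxn2 hyn2, e1]
      rfl
    · have h1y : p.1 ≠ y := fun h => by rw [h, hy] at hp1; exact absurd hp1 (by decide)
      rw [F_append, F_append, F_append,
        F_erase_pos (nodup_cl C 0) hx0 hyn0 (fun h => h1 h.symm),
        F_cons_other h2x h2y, F_cons_other h1 h1y, F_nil, F_erase_none hxn2 hyn2, e1]
      rfl
  have hBC : ∀ p ∈ pr C 1 2, F x y (rBC C p) = [x, y] := by
    intro p hp
    obtain ⟨hp1, hp2, hpadj⟩ := (mem_pr C).mp hp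
    have h1x : p.1 ≠ x := fun h => by rw [h, hx] at hp1; exact absurd hp1 (by decide)
    have h2x : p.2 ≠ x := fun h => by rw [h, hx] at hp2; exact absurd hp2 (by decide)
    have h2y : p.2 ≠ y := fun h => by rw [h, hy] at hp2; exact absurd hp2 (by decide)
    unfold rBC
    by_cases h1 : p.1 = y
    · rw [F_append, F_append, F_append, e0, F_erase_none hxn2 hyn2, h1, F_cons_right,
        F_cons_other h2x h2y, F_nil, F_erase_self' (nodup_cl C 1) hxn1]
      rfl
    · rw [F_append, F_append, F_append, e0, F_erase_none hxn2 hyn2,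
        F_cons_other h1x h1, F_cons_other h2x h2y, F_nil,
        F_erase_pos' (nodup_cl C 1) hy1 hxn1 (fun h => h1 h.symm)]
      rfl
  have hABown : F x y (rAB C (x, y)) = [x, y] := by
    unfold rAB
    rw [F_append, F_append, F_append, F_erase_self' (nodup_cl C 1) hxn1,
      F_cons_left, F_cons_right, F_nil, F_erase_self (nodup_cl C 0) hyn0, e2]
    rfl
  have hAB : ∀ p ∈ pr C 0 1, p ≠ (x, y) → F x y (rAB C p) = [y, x] := by
    intro p hp hne
    obtain ⟨hp1, hp2, hpadj⟩ := (mem_pr C).mp hp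
    have h1y : p.1 ≠ y := fun h => by rw [h, hy] at hp1; exact absurd hp1 (by decide)
    have h2x : p.2 ≠ x := fun h => by rw [h, hx] at hp2; exact absurd hp2 (by decide)
    unfold rAB
    by_cases h1 : p.1 = x
    · have h2 : p.2 ≠ y := fun h => hne (Prod.ext h1 h)
      rw [F_append, F_append, F_append, F_erase_pos' (nodup_cl C 1) hy1 hxn1 (Ne.symm h2),
        h1, F_cons_left, F_cons_other h2x h2, F_nil, F_erase_self (nodup_cl C 0) hyn0, e2]
      rfl
    · by_cases h2 : p.2 = y
      · rw [F_append, F_append, F_append, h2, F_erase_self' (nodup_cl C 1) hxn1,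
          F_cons_other h1 h1y, F_cons_right, F_nil,
          F_erase_pos (nodup_cl C 0) hx0 hyn0 (fun h => h1 h.symm), e2]
        rfl
      · rw [F_append, F_append, F_append,
          F_erase_pos' (nodup_cl C 1) hy1 hxn1 (fun h => h2 h.symm),
          F_cons_other h1 h1y, F_cons_other h2x h2, F_nil,
          F_erase_pos (nodup_cl C 0) hx0 hyn0 (fun h => h1 h.symm), e2]
        rfl
  have hM1 : ∀ l ∈ (pr C 0 2).map (fun a => F x y (rAC C a)), l = [x, y] := by
    intro l hl
    obtain ⟨p, hp, rfl⟩ := List.mem_map.mp hl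
    exact hAC p hp
  have hM2 : ∀ l ∈ (pr C 1 2).map (fun a => F x y (rBC C a)), l = [x, y] := by
    intro l hl
    obtain ⟨p, hp, rfl⟩ := List.mem_map.mp hl
    exact hBC p hp
  unfold word
  simp only [F_append, F_reverse, F_flatMap, e0, e1, e2, List.reverse_singleton,
    List.reverse_nil, List.append_assoc, List.cons_append, List.nil_append, List.append_nil]
  by_cases hadj : G.Adj x y
  · refine iff_of_true ?_ hadj
    have hM3 : ∀ l ∈ (pr C 0 1).map (fun a => F x y (rAB C a)), l = [y, x] := by
      intro l hl
      obtain ⟨p, hp, rfl⟩ := List.mem_map.mp hl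
      refine hAB p hp ?_
      rintro rfl
      exact ((mem_pr C).mp hp).2.2 hadj
    have ht : ((pr C 0 1).map (fun a => F x y (rAB C a))).flatten ++ [y, x] =
        ((pr C 0 1).map (fun a => F x y (rAB C a)) ++ [[y, x]]).flatten := by simp
    have c4 : (x :: (((pr C 0 1).map (fun a => F x y (rAB C a))).flatten ++
        [y, x])).Chain' (· ≠ ·) := by
      rw [ht]
      refine chain'_cons_flatten hxy _ ?_
      intro l hl
      rcases List.mem_append.mp hl with h | h
      · exact hM3 l h
      · simpa using h
    have c3 : (((pr C 1 2).map (fun a => F x y (rBC C a))).flatten ++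
        (x :: (((pr C 0 1).map (fun a => F x y (rAB C a))).flatten ++
          [y, x]))).Chain' (· ≠ ·) := by
      refine chain'_flatten_const hxy _ _ hM2 c4 ?_
      intro z hz; simp at hz; subst hz; exact hxy
    obtain ⟨s3, hs3⟩ := flatten_const_head ((pr C 1 2).map (fun a => F x y (rBC C a)))
      (((pr C 0 1).map (fun a => F x y (rAB C a))).flatten ++ [y, x]) hM2
    have c2 : (((pr C 0 2).map (fun a => F x y (rAC C a))).flatten ++
        (((pr C 1 2).map (fun a => F x y (rBC C a))).flatten ++
        (x :: (((pr C 0 1).map (fun a => F x y (rAB C a))).flatten ++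
          [y, x])))).Chain' (· ≠ ·) := by
      refine chain'_flatten_const hxy _ _ hM1 c3 ?_
      rw [hs3]
      intro z hz; simp at hz; subst hz; exact hxy
    obtain ⟨s2, hs2⟩ := flatten_const_head ((pr C 0 2).map (fun a => F x y (rAC C a))) s3 hM1
    refine chain'_pair_cons hxy (chain'_pair_cons hxy c2 ?_) ?_
    · rw [hs3, hs2]
      intro z hz; simp at hz; subst hz; exact hxy
    · intro z hz; simp at hz; subst hz; exact hxy
  · refine iff_of_false ?_ hadj
    have hmem : (x, y) ∈ pr C 0 1 := (mem_pr C).mpr ⟨hx, hy, hadj⟩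
    obtain ⟨l1, l2, hsplit⟩ := List.append_of_mem hmem
    have hnd : ((x, y) : V × V) ∉ l2 := by
      have hnd0 : (pr C 0 1 (G := G)).Nodup := nodup_pr C 0 1
      rw [hsplit] at hnd0
      exact (List.nodup_cons.mp hnd0.of_append_right).1
    have hM3l2 : ∀ l ∈ l2.map (fun a => F x y (rAB C a)), l = [y, x] := by
      intro l hl
      obtain ⟨p, hp, rfl⟩ := List.mem_map.mp hl
      refine hAB p ?_ ?_
      · rw [hsplit]; exact List.mem_append_right _ (List.mem_cons_of_mem _ hp)
      · rintro rfl; exact hnd hp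
    obtain ⟨s1, hs1⟩ := flatten_const_head (l2.map (fun a => F x y (rAB C a))) [x] hM3l2
    refine not_chain'_double'
      (x :: y :: x :: y :: ((((pr C 0 2).map (fun a => F x y (rAC C a))).flatten ++
        (((pr C 1 2).map (fun a => F x y (rBC C a))).flatten ++
        (x :: ((l1.map (fun a => F x y (rAB C a))).flatten ++ [x])))))) s1 y ?_
    rw [hsplit]
    simp only [List.map_append, List.map_cons, List.flatten_append, List.flatten_cons,
      hABown, List.append_assoc, List.cons_append, List.nil_append]
    rw [hs1]

end Case01

section Case12

variable {x y : V}

lemma case12 (hxy : x ≠ y) (hx : C x = 1) (hy : C y = 2) :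
    (F x y (word C)).Chain' (· ≠ ·) ↔ G.Adj x y := by
  have hx1 : x ∈ cl C 1 := (mem_cl C).mpr hx
  have hxn0 : x ∉ cl C 0 := not_mem_cl C (by rw [hx]; decide)
  have hxn2 : x ∉ cl C 2 := not_mem_cl C (by rw [hx]; decide)
  have hy2 : y ∈ cl C 2 := (mem_cl C).mpr hy
  have hyn0 : y ∉ cl C 0 := not_mem_cl C (by rw [hy]; decide)
  have hyn1 : y ∉ cl C 1 := not_mem_cl C (by rw [hy]; decide)
  have e0 : F x y (cl C 0) = [] := F_none hxn0 hyn0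
  have e1 : F x y (cl C 1) = [x] := F_single (nodup_cl C 1) hx1 hyn1
  have e2 : F x y (cl C 2) = [y] := F_single' (nodup_cl C 2) hy2 hxn2
  have hAC : ∀ p ∈ pr C 0 2, F x y (rAC C p) = [y, x] := by
    intro p hp
    obtain ⟨hp1, hp2, hpadj⟩ := (mem_pr C).mp hp
    have h1x : p.1 ≠ x := fun h => by rw [h, hx] at hp1; exact absurd hp1 (by decide)
    have h1y : p.1 ≠ y := fun h => by rw [h, hy] at hp1; exact absurd hp1 (by decide)
    have h2x : p.2 ≠ x := fun h => by rw [h, hx] at hp2; exact absurd hp2 (by decide)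
    unfold rAC
    by_cases h2 : p.2 = y
    · rw [F_append, F_append, F_append, F_erase_none hxn0 hyn0, h2, F_cons_right,
        F_cons_other h1x h1y, F_nil, F_erase_self' (nodup_cl C 2) hxn2, e1]
      rfl
    · rw [F_append, F_append, F_append, F_erase_none hxn0 hyn0,
        F_cons_other h2x h2, F_cons_other h1x h1y, F_nil,
        F_erase_pos' (nodup_cl C 2) hy2 hxn2 (fun h => h2 h.symm), e1]
      rfl
  have hBCown : F x y (rBC C (x, y)) = [x, y] := by
    unfold rBC
    rw [F_append, F_append, F_append, e0, F_erase_self' (nodup_cl C 2) hxn2,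
      F_cons_left, F_cons_right, F_nil, F_erase_self (nodup_cl C 1) hyn1]
    rfl
  have hBC : ∀ p ∈ pr C 1 2, p ≠ (x, y) → F x y (rBC C p) = [y, x] := by
    intro p hp hne
    obtain ⟨hp1, hp2, hpadj⟩ := (mem_pr C).mp hp
    have h1y : p.1 ≠ y := fun h => by rw [h, hy] at hp1; exact absurd hp1 (by decide)
    have h2x : p.2 ≠ x := fun h => by rw [h, hx] at hp2; exact absurd hp2 (by decide)
    unfold rBC
    by_cases h1 : p.1 = x
    · have h2 : p.2 ≠ y := fun h => hne (Prod.ext h1 h)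
      rw [F_append, F_append, F_append, e0,
        F_erase_pos' (nodup_cl C 2) hy2 hxn2 (Ne.symm h2), h1, F_cons_left,
        F_cons_other h2x h2, F_nil, F_erase_self (nodup_cl C 1) hyn1]
      rfl
    · by_cases h2 : p.2 = y
      · rw [F_append, F_append, F_append, e0, h2, F_erase_self' (nodup_cl C 2) hxn2,
          F_cons_other h1 h1y, F_cons_right, F_nil,
          F_erase_pos (nodup_cl C 1) hx1 hyn1 (fun h => h1 h.symm)]
        rfl
      · rw [F_append, F_append, F_append, e0,
          F_erase_pos' (nodup_cl C 2) hy2 hxn2 (fun h => h2 h.symm),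
          F_cons_other h1 h1y, F_cons_other h2x h2, F_nil,
          F_erase_pos (nodup_cl C 1) hx1 hyn1 (fun h => h1 h.symm)]
        rfl
  have hAB : ∀ p ∈ pr C 0 1, F x y (rAB C p) = [x, y] := by
    intro p hp
    obtain ⟨hp1, hp2, hpadj⟩ := (mem_pr C).mp hp
    have h1x : p.1 ≠ x := fun h => by rw [h, hx] at hp1; exact absurd hp1 (by decide)
    have h1y : p.1 ≠ y := fun h => by rw [h, hy] at hp1; exact absurd hp1 (by decide)
    have h2y : p.2 ≠ y := fun h => by rw [h, hy] at hp2; exact absurd hp2 (by decide)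
    unfold rAB
    by_cases h2 : p.2 = x
    · rw [F_append, F_append, F_append, h2, F_erase_self (nodup_cl C 1) hyn1,
        F_cons_other h1x h1y, F_cons_left, F_nil, F_erase_none hxn0 hyn0, e2]
      rfl
    · rw [F_append, F_append, F_append,
        F_erase_pos (nodup_cl C 1) hx1 hyn1 (fun h => h2 h.symm),
        F_cons_other h1x h1y, F_cons_other h2 h2y, F_nil, F_erase_none hxn0 hyn0, e2]
      rfl
  have hM1 : ∀ l ∈ (pr C 0 2).map (fun a => F x y (rAC C a)), l = [y, x] := by
    intro l hl
    obtain ⟨p, hp, rfl⟩ := List.mem_map.mp hl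
    exact hAC p hp
  have hM3 : ∀ l ∈ (pr C 0 1).map (fun a => F x y (rAB C a)), l = [x, y] := by
    intro l hl
    obtain ⟨p, hp, rfl⟩ := List.mem_map.mp hl
    exact hAB p hp
  have hyx : y ≠ x := Ne.symm hxy
  unfold word
  simp only [F_append, F_reverse, F_flatMap, e0, e1, e2, List.reverse_singleton,
    List.reverse_nil, List.append_assoc, List.cons_append, List.nil_append, List.append_nil]
  by_cases hadj : G.Adj x y
  · refine iff_of_true ?_ hadj
    have hM2 : ∀ l ∈ (pr C 1 2).map (fun a => F x y (rBC C a)), l = [y, x] := by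
      intro l hl
      obtain ⟨p, hp, rfl⟩ := List.mem_map.mp hl
      refine hBC p hp ?_
      rintro rfl
      exact ((mem_pr C).mp hp).2.2 hadj
    have ht : ((pr C 0 1).map (fun a => F x y (rAB C a))).flatten ++ [x, y] =
        ((pr C 0 1).map (fun a => F x y (rAB C a)) ++ [[x, y]]).flatten := by simp
    have c4 : (y :: (((pr C 0 1).map (fun a => F x y (rAB C a))).flatten ++
        [x, y])).Chain' (· ≠ ·) := by
      rw [ht]
      refine chain'_cons_flatten hyx _ ?_
      intro l hl
      rcases List.mem_append.mp hl with h | h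
      · exact hM3 l h
      · simpa using h
    have c3 : (((pr C 1 2).map (fun a => F x y (rBC C a))).flatten ++
        (y :: (((pr C 0 1).map (fun a => F x y (rAB C a))).flatten ++
          [x, y]))).Chain' (· ≠ ·) := by
      refine chain'_flatten_const hyx _ _ hM2 c4 ?_
      intro z hz; simp at hz; subst hz; exact hyx
    obtain ⟨s3, hs3⟩ := flatten_const_head ((pr C 1 2).map (fun a => F x y (rBC C a)))
      (((pr C 0 1).map (fun a => F x y (rAB C a))).flatten ++ [x, y]) hM2
    have c2 : (((pr C 0 2).map (fun a => F x y (rAC C a))).flatten ++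
        (((pr C 1 2).map (fun a => F x y (rBC C a))).flatten ++
        (y :: (((pr C 0 1).map (fun a => F x y (rAB C a))).flatten ++
          [x, y])))).Chain' (· ≠ ·) := by
      refine chain'_flatten_const hyx _ _ hM1 c3 ?_
      rw [hs3]
      intro z hz; simp at hz; subst hz; exact hyx
    obtain ⟨s2, hs2⟩ := flatten_const_head ((pr C 0 2).map (fun a => F x y (rAC C a))) s3 hM1
    refine chain'_pair_cons hyx (chain'_pair_cons hyx c2 ?_) ?_
    · rw [hs3, hs2]
      intro z hz; simp at hz; subst hz; exact hyx
    · intro z hz; simp at hz; subst hz; exact hyx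
  · refine iff_of_false ?_ hadj
    have hmem : (x, y) ∈ pr C 1 2 := (mem_pr C).mpr ⟨hx, hy, hadj⟩
    obtain ⟨l1, l2, hsplit⟩ := List.append_of_mem hmem
    have hnd : ((x, y) : V × V) ∉ l2 := by
      have hnd0 : (pr C 1 2 (G := G)).Nodup := nodup_pr C 1 2
      rw [hsplit] at hnd0
      exact (List.nodup_cons.mp hnd0.of_append_right).1
    have hM2l2 : ∀ l ∈ l2.map (fun a => F x y (rBC C a)), l = [y, x] := by
      intro l hl
      obtain ⟨p, hp, rfl⟩ := List.mem_map.mp hl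
      refine hBC p ?_ ?_
      · rw [hsplit]; exact List.mem_append_right _ (List.mem_cons_of_mem _ hp)
      · rintro rfl; exact hnd hp
    obtain ⟨s1, hs1⟩ := flatten_const_head (l2.map (fun a => F x y (rBC C a)))
      (((pr C 0 1).map (fun a => F x y (rAB C a))).flatten ++ [x, y]) hM2l2
    refine not_chain'_double'
      (y :: x :: y :: x :: ((((pr C 0 2).map (fun a => F x y (rAC C a))).flatten ++
        ((l1.map (fun a => F x y (rBC C a))).flatten ++ [x])))) s1 y ?_
    rw [hsplit]
    simp only [List.map_append, List.map_cons, List.flatten_append, List.flatten_cons,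
      hBCown, List.append_assoc, List.cons_append, List.nil_append]
    rw [hs1]

end Case12

section CaseSame

variable {x y : V}

lemma caseSame (hxy : x ≠ y) (hc : C x = C y) :
    ¬ (F x y (word C)).Chain' (· ≠ ·) := by
  rcases fin3_cases (C x) with hx | hx | hx
  · have hy : C y = 0 := by rw [← hc, hx]
    have hx0 : x ∈ cl C 0 := (mem_cl C).mpr hx
    have hy0 : y ∈ cl C 0 := (mem_cl C).mpr hy
    have hxn1 : x ∉ cl C 1 := not_mem_cl C (by rw [hx]; decide)
    have hxn2 : x ∉ cl C 2 := not_mem_cl C (by rw [hx]; decide)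
    have hyn1 : y ∉ cl C 1 := not_mem_cl C (by rw [hy]; decide)
    have hyn2 : y ∉ cl C 2 := not_mem_cl C (by rw [hy]; decide)
    have e1 : F x y (cl C 1) = [] := F_none hxn1 hyn1
    have e2 : F x y (cl C 2) = [] := F_none hxn2 hyn2
    rcases F_pair (nodup_cl C 0) hx0 hy0 hxy with hm | hm <;>
    · unfold word
      simp only [F_append, F_reverse, F_flatMap, hm, e1, e2, List.reverse_cons,
        List.reverse_nil, List.append_assoc, List.cons_append, List.nil_append,
        List.append_nil]
      first
      | exact not_chain'_double' [x] _ y rfl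
      | exact not_chain'_double' [y] _ x rfl
  · have hy : C y = 1 := by rw [← hc, hx]
    have hx1 : x ∈ cl C 1 := (mem_cl C).mpr hx
    have hy1 : y ∈ cl C 1 := (mem_cl C).mpr hy
    have hxn0 : x ∉ cl C 0 := not_mem_cl C (by rw [hx]; decide)
    have hxn2 : x ∉ cl C 2 := not_mem_cl C (by rw [hx]; decide)
    have hyn0 : y ∉ cl C 0 := not_mem_cl C (by rw [hy]; decide)
    have hyn2 : y ∉ cl C 2 := not_mem_cl C (by rw [hy]; decide)
    have e0 : F x y (cl C 0) = [] := F_none hxn0 hyn0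
    have e2 : F x y (cl C 2) = [] := F_none hxn2 hyn2
    rcases F_pair (nodup_cl C 1) hx1 hy1 hxy with hm | hm <;>
    · unfold word
      simp only [F_append, F_reverse, F_flatMap, hm, e0, e2, List.reverse_cons,
        List.reverse_nil, List.append_assoc, List.cons_append, List.nil_append,
        List.append_nil]
      first
      | exact not_chain'_double' [x] _ y rfl
      | exact not_chain'_double' [y] _ x rfl
  · have hy : C y = 2 := by rw [← hc, hx]
    have hx2 : x ∈ cl C 2 := (mem_cl C).mpr hx
    have hy2 : y ∈ cl C 2 := (mem_cl C).mpr hy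
    have hxn0 : x ∉ cl C 0 := not_mem_cl C (by rw [hx]; decide)
    have hxn1 : x ∉ cl C 1 := not_mem_cl C (by rw [hx]; decide)
    have hyn0 : y ∉ cl C 0 := not_mem_cl C (by rw [hy]; decide)
    have hyn1 : y ∉ cl C 1 := not_mem_cl C (by rw [hy]; decide)
    have e0 : F x y (cl C 0) = [] := F_none hxn0 hyn0
    have e1 : F x y (cl C 1) = [] := F_none hxn1 hyn1
    rcases F_pair (nodup_cl C 2) hx2 hy2 hxy with hm | hm <;>
    · unfold word
      simp only [F_append, F_reverse, F_flatMap, hm, e0, e1, List.reverse_cons,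
        List.reverse_nil, List.append_assoc, List.cons_append, List.nil_append,
        List.append_nil]
      first
      | exact not_chain'_double' [x] _ y rfl
      | exact not_chain'_double' [y] _ x rfl

end CaseSame

lemma main_iff (x y : V) (hxy : x ≠ y) :
    (F x y (word C)).Chain' (· ≠ ·) ↔ G.Adj x y := by
  have hsymm : ∀ u v : V, F u v (word C) = F v u (word C) := fun u v => F_symm u v _
  rcases fin3_cases (C x) with hx | hx | hx <;> rcases fin3_cases (C y) with hy | hy | hy
  · exact iff_of_false (caseSame C hxy (hx.trans hy.symm)) (fun h => C.valid h (hx.trans hy.symm))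
  · exact case01 C hxy hx hy
  · exact case02 C hxy hx hy
  · rw [hsymm x y, G.adj_comm]
    exact case01 C hxy.symm hy hx
  · exact iff_of_false (caseSame C hxy (hx.trans hy.symm)) (fun h => C.valid h (hx.trans hy.symm))
  · exact case12 C hxy hx hy
  · rw [hsymm x y, G.adj_comm]
    exact case02 C hxy.symm hy hx
  · rw [hsymm x y, G.adj_comm]
    exact case12 C hxy.symm hy hx
  · exact iff_of_false (caseSame C hxy (hx.trans hy.symm)) (fun h => C.valid h (hx.trans hy.symm))

end Graph
end WR3

/-- Two distinct letters `x` and `y` alternate in the word `w` if the subsequence of `w`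
formed by all occurrences of `x` and `y` has no two equal consecutive letters. -/
def Alternates {V : Type*} [DecidableEq V] (w : List V) (x y : V) : Prop :=
  (w.filter (fun z => decide (z = x ∨ z = y))).Chain' (· ≠ ·)

/-- A graph `G` is word-representable if there is a word over its vertex set, in which
every vertex occurs, such that two distinct vertices alternate in the word iff
they are adjacent in `G`. -/
def WordRepresentable {V : Type*} [DecidableEq V] (G : SimpleGraph V) : Prop :=
  ∃ w : List V, (∀ v : V, v ∈ w) ∧
    ∀ x y : V, x ≠ y → (Alternates w x y ↔ G.Adj x y)

/-- Every finite simple graph that admits a proper colouring with 3 colours is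
word-representable. -/
theorem stmt1 {V : Type*} [Fintype V] [DecidableEq V] (G : SimpleGraph V)
    (h : G.Colorable 3) : WordRepresentable G := by
  classical
  obtain ⟨C⟩ := h
  refine ⟨WR3.word C, WR3.mem_word C, ?_⟩
  intro x y hxy
  exact WR3.main_iff C x y hxy
end

section
/- Let G be a finite simple graph and let u and v be two distinct vertices of G whose neighbourhoods are the same except that u and v are allowed to be adjacent to each other, i.e., N(u) \ {v} = N(v) \ {u}. Let G' be the induced subgraph of G obtained by removing the vertex u. Then G is word-representable if and only if G' is word-representable. -/
open List

section Aux

variable {V : Type*} [DecidableEq V]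

theorem chain'_append {α : Type*} {R : α → α → Prop} {l₁ l₂ : List α} :
    Chain' R (l₁ ++ l₂) ↔ Chain' R l₁ ∧ Chain' R l₂ ∧
      ∀ x ∈ l₁.getLast?, ∀ y ∈ l₂.head?, R x y :=
  isChain_append

theorem chain'_cons {α : Type*} {R : α → α → Prop} {a b : α} {l : List α} :
    Chain' R (a :: b :: l) ↔ R a b ∧ Chain' R (b :: l) :=
  isChain_cons_cons

theorem chain'_map {α β : Type*} {R : α → α → Prop} (f : β → α) {l : List β} :
    Chain' R (map f l) ↔ Chain' (fun a b : β => R (f a) (f b)) l :=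
  isChain_map f

theorem my_dedup_filter (p : V → Bool) : ∀ (l : List V), (l.filter p).dedup = l.dedup.filter p
  | [] => rfl
  | a :: l => by
    by_cases hp : p a
    · by_cases hm : a ∈ l
      · rw [filter_cons_of_pos hp, dedup_cons_of_mem (by simp [mem_filter, hm, hp]),
          dedup_cons_of_mem hm, my_dedup_filter p l]
      · rw [filter_cons_of_pos hp, dedup_cons_of_notMem (by simp [mem_filter, hm]),
          dedup_cons_of_notMem hm, filter_cons_of_pos hp, my_dedup_filter p l]
    · by_cases hm : a ∈ l
      · rw [filter_cons_of_neg (by simpa using hp), dedup_cons_of_mem hm, my_dedup_filter p l]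
      · rw [filter_cons_of_neg (by simpa using hp), dedup_cons_of_notMem hm,
          filter_cons_of_neg (by simpa using hp), my_dedup_filter p l]

theorem my_getLast?_dedup : ∀ (l : List V), l.dedup.getLast? = l.getLast?
  | [] => rfl
  | a :: l => by
    by_cases hm : a ∈ l
    · have hl : l ≠ [] := ne_nil_of_mem hm
      rw [dedup_cons_of_mem hm, my_getLast?_dedup l]
      rw [show a :: l = [a] ++ l from rfl, getLast?_append]
      cases hl' : l.getLast? with
      | none => exact absurd (getLast?_eq_none_iff.mp hl') hl
      | some b => rfl
    · rw [dedup_cons_of_notMem hm]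
      rcases eq_or_ne l [] with rfl | hl
      · simp
      · have hd : l.dedup ≠ [] := by simpa [dedup_eq_nil] using hl
        rw [show a :: l.dedup = [a] ++ l.dedup from rfl, getLast?_append,
          show a :: l = [a] ++ l from rfl, getLast?_append, my_getLast?_dedup l]

/-- dedup of a nonempty word over two letters containing both is a pair ending
with the last letter. -/
theorem two_letter_dedup (q : List V) (x y : V) (hxy : x ≠ y) (hx : x ∈ q) (hy : y ∈ q)
    (hsub : ∀ z ∈ q, z = x ∨ z = y) :
    ∃ c d : V, c ≠ d ∧ q.dedup = [c, d] ∧ q.getLast? = some d := by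
  have hnd : q.dedup.Nodup := nodup_dedup q
  have hxd : x ∈ q.dedup := mem_dedup.2 hx
  have hyd : y ∈ q.dedup := mem_dedup.2 hy
  have hsubd : ∀ z ∈ q.dedup, z = x ∨ z = y := fun z hz => hsub z (mem_dedup.1 hz)
  have hlast : q.dedup.getLast? = q.getLast? := my_getLast?_dedup q
  match hq : q.dedup with
  | [] => rw [hq] at hxd; exact absurd hxd not_mem_nil
  | [a] => rw [hq] at hxd hyd; simp at hxd hyd; exact absurd (hxd.trans hyd.symm) hxy
  | [a, b] =>
    rw [hq] at hnd hlast
    refine ⟨a, b, ?_, rfl, ?_⟩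
    · simpa using (nodup_cons.1 hnd).1
    · rw [← hlast]; rfl
  | a :: b :: c :: r =>
    rw [hq] at hnd hsubd
    have h1 : a ≠ b := by simp [nodup_cons] at hnd; tauto
    have h2 : a ≠ c := by simp [nodup_cons] at hnd; tauto
    have h3 : b ≠ c := by simp [nodup_cons] at hnd; tauto
    rcases hsubd a (by simp) with ha | ha <;> rcases hsubd b (by simp) with hb | hb <;>
      rcases hsubd c (by simp) with hc | hc <;>
      first
        | exact absurd (ha.trans hb.symm) h1
        | exact absurd (ha.trans hc.symm) h2
        | exact absurd (hb.trans hc.symm) h3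

theorem key_chain (q : List V) (x y : V) (hxy : x ≠ y) (hx : x ∈ q) (hy : y ∈ q)
    (hsub : ∀ z ∈ q, z = x ∨ z = y) :
    Chain' (fun a b => a ≠ b) (q ++ q.dedup) ↔ Chain' (fun a b => a ≠ b) q := by
  obtain ⟨c, d, hcd, hded, hlast⟩ := two_letter_dedup q x y hxy hx hy hsub
  rw [hded, chain'_append]
  simp [hlast, chain'_cons, hcd, hcd.symm, Chain']

theorem filter_cons_append' (p : V → Bool) (a : V) (l : List V) :
    (a :: l).filter p = [a].filter p ++ l.filter p := by
  rw [filter_cons]; split <;> simp [filter_cons, *]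

theorem filter_sub_eq (v : V) (B : List V) (p : V → Bool) (hB : B.filter p = [v].filter p) :
    ∀ l : List V, (l.flatMap (fun a => if a = v then B else [a])).filter p = l.filter p
  | [] => rfl
  | a :: l => by
    rw [flatMap_cons, filter_append, filter_sub_eq v B p hB l, filter_cons_append' p a l]
    by_cases ha : a = v
    · subst ha; rw [if_pos rfl, hB]
    · rw [if_neg ha]

theorem filter_sub_uz (u v z : V) (hzu : z ≠ u) (hzv : z ≠ v) (B : List V)
    (hB : B.filter (fun b => decide (b = u ∨ b = z)) = [u]) :
    ∀ l : List V, u ∉ l →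
      (l.flatMap (fun a => if a = v then B else [a])).filter (fun b => decide (b = u ∨ b = z))
        = (l.filter (fun b => decide (b = v ∨ b = z))).map (Equiv.swap u v)
  | [], _ => rfl
  | a :: l, hu => by
    have hul : u ∉ l := fun hx => hu (mem_cons_of_mem a hx)
    have hau : a ≠ u := fun hx => hu (hx ▸ (mem_cons_self : a ∈ a :: l))
    rw [flatMap_cons, filter_append, filter_sub_uz u v z hzu hzv B hB l hul,
      filter_cons_append' _ a l, map_append]
    congr 1
    by_cases ha : a = v
    · subst ha
      rw [if_pos rfl, hB]
      simp [Equiv.swap_apply_right]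
    · rw [if_neg ha]
      by_cases haz : a = z
      · subst haz
        simp [hzu, hzv, ha, Equiv.swap_apply_of_ne_of_ne hau ha]
      · simp [hau, haz, ha]

theorem filter_sub_uv (u v : V) (B : List V)
    (hB : B.filter (fun b => decide (b = u ∨ b = v)) = B) :
    ∀ l : List V, u ∉ l →
      (l.flatMap (fun a => if a = v then B else [a])).filter (fun b => decide (b = u ∨ b = v))
        = (l.filter (fun b => decide (b = v))).flatMap (fun _ => B)
  | [], _ => rfl
  | a :: l, hu => by
    have hul : u ∉ l := fun hx => hu (mem_cons_of_mem a hx)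
    have hau : a ≠ u := fun hx => hu (hx ▸ (mem_cons_self : a ∈ a :: l))
    rw [flatMap_cons, filter_append, filter_sub_uv u v B hB l hul, filter_cons_append' _ a l]
    by_cases ha : a = v
    · subst ha; rw [if_pos rfl, hB]; simp
    · rw [if_neg ha]; simp [hau, ha]

theorem chain_bind_vu (u v : V) (huv : u ≠ v) : ∀ s : List V,
    Chain' (fun a b => a ≠ b) (s.flatMap (fun _ => ([v, u] : List V))) ∧
    Chain' (fun a b => a ≠ b) (u :: s.flatMap (fun _ => ([v, u] : List V)))
  | [] => by simp [Chain']
  | a :: s => by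
    have ih := chain_bind_vu u v huv s
    rw [flatMap_cons]
    refine ⟨?_, ?_⟩
    · show Chain' _ (v :: u :: _)
      rw [chain'_cons]
      exact ⟨huv.symm, ih.2⟩
    · show Chain' _ (u :: v :: u :: _)
      rw [chain'_cons, chain'_cons]
      exact ⟨huv, huv.symm, ih.2⟩

theorem getLast?_bind_vu (u v : V) : ∀ s : List V, s ≠ [] →
    (s.flatMap (fun _ => ([v, u] : List V))).getLast? = some u
  | [a], _ => by simp
  | a :: b :: s, _ => by
    rw [flatMap_cons, getLast?_append, getLast?_bind_vu u v (b :: s) (by simp)]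
    rfl

theorem alternates_comm (w : List V) (x y : V) :
    Alternates w x y ↔ Alternates w y x := by
  unfold Alternates
  rw [filter_congr (fun a _ => decide_eq_decide.2 (or_comm))]

theorem alternates_map_val {S : Set V} [DecidableEq ↥S] (w' : List ↥S) (x y : ↥S) :
    Alternates (w'.map Subtype.val) x.val y.val ↔ Alternates w' x y := by
  unfold Alternates
  rw [List.filter_map,
    show ((fun z => decide (z = x.val ∨ z = y.val)) ∘ (Subtype.val : ↥S → V))
        = (fun z : ↥S => decide (z = x ∨ z = y)) from
      funext fun z => decide_eq_decide.2 (by simp [Subtype.ext_iff]),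
    chain'_map]
  constructor
  · exact fun hc => hc.imp fun a b hab e => hab (by rw [e])
  · exact fun hc => hc.imp fun a b hab e => hab (Subtype.ext e)

theorem map_val_filterMap (u : V) : ∀ w : List V,
    ((w.filterMap (fun z => if hz : z = u then none
        else some (⟨z, hz⟩ : {x : V | x ≠ u}))).map Subtype.val)
      = w.filter (fun z => !decide (z = u))
  | [] => rfl
  | a :: l => by
    rw [filterMap_cons]
    by_cases ha : a = u
    · rw [dif_pos ha, filter_cons_of_neg (by simp [ha])]
      exact map_val_filterMap u l
    · rw [dif_neg ha, map_cons, filter_cons_of_pos (by simp [ha]), map_val_filterMap u l]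

end Aux

/-- If `u ≠ v` are vertices of a finite simple graph `G` with
`N(u) \ {v} = N(v) \ {u}`, and `G'` is obtained from `G` by removing the vertex `u`,
then `G` is word-representable if and only if `G'` is word-representable. -/
theorem stmt2 {V : Type*} [Fintype V] [DecidableEq V] (G : SimpleGraph V)
    (u v : V) (huv : u ≠ v)
    (h : G.neighborSet u \ {v} = G.neighborSet v \ {u}) :
    WordRepresentable G ↔ WordRepresentable (G.induce {x | x ≠ u}) := by
  classical
  constructor
  · -- forward: remove u from the word
    rintro ⟨w, hall, hiff⟩
    refine ⟨w.filterMap (fun z => if hz : z = u then none else some ⟨z, hz⟩), ?_, ?_⟩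
    · rintro ⟨z, hz⟩
      exact mem_filterMap.2 ⟨z, hall z, by rw [dif_neg hz]⟩
    · intro x y hxy
      have hvne : x.val ≠ y.val := fun e => hxy (Subtype.ext e)
      have hmap := map_val_filterMap u w
      rw [← alternates_map_val _ x y, hmap]
      have hfil : (w.filter (fun z => !decide (z = u))).filter
            (fun z => decide (z = x.val ∨ z = y.val))
          = w.filter (fun z => decide (z = x.val ∨ z = y.val)) := by
        rw [filter_filter]
        refine filter_congr fun a _ => ?_
        by_cases hp : a = x.val ∨ a = y.val
        · have hau : a ≠ u := by
            rcases hp with rfl | rfl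
            · exact x.2
            · exact y.2
          simp [hp, hau]
        · simp [hp]
      show Alternates _ x.val y.val ↔ _
      unfold Alternates
      rw [hfil]
      exact (hiff x.val y.val hvne).trans (by simp)
  · -- backward
    rintro ⟨w', hall', hiff'⟩
    set t : List V := w'.map Subtype.val with ht
    have hut : u ∉ t := by
      intro hmem
      rcases mem_map.1 hmem with ⟨s, _, e⟩
      exact s.2 e
    have hmemt : ∀ z : V, z ≠ u → z ∈ t := fun z hz => mem_map.2 ⟨⟨z, hz⟩, hall' _, rfl⟩
    have hvt : v ∈ t := hmemt v (Ne.symm huv)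
    have hA : ∀ z, z ≠ u → z ≠ v → (G.Adj u z ↔ G.Adj v z) := by
      intro z hzu hzv
      have hz := Set.ext_iff.1 h z
      simp only [Set.mem_diff, SimpleGraph.mem_neighborSet, Set.mem_singleton_iff] at hz
      constructor
      · intro hadj; exact (hz.1 ⟨hadj, hzv⟩).1
      · intro hadj; exact (hz.2 ⟨hadj, hzu⟩).1
    set B : List V := if G.Adj u v then [v, u] else [u, v] with hBdef
    set m : List V := t.flatMap (fun a => if a = v then [v, u] else [a]) with hm
    set P : List V := t.dedup.flatMap (fun a => if a = v then B else [a]) with hP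
    have hud : u ∉ t.dedup := fun hc => hut (dedup_subset t hc)
    -- the three cases
    have case_xy : ∀ x y : V, x ≠ y → x ≠ u → y ≠ u → (Alternates (m ++ P) x y ↔ G.Adj x y) := by
      intro x y hne hxu hyu
      set p : V → Bool := fun z => decide (z = x ∨ z = y) with hp
      have pu : p u = false :=
        decide_eq_false (fun hc => hc.elim (fun e => hxu e.symm) (fun e => hyu e.symm))
      have h1 : List.filter p [v, u] = List.filter p [v] := by
        cases hpv : p v <;> simp [filter_cons, pu, hpv]
      have h2 : List.filter p [u, v] = List.filter p [v] := by
        cases hpv : p v <;> simp [filter_cons, pu, hpv]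
      have hBf : B.filter p = List.filter p [v] := by
        rw [hBdef]; split <;> [exact h1; exact h2]
      have hmf : m.filter p = t.filter p := filter_sub_eq v [v, u] p h1 t
      have hPf : P.filter p = (t.filter p).dedup := by
        rw [hP, filter_sub_eq v B p hBf t.dedup, my_dedup_filter]
      have hxq : x ∈ t.filter p := mem_filter.2 ⟨hmemt x hxu, by simp [hp]⟩
      have hyq : y ∈ t.filter p := mem_filter.2 ⟨hmemt y hyu, by simp [hp]⟩
      have hsub : ∀ z ∈ t.filter p, z = x ∨ z = y := fun z hz => by
        simpa [hp] using (mem_filter.1 hz).2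
      unfold Alternates
      rw [filter_append]
      rw [show (fun z => decide (z = x ∨ z = y)) = p from rfl]
      rw [hmf, hPf, key_chain (t.filter p) x y hne hxq hyq hsub]
      have := alternates_map_val (S := {x : V | x ≠ u}) w' ⟨x, hxu⟩ ⟨y, hyu⟩
      unfold Alternates at this
      rw [ht] at *
      exact this.trans ((hiff' _ _ (fun e => hne (congrArg Subtype.val e))).trans (by simp))
    have case_uz : ∀ z : V, z ≠ u → z ≠ v → (Alternates (m ++ P) u z ↔ G.Adj u z) := by
      intro z hzu hzv
      set p : V → Bool := fun b => decide (b = u ∨ b = z) with hp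
      have h1 : List.filter p [v, u] = [u] := by
        simp [hp, filter_cons, Ne.symm huv, Ne.symm hzv]
      have h2 : List.filter p [u, v] = [u] := by
        simp [hp, filter_cons, Ne.symm huv, Ne.symm hzv]
      have hBf : B.filter p = [u] := by
        rw [hBdef]; split <;> [exact h1; exact h2]
      set q : List V := t.filter (fun b => decide (b = v ∨ b = z)) with hq
      have hmf : m.filter p = q.map (Equiv.swap u v) :=
        filter_sub_uz u v z hzu hzv [v, u] h1 t hut
      have hPf : P.filter p = q.dedup.map (Equiv.swap u v) := by
        rw [hP, filter_sub_uz u v z hzu hzv B hBf t.dedup hud, hq, my_dedup_filter]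
      have hvq : v ∈ q := mem_filter.2 ⟨hvt, by simp⟩
      have hzq : z ∈ q := mem_filter.2 ⟨hmemt z hzu, by simp⟩
      have hsub : ∀ b ∈ q, b = v ∨ b = z := fun b hb => by
        simpa using (mem_filter.1 hb).2
      unfold Alternates
      rw [filter_append]
      rw [show (fun b => decide (b = u ∨ b = z)) = p from rfl]
      rw [hmf, hPf, ← map_append, chain'_map]
      have hiffswap : Chain' (fun a b => Equiv.swap u v a ≠ Equiv.swap u v b) (q ++ q.dedup)
          ↔ Chain' (fun a b => a ≠ b) (q ++ q.dedup) := by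
        constructor
        · exact fun hc => hc.imp fun a b hab e => hab (by rw [e])
        · exact fun hc => hc.imp fun a b hab => (Equiv.swap u v).injective.ne hab
      rw [hiffswap, key_chain q v z (fun e => hzv e.symm) hvq hzq hsub]
      have := alternates_map_val (S := {x : V | x ≠ u}) w' ⟨v, Ne.symm huv⟩ ⟨z, hzu⟩
      unfold Alternates at this
      rw [ht] at *
      exact (this.trans ((hiff' _ _ (fun e => hzv (congrArg Subtype.val e).symm)).trans
        (by simp))).trans (hA z hzu hzv).symm
    have case_uv : Alternates (m ++ P) u v ↔ G.Adj u v := by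
      set p : V → Bool := fun b => decide (b = u ∨ b = v) with hp
      have h1 : List.filter p [v, u] = [v, u] := by simp [hp, filter_cons]
      have hBf : B.filter p = B := by
        rw [hBdef]; split <;> simp [hp, filter_cons]
      have hmf : m.filter p = (t.filter (fun b => decide (b = v))).flatMap (fun _ => [v, u]) :=
        filter_sub_uv u v [v, u] h1 t hut
      have hPf : P.filter p = B := by
        rw [hP, filter_sub_uv u v B hBf t.dedup hud]
        have hfe : t.dedup.filter (fun b => decide (b = v)) = [v] := by
          rw [filter_eq, count_eq_one_of_mem (nodup_dedup t) (mem_dedup.2 hvt)]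
          rfl
        rw [hfe]
        simp
      set s : List V := t.filter (fun b => decide (b = v)) with hs
      have hsne : s ≠ [] := ne_nil_of_mem (mem_filter.2 ⟨hvt, by simp⟩)
      unfold Alternates
      rw [filter_append]
      rw [show (fun b => decide (b = u ∨ b = v)) = p from rfl]
      rw [hmf, hPf]
      by_cases hadj : G.Adj u v
      · rw [show B = [v, u] from by rw [hBdef, if_pos hadj]]
        rw [show s.flatMap (fun _ => ([v, u] : List V)) ++ [v, u]
            = (s ++ [v]).flatMap (fun _ => ([v, u] : List V)) by rw [flatMap_append]; simp]
        simp only [hadj, iff_true]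
        exact (chain_bind_vu u v huv _).1
      · rw [show B = [u, v] from by rw [hBdef, if_neg hadj]]
        simp only [hadj, iff_false]
        intro hc
        have hlast : u ∈ (s.flatMap (fun _ => ([v, u] : List V))).getLast? := by
          rw [getLast?_bind_vu u v s hsne]; rfl
        have hhead : u ∈ ([u, v] : List V).head? := rfl
        exact (chain'_append.1 hc).2.2 u hlast u hhead rfl
    refine ⟨m ++ P, ?_, ?_⟩
    · intro z
      by_cases hz : z = u
      · subst hz
        exact mem_append.2 (Or.inl (mem_flatMap.2 ⟨v, hvt, by simp⟩))
      · refine mem_append.2 (Or.inl (mem_flatMap.2 ⟨z, hmemt z hz, ?_⟩))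
        by_cases hzv : z = v <;> simp [hzv]
    · intro x y hne
      by_cases hx : x = u
      · subst hx
        by_cases hy : y = v
        · subst hy; exact case_uv
        · exact case_uz y (Ne.symm hne) hy
      · by_cases hy : y = u
        · subst hy
          rw [alternates_comm, G.adj_comm]
          by_cases hx' : x = v
          · subst hx'; exact case_uv
          · exact case_uz x hx hx'
        · exact case_xy x y hne hx hy
end

section
/- Suppose a finite simple graph G has a cycle C = x_1 x_2 ⋯ x_m x_1, where m ≥ 4 and the vertices {x_1, x_2, …, x_m} do not induce a clique in G. If G is given a semi-transitive orientation in which m − 2 of the edges of C are oriented in the forward direction along C (from x_i to x_{i+1}, with index m + 1 identified with 1), then the remaining two edges of C are both oriented in the backward direction (from x_{i+1} to x_i). -/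
/-- `D` is an orientation of `G`: every directed edge lies on an edge of `G`, and every
edge of `G` receives exactly one direction. -/
def IsOrientation {V : Type*} (G : SimpleGraph V) (D : V → V → Prop) : Prop :=
  (∀ x y, D x y → G.Adj x y) ∧
  (∀ x y, G.Adj x y → (D x y ∨ D y x)) ∧
  (∀ x y, ¬ (D x y ∧ D y x))

/-- `D` is a semi-transitive orientation of `G`: it is an acyclic orientation and, for
every directed path `p 0 → p 1 → ⋯ → p k` with `k ≥ 2`, either `p 0` and `p k` are not
adjacent in `G`, or `D (p i) (p j)` holds for all `i < j ≤ k`. -/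
def IsSemiTransitiveOrientation {V : Type*} (G : SimpleGraph V) (D : V → V → Prop) : Prop :=
  IsOrientation G D ∧
  (∀ v, ¬ Relation.TransGen D v v) ∧
  (∀ (k : ℕ) (p : ℕ → V), 2 ≤ k → (∀ i < k, D (p i) (p (i + 1))) →
    ¬ G.Adj (p 0) (p k) ∨ ∀ i j, i < j → j ≤ k → D (p i) (p j))

/-- Let `G` be a finite simple graph with a cycle `x_1 x_2 ⋯ x_m x_1`, `m ≥ 4`
(here indexed cyclically by `ZMod m`), whose vertices do not induce a clique in `G`.
If `G` is given a semi-transitive orientation `D` in which some `m - 2` of the edges of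
the cycle are oriented in the forward direction (from `x i` to `x (i+1)`), then the
remaining two edges are both oriented in the backward direction. -/
theorem stmt3 {V : Type*} [Fintype V] (G : SimpleGraph V) (D : V → V → Prop)
    (hD : IsSemiTransitiveOrientation G D)
    (m : ℕ) (hm : 4 ≤ m) (x : ZMod m → V) (hinj : Function.Injective x)
    (hcyc : ∀ i : ZMod m, G.Adj (x i) (x (i + 1)))
    (hnotclique : ¬ G.IsClique (Set.range x))
    (F : Finset (ZMod m)) (hF : F.card = m - 2)
    (hfwd : ∀ i ∈ F, D (x i) (x (i + 1))) :
    ∀ i ∉ F, D (x (i + 1)) (x i) := by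
  
  classical
  obtain ⟨⟨hDG, hor, hasym⟩, hacyc, hsemi⟩ := hD
  haveI : NeZero m := ⟨by omega⟩
  intro i hi
  rcases hor _ _ (hcyc i) with hif | hib
  swap
  · exact hib
  exfalso
  -- the complement of F has exactly two elements
  have hcompl : Fᶜ.card = 2 := by
    have h1 : Fᶜ.card = Fintype.card (ZMod m) - F.card := Finset.card_compl F
    rw [ZMod.card, hF] at h1
    omega
  obtain ⟨a, b, hab, hFc⟩ := Finset.card_eq_two.mp hcompl
  have hiF : i ∈ Fᶜ := Finset.mem_compl.mpr hi
  -- let j be the other missing edge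
  obtain ⟨j, hjne, hFc2⟩ : ∃ j : ZMod m, j ≠ i ∧ ∀ e : ZMod m, e ∉ F → e = i ∨ e = j := by
    rw [hFc, Finset.mem_insert, Finset.mem_singleton] at hiF
    rcases hiF with rfl | rfl
    · exact ⟨b, hab.symm, fun e he => by
        have := Finset.mem_compl.mpr he; rw [hFc, Finset.mem_insert, Finset.mem_singleton] at this
        exact this⟩
    · exact ⟨a, hab, fun e he => by
        have := Finset.mem_compl.mpr he; rw [hFc, Finset.mem_insert, Finset.mem_singleton] at this
        rcases this with rfl | rfl
        · exact Or.inr rfl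
        · exact Or.inl rfl⟩
  -- every edge other than j is forward
  have hallfwd : ∀ e : ZMod m, e ≠ j → D (x e) (x (e + 1)) := by
    intro e hej
    by_cases heF : e ∈ F
    · exact hfwd e heF
    · rcases hFc2 e heF with rfl | rfl
      · exact hif
      · exact absurd rfl hej
  rcases hor _ _ (hcyc j) with hjf | hjb
  · -- all edges forward: directed cycle, contradiction with acyclicity
    have hall : ∀ e : ZMod m, D (x e) (x (e + 1)) := by
      intro e; by_cases hej : e = j
      · subst hej; exact hjf
      · exact hallfwd e hej
    have key : ∀ t : ℕ, Relation.TransGen D (x 0) (x ((t + 1 : ℕ) : ZMod m)) := by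
      intro t
      induction t with
      | zero => exact Relation.TransGen.single (by simpa using hall 0)
      | succ n ih =>
          refine ih.tail ?_
          have : ((n + 1 + 1 : ℕ) : ZMod m) = ((n + 1 : ℕ) : ZMod m) + 1 := by push_cast; ring
          rw [this]
          exact hall _
    have h0 : ((m - 1 + 1 : ℕ) : ZMod m) = 0 := by
      have : (m - 1 + 1 : ℕ) = m := by omega
      rw [this, ZMod.natCast_self]
    have := key (m - 1)
    rw [h0] at this
    exact hacyc _ this
  · -- edge j backward: long directed path from x (j+1) to x j, semitransitivity forces a clique
    set p : ℕ → V := fun t => x (j + 1 + (t : ℕ)) with hp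
    have hpath : ∀ t, t < m - 1 → D (p t) (p (t + 1)) := by
      intro t ht
      have hcast : (j + 1 + ((t + 1 : ℕ) : ZMod m)) = (j + 1 + (t : ℕ)) + 1 := by push_cast; ring
      have hne : j + 1 + (t : ℕ) ≠ j := by
        intro h
        have h2 : ((t + 1 : ℕ) : ZMod m) = 0 := by
          have : (1 : ZMod m) + (t : ℕ) = 0 := by linear_combination h
          push_cast
          linear_combination this
        rw [ZMod.natCast_eq_zero_iff] at h2
        have := Nat.le_of_dvd (by omega) h2
        omega
      show D (x (j + 1 + (t : ℕ))) (x (j + 1 + ((t + 1 : ℕ) : ZMod m)))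
      rw [hcast]
      exact hallfwd _ hne
    have hpend : p (m - 1) = x j := by
      show x (j + 1 + ((m - 1 : ℕ) : ZMod m)) = x j
      congr 1
      have : (1 : ZMod m) + ((m - 1 : ℕ) : ZMod m) = ((m : ℕ) : ZMod m) := by
        push_cast [Nat.cast_sub (by omega : 1 ≤ m)]
        ring
      rw [add_assoc, this, ZMod.natCast_self, add_zero]
    have hp0 : p 0 = x (j + 1) := by show x (j + 1 + ((0 : ℕ) : ZMod m)) = _; simp
    have hadj : G.Adj (p 0) (p (m - 1)) := by rw [hp0, hpend]; exact (hcyc j).symm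
    rcases hsemi (m - 1) p (by omega) hpath with hnadj | hall
    · exact hnadj hadj
    -- now every pair of cycle vertices is adjacent: clique, contradiction
    apply hnotclique
    intro u hu v hv huv
    obtain ⟨s, rfl⟩ := hu
    obtain ⟨t, rfl⟩ := hv
    have hst : s ≠ t := fun h => huv (by rw [h])
    set s' : ℕ := (s - (j + 1)).val with hs'
    set t' : ℕ := (t - (j + 1)).val with ht'
    have hps : p s' = x s := by
      show x (j + 1 + ((s - (j + 1)).val : ℕ)) = x s
      congr 1
      rw [ZMod.natCast_val, ZMod.cast_id]
      ring
    have hpt : p t' = x t := by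
      show x (j + 1 + ((t - (j + 1)).val : ℕ)) = x t
      congr 1
      rw [ZMod.natCast_val, ZMod.cast_id]
      ring
    have hst' : s' ≠ t' := by
      intro h
      apply hst
      have : s - (j + 1) = t - (j + 1) := ZMod.val_injective _ h
      have := congrArg (· + (j + 1)) this
      simpa using this
    have hsl : s' ≤ m - 1 := by have := ZMod.val_lt (s - (j + 1)); omega
    have htl : t' ≤ m - 1 := by have := ZMod.val_lt (t - (j + 1)); omega
    rcases hst'.lt_or_gt with h | h
    · have := hall s' t' h htl
      rw [hps, hpt] at this
      exact hDG _ _ this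
    · have := hall t' s' h hsl
      rw [hps, hpt] at this
      exact (hDG _ _ this).symm
end

section
/- Suppose a finite simple graph G is word-representable and v is a vertex of G. Then there exists a semi-transitive orientation of G in which v is a source, i.e., every edge incident to v is oriented away from v. -/
set_option linter.unusedSectionVars false

namespace StmtAux

variable {V : Type*} [DecidableEq V]

/-- the filtering predicate for the pair `x,y` -/
abbrev pr (x y : V) : V → Bool := fun z => decide (z = x ∨ z = y)

/-- `x` "leads" `y`: in every prefix, the count of `x` is the count of `y` or one more. -/
def Pw (w : List V) (x y : V) : Prop :=
  ∀ s : List V, s <+: w → s.count y ≤ s.count x ∧ s.count x ≤ s.count y + 1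

lemma pr_comm (x y : V) : pr x y = pr y x := by
  funext z; simp [pr, or_comm]

lemma mem_of_pr {x y z : V} (h : pr x y z = true) : z = x ∨ z = y := by
  simpa [pr] using h

lemma alternates_comm (w : List V) (x y : V) : Alternates w x y ↔ Alternates w y x := by
  unfold Alternates
  rw [show (fun z => decide (z = x ∨ z = y)) = (fun z => decide (z = y ∨ z = x)) from
    pr_comm x y]

lemma prefix_cases {s : List V} {a : V} {t : List V} (h : s <+: a :: t) :
    s = [] ∨ ∃ s', s' <+: t ∧ s = a :: s' := by
  cases s with
  | nil => exact Or.inl rfl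
  | cons b s' =>
    rcases List.cons_prefix_cons.mp h with ⟨rfl, h'⟩
    exact Or.inr ⟨s', h', rfl⟩

lemma key (l : List V) : ∀ (x y : V), x ≠ y → (∀ z ∈ l, z = x ∨ z = y) →
    (List.Chain' (· ≠ ·) (y :: l) ↔
      ∀ s : List V, s <+: l → s.count y ≤ s.count x ∧ s.count x ≤ s.count y + 1) := by
  induction l with
  | nil =>
    intro x y hxy _
    constructor
    · intro _ s hs
      have : s = [] := List.prefix_nil.mp hs
      simp [this]
    · intro _
      exact List.isChain_singleton y
  | cons a t ih =>
    intro x y hxy hmem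
    have hmem' : ∀ z ∈ t, z = x ∨ z = y := fun z hz => hmem z (by simp [hz])
    rcases hmem a (by simp) with rfl | rfl
    · -- head is x (named a)
      have ihp := ih y a hxy.symm (fun z hz => (hmem' z hz).symm)
      unfold List.Chain'
      rw [List.isChain_cons_cons]
      constructor
      · rintro ⟨-, hc⟩ s hs
        rcases prefix_cases hs with rfl | ⟨s', hs', rfl⟩
        · simp
        · have := (ihp.mp hc) s' hs'
          have cy : (a :: s').count y = s'.count y := by
            rw [List.count_cons]; simp [hxy]
          have cx : (a :: s').count a = s'.count a + 1 := by
            rw [List.count_cons]; simp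
          omega
      · intro hp
        refine ⟨fun h => hxy (h.symm), ?_⟩
        apply ihp.mpr
        intro s hs
        have := hp (a :: s) (List.cons_prefix_cons.mpr ⟨rfl, hs⟩)
        have cy : (a :: s).count y = s.count y := by
          rw [List.count_cons]; simp [hxy]
        have cx : (a :: s).count a = s.count a + 1 := by
          rw [List.count_cons]; simp
        omega
    · -- head is y (named a)
      constructor
      · intro hc
        exact absurd rfl (List.isChain_cons_cons.mp hc).1
      · intro hp
        have h1 := hp [a] ⟨t, rfl⟩
        have c1 : ([a] : List V).count a = 1 := by simp
        have c2 : ([a] : List V).count x = 0 := by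
          rw [List.count_cons]
          simp
          exact fun e => hxy e.symm
        omega

lemma exists_prefix_filter (p : V → Bool) :
    ∀ (w s : List V), s <+: w.filter p → ∃ u, u <+: w ∧ s = u.filter p := by
  intro w
  induction w with
  | nil =>
    intro s hs
    have hs' : s = [] := List.prefix_nil.mp (by simpa using hs)
    exact ⟨[], List.prefix_refl _, by simp [hs']⟩
  | cons a w' ih =>
    intro s hs
    by_cases hp : p a
    · rw [List.filter_cons_of_pos hp] at hs
      rcases prefix_cases hs with rfl | ⟨s', hs', rfl⟩
      · exact ⟨[], ⟨a :: w', rfl⟩, rfl⟩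
      · obtain ⟨u, hu, rfl⟩ := ih s' hs'
        exact ⟨a :: u, List.cons_prefix_cons.mpr ⟨rfl, hu⟩, by
          rw [List.filter_cons_of_pos hp]⟩
    · rw [List.filter_cons_of_neg hp] at hs
      obtain ⟨u, hu, rfl⟩ := ih s hs
      exact ⟨a :: u, List.cons_prefix_cons.mpr ⟨rfl, hu⟩, by
        rw [List.filter_cons_of_neg hp]⟩

lemma count_filter_self (x y : V) (l : List V) :
    (l.filter (pr x y)).count x = l.count x :=
  List.count_filter (by simp [pr])

lemma count_filter_self' (x y : V) (l : List V) :
    (l.filter (pr x y)).count y = l.count y :=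
  List.count_filter (by simp [pr])

lemma Pw_iff_filter (w : List V) (x y : V) :
    Pw w x y ↔ ∀ s : List V, s <+: w.filter (pr x y) →
      s.count y ≤ s.count x ∧ s.count x ≤ s.count y + 1 := by
  constructor
  · intro hP s hs
    obtain ⟨u, hu, rfl⟩ := exists_prefix_filter (pr x y) w s hs
    rw [count_filter_self, count_filter_self']
    exact hP u hu
  · intro hF u hu
    have := hF (u.filter (pr x y)) (List.IsPrefix.filter _ hu)
    rwa [count_filter_self, count_filter_self'] at this

lemma Pw_iff_chain (w : List V) (x y : V) (hxy : x ≠ y) :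
    Pw w x y ↔ List.Chain' (· ≠ ·) (y :: w.filter (pr x y)) := by
  rw [Pw_iff_filter]
  exact (key (w.filter (pr x y)) x y hxy
    (fun z hz => mem_of_pr (List.mem_filter.mp hz).2)).symm

/-- The key characterization of alternation through prefix counts. -/
lemma alt_iff (w : List V) (x y : V) (hxy : x ≠ y) (hx : x ∈ w) (hy : y ∈ w) :
    Alternates w x y ↔ Pw w x y ∨ Pw w y x := by
  have hfx : x ∈ w.filter (pr x y) := List.mem_filter.mpr ⟨hx, by simp [pr]⟩
  have hne : w.filter (pr x y) ≠ [] := List.ne_nil_of_mem hfx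
  rw [Pw_iff_chain w x y hxy, Pw_iff_chain w y x hxy.symm]
  rw [show w.filter (pr y x) = w.filter (pr x y) from by rw [pr_comm]]
  show List.Chain' (· ≠ ·) (w.filter (pr x y)) ↔ _
  obtain ⟨c, f', hf⟩ := List.exists_cons_of_ne_nil hne
  rw [hf]
  have hc : c = x ∨ c = y := by
    have : c ∈ w.filter (pr x y) := by rw [hf]; simp
    exact mem_of_pr (List.mem_filter.mp this).2
  rcases hc with rfl | rfl
  · constructor
    · intro h; exact Or.inl (List.isChain_cons_cons.mpr ⟨fun e => hxy e.symm, h⟩)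
    · rintro (h | h)
      · exact (List.isChain_cons_cons.mp h).2
      · exact absurd rfl (List.isChain_cons_cons.mp h).1
  · constructor
    · intro h; exact Or.inr (List.isChain_cons_cons.mpr ⟨hxy, h⟩)
    · rintro (h | h)
      · exact absurd rfl (List.isChain_cons_cons.mp h).1
      · exact (List.isChain_cons_cons.mp h).2

lemma mem_take_indexOf : ∀ (w : List V) (n : ℕ) (x : V), x ∈ w.take n → w.idxOf x < n := by
  intro w
  induction w with
  | nil => intro n x h; simp at h
  | cons a t ih =>
    intro n x h
    cases n with
    | zero => simp at h
    | succ m =>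
      rw [List.take_succ_cons] at h
      rcases List.mem_cons.mp h with rfl | h'
      · rw [List.idxOf_cons_self]; omega
      · by_cases hax : x = a
        · subst hax; rw [List.idxOf_cons_self]; omega
        · rw [List.idxOf_cons_ne _ (fun e => hax e.symm)]
          have := ih m x h'
          omega

lemma indexOf_inj' {w : List V} {x y : V} (hx : x ∈ w) (hxy : x ≠ y)
    (h : w.idxOf x = w.idxOf y) : False := by
  by_cases hy : y ∈ w
  · exact hxy ((List.idxOf_inj hx).mp h)
  · have h1 : w.idxOf x < w.length := List.idxOf_lt_length_iff.mpr hx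
    rw [h] at h1
    exact hy (List.idxOf_lt_length_iff.mp h1)

lemma Pw_imp_indexOf_lt {w : List V} {x y : V} (hP : Pw w x y) (hxy : x ≠ y)
    (hy : y ∈ w) : w.idxOf x < w.idxOf y := by
  set n := w.idxOf y with hn
  have hnl : n < w.length := List.idxOf_lt_length_iff.mpr hy
  have hyt : y ∈ w.take (n + 1) := by
    have hl : n < (w.take (n+1)).length := by
      rw [List.length_take]; omega
    have h2 : (w.take (n+1))[n] = y := by
      rw [List.getElem_take]; exact List.getElem_idxOf hnl
    exact h2 ▸ List.getElem_mem hl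
  have hys : 0 < (w.take (n+1)).count y := List.count_pos_iff.mpr hyt
  have := hP (w.take (n+1)) (List.take_prefix _ _)
  have hxs : 0 < (w.take (n+1)).count x := by omega
  have hxt : x ∈ w.take (n+1) := List.count_pos_iff.mp hxs
  have hlt : w.idxOf x < n + 1 := mem_take_indexOf w (n+1) x hxt
  have hne : w.idxOf x ≠ n := fun e => indexOf_inj'
      ((List.take_prefix _ _).subset hxt) hxy (by rw [e, hn])
  omega

/-- `w` represents `G`. -/
def Rep (w : List V) (G : SimpleGraph V) : Prop :=
  (∀ v : V, v ∈ w) ∧ ∀ x y : V, x ≠ y → (Alternates w x y ↔ G.Adj x y)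

lemma rep_prepend {G : SimpleGraph V} {w : List V} (hr : Rep w G) (x : V)
    (hmin : ∀ z : V, w.count x ≤ w.count z)
    (hmax : ∀ z : V, z ≠ x → w.count z = w.count x → w.idxOf z < w.idxOf x) :
    Rep (x :: w) G := by
  have main : ∀ y : V, y ≠ x → (Alternates (x :: w) x y ↔ Alternates w x y) := by
    intro y hy
    constructor
    · intro h
      unfold Alternates at h ⊢
      rw [List.filter_cons_of_pos (by simp)] at h
      exact h.tail
    · intro h
      have hxw : x ∈ w := hr.1 x
      have hyw : y ∈ w := hr.1 y
      rcases (alt_iff w x y hy.symm hxw hyw).mp h with hP | hP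
      · exfalso
        have hlt := Pw_imp_indexOf_lt hP hy.symm hyw
        have h1 := (hP w (List.prefix_refl _)).1
        have h2 := hmin y
        have := hmax y hy (le_antisymm h1 h2)
        omega
      · have hPP : Pw (x :: w) x y := by
          intro s hs
          rcases prefix_cases hs with rfl | ⟨s', hs', rfl⟩
          · simp
          · have := hP s' hs'
            have cx : (x :: s').count x = s'.count x + 1 := by
              rw [List.count_cons]; simp
            have cy : (x :: s').count y = s'.count y := by
              rw [List.count_cons]; simp [hy.symm]
            omega
        exact (alt_iff (x::w) x y hy.symm (by simp) (by simp [hyw])).mpr (Or.inl hPP)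
  refine ⟨fun z => by simp [hr.1 z], ?_⟩
  intro a b hab
  rcases eq_or_ne a x with rfl | hax
  · rw [main b hab.symm]
    exact hr.2 a b hab
  · rcases eq_or_ne b x with rfl | hbx
    · rw [alternates_comm, main a hax, alternates_comm]
      exact hr.2 a b hab
    · have hfx : ¬ ((x = a ∨ x = b)) := by
        rintro (rfl | rfl)
        · exact hax rfl
        · exact hbx rfl
      have hfe : (x :: w).filter (pr a b) = w.filter (pr a b) :=
        List.filter_cons_of_neg (by simpa [pr] using hfx)
      unfold Alternates
      rw [show ((x :: w).filter fun z => decide (z = a ∨ z = b)) =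
        (w.filter fun z => decide (z = a ∨ z = b)) from hfe]
      exact hr.2 a b hab

lemma uniformize [Fintype V] {G : SimpleGraph V} :
    ∀ (N : ℕ) (w : List V),
      (∑ z : V, (Finset.univ.sup (fun t => w.count t) - w.count z)) ≤ N →
      Rep w G → ∃ w', Rep w' G ∧ ∀ a b : V, w'.count a = w'.count b := by
  intro N
  induction N with
  | zero =>
    intro w hm hr
    refine ⟨w, hr, ?_⟩
    intro a b
    have ha : w.count a = Finset.univ.sup (fun t => w.count t) := by
      have h1 : w.count a ≤ _ := Finset.le_sup (f := fun t => w.count t) (Finset.mem_univ a)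
      have h2 : Finset.univ.sup (fun t => w.count t) - w.count a = 0 := by
        have := Finset.sum_eq_zero_iff.mp (Nat.le_zero.mp hm) a (Finset.mem_univ a)
        omega
      omega
    have hb : w.count b = Finset.univ.sup (fun t => w.count t) := by
      have h1 : w.count b ≤ _ := Finset.le_sup (f := fun t => w.count t) (Finset.mem_univ b)
      have h2 : Finset.univ.sup (fun t => w.count t) - w.count b = 0 := by
        have := Finset.sum_eq_zero_iff.mp (Nat.le_zero.mp hm) b (Finset.mem_univ b)
        omega
      omega
    rw [ha, hb]
  | succ n ih =>
    intro w hm hr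
    by_cases huni : ∀ a b : V, w.count a = w.count b
    · exact ⟨w, hr, huni⟩
    · push_neg at huni
      obtain ⟨a, b, hab⟩ := huni
      set K := Finset.univ.sup (fun t => w.count t) with hK
      have hle : ∀ z : V, w.count z ≤ K := fun z =>
        Finset.le_sup (f := fun t => w.count t) (Finset.mem_univ z)
      obtain ⟨x₀, -, hx₀⟩ := Finset.exists_min_image Finset.univ (fun z => w.count z)
        ⟨a, Finset.mem_univ a⟩
      have hx₀min : ∀ z : V, w.count x₀ ≤ w.count z := fun z => hx₀ z (Finset.mem_univ z)
      have hx₀K : w.count x₀ < K := by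
        rcases Nat.lt_or_ge (w.count a) (w.count b) with h | h
        · have := hx₀min a; have := hle b; omega
        · have : w.count b < w.count a := by omega
          have := hx₀min b; have := hle a; omega
      have hSne : (Finset.univ.filter (fun z => w.count z = w.count x₀)).Nonempty :=
        ⟨x₀, by simp⟩
      obtain ⟨x, hxS, hxmax⟩ := Finset.exists_max_image _ (fun z => w.idxOf z) hSne
      have hxcount : w.count x = w.count x₀ := (Finset.mem_filter.mp hxS).2
      have hmin : ∀ z : V, w.count x ≤ w.count z := fun z => hxcount ▸ hx₀min z
      have hmax : ∀ z : V, z ≠ x → w.count z = w.count x → w.idxOf z < w.idxOf x := by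
        intro z hzx hzc
        have hzS : z ∈ Finset.univ.filter (fun t => w.count t = w.count x₀) := by
          simp [hzc, hxcount]
        have hle' := hxmax z hzS
        have hne : w.idxOf z ≠ w.idxOf x := fun e => indexOf_inj' (hr.1 z) hzx e
        omega
      have hr' : Rep (x :: w) G := rep_prepend hr x hmin hmax
      have hcnt : ∀ z : V, (x :: w).count z = w.count z + (if x = z then 1 else 0) := by
        intro z
        rw [List.count_cons]
        simp
      have hxK : w.count x < K := hxcount ▸ hx₀K
      have hK' : Finset.univ.sup (fun t => (x :: w).count t) = K := by
        apply le_antisymm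
        · apply Finset.sup_le
          intro z _
          rw [hcnt z]
          rcases eq_or_ne x z with rfl | hne
          · simp; omega
          · simp [hne]; exact hle z
        · apply Finset.sup_mono_fun
          intro z _
          rw [hcnt z]
          omega
      have hmlt : (∑ z : V, (Finset.univ.sup (fun t => (x :: w).count t) - (x :: w).count z))
          < ∑ z : V, (K - w.count z) := by
        rw [hK']
        apply Finset.sum_lt_sum
        · intro z _
          rw [hcnt z]
          omega
        · exact ⟨x, Finset.mem_univ x, by rw [hcnt x]; simp; omega⟩
      exact ih (x :: w) (by omega) hr'

lemma prefix_concat {s w : List V} {a : V} (h : s <+: w ++ [a]) : s <+: w ∨ s = w ++ [a] := by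
  rcases Nat.lt_or_ge s.length (w ++ [a]).length with hl | hl
  · left
    apply List.prefix_of_prefix_length_le h (List.prefix_append w [a])
    simp at hl ⊢
    omega
  · right
    exact h.eq_of_length (le_antisymm h.length_le hl)

lemma rep_shift {G : SimpleGraph V} {a : V} {u : List V} (hr : Rep (a :: u) G)
    (huni : ∀ z b : V, (a :: u).count z = (a :: u).count b) : Rep (u ++ [a]) G := by
  have hmem : ∀ z : V, z ∈ u ++ [a] := by
    intro z
    have := hr.1 z
    simp at this ⊢
    tauto
  have hca : (a :: u).count a = u.count a + 1 := by rw [List.count_cons]; simp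
  have hcy : ∀ y : V, y ≠ a → u.count y = u.count a + 1 := by
    intro y hy
    have h1 := huni y a
    have h2 : (a :: u).count y = u.count y := by
      rw [List.count_cons]; simp [hy.symm]
    omega
  have main : ∀ y : V, y ≠ a → (Alternates (u ++ [a]) a y ↔ Alternates (a :: u) a y) := by
    intro y hy
    have hya : y ∈ u := by
      have := hr.1 y
      simp at this
      tauto
    have hcnt1 : ∀ s : List V, (a :: s).count a = s.count a + 1 := by
      intro s; rw [List.count_cons]; simp
    have hcnt2 : ∀ s : List V, (a :: s).count y = s.count y := by
      intro s; rw [List.count_cons]; simp [hy.symm]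
    constructor
    · intro h
      rcases (alt_iff (u ++ [a]) a y hy.symm (by simp) (by simp [hya])).mp h with hP | hP
      · exfalso
        have := (hP u (List.prefix_append u [a])).1
        have := hcy y hy
        omega
      · apply (alt_iff (a :: u) a y hy.symm (by simp) (by simp [hya])).mpr
        left
        intro s hs
        rcases prefix_cases hs with rfl | ⟨s', hs', rfl⟩
        · simp
        · have := hP s' (hs'.trans (List.prefix_append u [a]))
          rw [hcnt1 s', hcnt2 s']
          omega
    · intro h
      rcases (alt_iff (a :: u) a y hy.symm (by simp) (by simp [hya])).mp h with hP | hP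
      · apply (alt_iff (u ++ [a]) a y hy.symm (by simp) (by simp [hya])).mpr
        right
        intro s hs
        rcases prefix_concat hs with hs' | rfl
        · have := hP (a :: s) (List.cons_prefix_cons.mpr ⟨rfl, hs'⟩)
          rw [hcnt1 s, hcnt2 s] at this
          omega
        · rw [List.count_append, List.count_append]
          have h1 : ([a] : List V).count a = 1 := by simp
          have h2 : ([a] : List V).count y = 0 := by
            rw [List.count_cons]; simp; exact hy.symm
          have := hcy y hy
          omega
      · exfalso
        have := (hP [a] ⟨u, rfl⟩).1
        have h1 : ([a] : List V).count a = 1 := by simp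
        have h2 : ([a] : List V).count y = 0 := by
          rw [List.count_cons]; simp; exact hy.symm
        omega
  refine ⟨hmem, ?_⟩
  intro b c hbc
  rcases eq_or_ne b a with rfl | hba
  · rw [main c hbc.symm]
    exact hr.2 b c hbc
  · rcases eq_or_ne c a with rfl | hca'
    · rw [alternates_comm, main b hba, alternates_comm]
      exact hr.2 b c hbc
    · have hfx : ¬ ((a = b ∨ a = c)) := by
        rintro (rfl | rfl)
        · exact hba rfl
        · exact hca' rfl
      have hfe : (u ++ [a]).filter (pr b c) = (a :: u).filter (pr b c) := by
        rw [List.filter_append, List.filter_cons_of_neg (by simpa [pr] using hfx)]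
        simp [List.filter_cons_of_neg (p := pr b c) (by simpa [pr] using hfx)]
      unfold Alternates
      rw [show ((u ++ [a]).filter fun z => decide (z = b ∨ z = c)) =
        ((a :: u).filter fun z => decide (z = b ∨ z = c)) from hfe]
      exact hr.2 b c hbc

lemma count_shift (a z : V) (u : List V) : (u ++ [a]).count z = (a :: u).count z := by
  rw [List.count_append, List.count_cons, List.count_cons]
  simp [Nat.add_comm]

lemma to_front {G : SimpleGraph V} (v : V) :
    ∀ (n : ℕ) (w : List V), w.idxOf v ≤ n → Rep w G →
      (∀ a b : V, w.count a = w.count b) → ∃ t : List V, Rep (v :: t) G := by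
  intro n
  induction n with
  | zero =>
    intro w hidx hr huni
    have hv : v ∈ w := hr.1 v
    obtain ⟨a, u, rfl⟩ := List.exists_cons_of_ne_nil (List.ne_nil_of_mem hv)
    rcases eq_or_ne a v with rfl | hav
    · exact ⟨u, hr⟩
    · exfalso
      rw [List.idxOf_cons_ne u hav] at hidx
      omega
  | succ n ih =>
    intro w hidx hr huni
    have hv : v ∈ w := hr.1 v
    obtain ⟨a, u, rfl⟩ := List.exists_cons_of_ne_nil (List.ne_nil_of_mem hv)
    rcases eq_or_ne a v with rfl | hav
    · exact ⟨u, hr⟩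
    · have hvu : v ∈ u := by
        rcases List.mem_cons.mp hv with rfl | h
        · exact absurd rfl hav
        · exact h
      have hr' : Rep (u ++ [a]) G := rep_shift hr (fun z b => huni z b)
      have huni' : ∀ z b : V, (u ++ [a]).count z = (u ++ [a]).count b := by
        intro z b
        rw [count_shift, count_shift]
        exact huni z b
      have hidx' : (u ++ [a]).idxOf v ≤ n := by
        rw [List.idxOf_append_of_mem hvu]
        rw [List.idxOf_cons_ne u hav] at hidx
        omega
      exact ih (u ++ [a]) hidx' hr' huni'

end StmtAux

/-- If a finite simple graph `G` is word-representable and `v` is a vertex of `G`, then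
there is a semi-transitive orientation of `G` in which `v` is a source. -/
theorem stmt4 {V : Type*} [Fintype V] [DecidableEq V] (G : SimpleGraph V)
    (h : WordRepresentable G) (v : V) :
    ∃ D : V → V → Prop, IsSemiTransitiveOrientation G D ∧ ∀ x, G.Adj v x → D v x := by
  classical
  -- get a representing word, make it uniform, and rotate it so that `v` comes first
  obtain ⟨w0, hw0a, hw0b⟩ := h
  have hr0 : StmtAux.Rep w0 G := ⟨hw0a, hw0b⟩
  obtain ⟨w1, hr1, huni1⟩ := StmtAux.uniformize
    (∑ z : V, (Finset.univ.sup (fun t => w0.count t) - w0.count z)) w0 le_rfl hr0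
  obtain ⟨t, hr⟩ := StmtAux.to_front v (w1.idxOf v) w1 le_rfl hr1 huni1
  set w : List V := v :: t with hw
  have hall : ∀ z : V, z ∈ w := hr.1
  -- the orientation by order of first occurrences
  refine ⟨fun x y => G.Adj x y ∧ w.idxOf x < w.idxOf y, ⟨⟨?_, ?_, ?_⟩, ?_, ?_⟩, ?_⟩
  · exact fun x y hxy => hxy.1
  · intro x y hxy
    have hne : w.idxOf x ≠ w.idxOf y := fun e => StmtAux.indexOf_inj' (hall x) hxy.ne e
    rcases Nat.lt_or_ge (w.idxOf x) (w.idxOf y) with h' | h'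
    · exact Or.inl ⟨hxy, h'⟩
    · exact Or.inr ⟨hxy.symm, by omega⟩
  · rintro x y ⟨⟨-, h1⟩, ⟨-, h2⟩⟩
    omega
  · -- acyclicity
    intro z hz
    have key : ∀ a b : V, Relation.TransGen
        (fun x y => G.Adj x y ∧ w.idxOf x < w.idxOf y) a b →
        w.idxOf a < w.idxOf b := by
      intro a b hab
      induction hab with
      | single h' => exact h'.2
      | tail _ h' ih => exact ih.trans h'.2
    exact absurd (key z z hz) (lt_irrefl _)
  · -- semi-transitivity
    intro k p hk hD
    by_cases hadj : G.Adj (p 0) (p k)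
    swap
    · exact Or.inl hadj
    right
    have idxm : ∀ j, j ≤ k → ∀ i, i < j → w.idxOf (p i) < w.idxOf (p j) := by
      intro j
      induction j with
      | zero => omega
      | succ m ihm =>
        intro hjk i hij
        have hstep := (hD m (by omega)).2
        rcases Nat.lt_or_ge i m with h' | h'
        · exact (ihm (by omega) i h').trans hstep
        · have : i = m := by omega
          rw [this]
          exact hstep
    have hPcons : ∀ i, i < k → StmtAux.Pw w (p i) (p (i + 1)) := by
      intro i hi
      have hadj' := (hD i hi).1
      have hne := hadj'.ne
      rcases (StmtAux.alt_iff w _ _ hne (hall _) (hall _)).mp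
          ((hr.2 _ _ hne).mpr hadj') with hP | hP
      · exact hP
      · exfalso
        have h1 := StmtAux.Pw_imp_indexOf_lt hP hne.symm (hall _)
        have h2 := (hD i hi).2
        omega
    have hP0k : StmtAux.Pw w (p 0) (p k) := by
      have hne := hadj.ne
      rcases (StmtAux.alt_iff w _ _ hne (hall _) (hall _)).mp
          ((hr.2 _ _ hne).mpr hadj) with hP | hP
      · exact hP
      · exfalso
        have h1 := StmtAux.Pw_imp_indexOf_lt hP hne.symm (hall _)
        have h2 := idxm k (le_refl k) 0 (by omega)
        omega
    have cmono : ∀ s : List V, s <+: w → ∀ j, j ≤ k → ∀ i, i ≤ j →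
        s.count (p j) ≤ s.count (p i) := by
      intro s hs j
      induction j with
      | zero =>
        intro _ i hi
        have : i = 0 := by omega
        rw [this]
      | succ m ihm =>
        intro hjk i hi
        have hstep := (hPcons m (by omega) s hs).1
        rcases Nat.lt_or_ge i (m + 1) with h' | h'
        · exact hstep.trans (ihm (by omega) i (by omega))
        · have : i = m + 1 := by omega
          rw [this]
    intro i j hij hjk
    have hidx := idxm j hjk i hij
    have hne : p i ≠ p j := by
      intro e
      rw [e] at hidx
      exact lt_irrefl _ hidx
    have hPij : StmtAux.Pw w (p i) (p j) := by
      intro s hs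
      have h1 := cmono s hs j hjk i (le_of_lt hij)
      have h2 := (hP0k s hs).2
      have h3 := cmono s hs k (le_refl k) j hjk
      have h4 := cmono s hs i (by omega) 0 (by omega)
      exact ⟨h1, by omega⟩
    refine ⟨?_, hidx⟩
    exact (hr.2 _ _ hne).mp
      ((StmtAux.alt_iff w _ _ hne (hall _) (hall _)).mpr (Or.inl hPij))
  · -- v is a source
    intro x hvx
    refine ⟨hvx, ?_⟩
    have h1 : w.idxOf v = 0 := by rw [hw]; exact List.idxOf_cons_self
    have h2 : w.idxOf x = (t.idxOf x) + 1 := by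
      rw [hw]
      exact List.idxOf_cons_ne t hvx.ne
    omega
end

section
/- The graph A_3 is not word-representable. -/
/-- The graph `A₃` on vertices `{1,…,7}` (represented by `Fin 7`, with vertex `i`
of the paper corresponding to `i - 1` here): a clique on `{1,2,3,4}` together with the
edges `{1,5},{2,5},{1,6},{3,6},{2,7},{3,7},{5,6},{5,7},{6,7}`. -/
def A3 : SimpleGraph (Fin 7) :=
  SimpleGraph.fromRel (fun a b => (a, b) ∈
    ([(0,1),(0,2),(0,3),(1,2),(1,3),(2,3),
      (0,4),(1,4),(0,5),(2,5),(1,6),(2,6),(4,5),(4,6),(5,6)] : List (Fin 7 × Fin 7)))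

namespace NWR

abbrev V7 := Fin 7

/-- letter at position `i` (junk `0` out of range). -/
def g (w : List V7) (i : ℕ) : V7 := w.getD i 0

/-- sorted list of positions whose letter satisfies `p`. -/
def posP (w : List V7) (p : V7 → Bool) : List ℕ :=
  (List.range w.length).filter (fun i => p (g w i))

def px (x : V7) : V7 → Bool := fun z => decide (z = x)

/-- position of the `i`-th occurrence of `x`. -/
def nth (w : List V7) (x : V7) (i : ℕ) : ℕ :=
  (posP w (px x)).getD i 0

lemma mem_posP {w : List V7} {p : V7 → Bool} {i : ℕ} :
    i ∈ posP w p ↔ i < w.length ∧ p (g w i) := by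
  simp [posP, List.mem_filter, List.mem_range]

lemma sorted_posP (w : List V7) (p : V7 → Bool) : (posP w p).Pairwise (· < ·) :=
  List.Pairwise.sublist List.filter_sublist List.pairwise_lt_range

lemma filt (w : List V7) (p : V7 → Bool) : w.filter p = (posP w p).map (g w) := by
  induction w with
  | nil => rfl
  | cons a t ih =>
    have hgs : ∀ i, g (a :: t) (i + 1) = g t i := fun i => rfl
    have hcompg : (g (a :: t)) ∘ Nat.succ = g t := funext hgs
    have hcomp : ((fun i => p (g (a :: t) i)) ∘ Nat.succ) = fun i => p (g t i) := by
      funext i; simp only [Function.comp_apply, hgs]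
    have hga : p (g (a :: t) 0) = p a := rfl
    simp only [posP, List.length_cons, List.range_succ_eq_map, List.filter_cons, hga]
    rw [List.filter_map, hcomp]
    by_cases hpa : p a
    · simp only [hpa, if_true, List.map_cons, List.map_map, hcompg]
      rw [show g (a :: t) 0 = a from rfl]
      exact congrArg (a :: ·) ih
    · simp only [hpa, Bool.false_eq_true, if_false, List.map_map, hcompg]
      exact ih

lemma len_posP (w : List V7) (p : V7 → Bool) : (posP w p).length = (w.filter p).length := by
  rw [filt, List.length_map]

lemma len_pos (w : List V7) (x : V7) :
    (posP w (px x)).length = w.count x := by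
  rw [len_posP]
  simp [List.count, List.countP_eq_length_filter]
  congr 1

end NWR

namespace NWR

def pxy (x y : V7) : V7 → Bool := fun z => decide (z = x ∨ z = y)

/-- Between any two occurrences of `x` there is an occurrence of `y`. -/
def Cov (w : List V7) (x y : V7) : Prop :=
  ∀ m n, m < n → n < w.length → g w m = x → g w n = x → ∃ t, m < t ∧ t < n ∧ g w t = y

def IL (w : List V7) (k : ℕ) (x y : V7) : Prop :=
  (∀ i, i < k → nth w x i < nth w y i) ∧ ∀ i, i + 1 < k → nth w y i < nth w x (i + 1)

variable {w : List V7} {x y : V7} {k : ℕ}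

lemma alternates_comm : Alternates w x y ↔ Alternates w y x := by
  unfold Alternates
  rw [show (fun z : V7 => decide (z = x ∨ z = y)) = fun z => decide (z = y ∨ z = x) by
    funext z; exact decide_eq_decide.2 or_comm]

lemma nth_mem {i : ℕ} (h : i < w.count x) : nth w x i ∈ posP w (px x) := by
  have h' : i < (posP w (px x)).length := by rw [len_pos]; exact h
  rw [nth, List.getD_eq_get _ 0 ⟨i, h'⟩]
  exact List.get_mem _ _

lemma g_nth {i : ℕ} (h : i < w.count x) : g w (nth w x i) = x := by
  have := (mem_posP.1 (nth_mem h)).2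
  simpa [px] using this

lemma nth_lt_length {i : ℕ} (h : i < w.count x) : nth w x i < w.length :=
  (mem_posP.1 (nth_mem h)).1

lemma get_lt_get_iff {F : List ℕ} (hs : F.Pairwise (· < ·)) {a b : Fin F.length} :
    F.get a < F.get b ↔ a < b := by
  constructor
  · intro h
    rcases lt_trichotomy a b with h' | h' | h'
    · exact h'
    · exact absurd h (by rw [h']; exact lt_irrefl _)
    · exact absurd (List.pairwise_iff_get.1 hs _ _ h') (by omega)
  · intro h
    exact List.pairwise_iff_get.1 hs _ _ h

lemma nth_lt_nth {i j : ℕ} (hij : i < j) (hj : j < w.count x) :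
    nth w x i < nth w x j := by
  have hi' : i < (posP w (px x)).length := by rw [len_pos]; omega
  have hj' : j < (posP w (px x)).length := by rw [len_pos]; exact hj
  rw [nth, nth, List.getD_eq_get _ 0 ⟨i, hi'⟩, List.getD_eq_get _ 0 ⟨j, hj'⟩]
  exact (get_lt_get_iff (sorted_posP w (px x))).2 hij

lemma nth_le_nth {i j : ℕ} (hij : i ≤ j) (hj : j < w.count x) :
    nth w x i ≤ nth w x j := by
  rcases eq_or_lt_of_le hij with h | h
  · rw [h]
  · exact (nth_lt_nth h hj).le

lemma nth_index_lt {i j : ℕ} (hi : i < w.count x) (hj : j < w.count x)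
    (h : nth w x i < nth w x j) : i < j := by
  by_contra hle
  push_neg at hle
  rcases eq_or_lt_of_le hle with h' | h'
  · rw [h'] at h; exact lt_irrefl _ h
  · exact absurd (nth_lt_nth h' hi) (by omega)

lemma exists_nth_eq {m : ℕ} (hm : m < w.length) (hg : g w m = x) :
    ∃ i, i < w.count x ∧ nth w x i = m := by
  have hmF : m ∈ posP w (px x) := mem_posP.2 ⟨hm, by simp [px, hg]⟩
  obtain ⟨j, hj⟩ := List.mem_iff_get.1 hmF
  refine ⟨j, by rw [← len_pos (w := w) (x := x)]; exact j.isLt, ?_⟩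
  rw [nth, List.getD_eq_get _ 0 j, hj]

lemma chain_adj {R : ℕ → ℕ → Prop} {F : List ℕ} (hs : F.Pairwise (· < ·))
    (hch : F.Chain' R) {m n : ℕ} (hm : m ∈ F) (hn : n ∈ F) (hmn : m < n)
    (hno : ∀ t, m < t → t < n → t ∉ F) : R m n := by
  obtain ⟨im, him⟩ := List.mem_iff_get.1 hm
  obtain ⟨inn, hinn⟩ := List.mem_iff_get.1 hn
  have hij : im < inn := by
    rw [← get_lt_get_iff hs (a := im) (b := inn), him, hinn]; exact hmn
  have hsucc : (im : ℕ) + 1 = (inn : ℕ) := by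
    by_contra hne
    have h1 : (im : ℕ) + 1 < F.length := by
      have := inn.isLt; omega
    have hmt : m < F.get ⟨im + 1, h1⟩ := by
      rw [← him]; exact (get_lt_get_iff hs).2 (by simp [Fin.lt_def])
    have htn : F.get ⟨im + 1, h1⟩ < n := by
      rw [← hinn]
      exact (get_lt_get_iff hs).2 (by rw [Fin.lt_def]; simp; omega)
    exact hno _ hmt htn (List.get_mem _ _)
  have hlt : (im : ℕ) < F.length - 1 := by have := inn.isLt; omega
  have := List.isChain_iff_getElem.1 hch im (by omega)
  rw [← him, ← hinn]
  convert this using 2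
  all_goals simp [hsucc]

lemma chain_of_alt (h : Alternates w x y) :
    (posP w (pxy x y)).Chain' (fun i j => g w i ≠ g w j) := by
  rw [Alternates, filt] at h
  exact (List.isChain_map _).1 h

lemma cov_of_alt (hxy : x ≠ y) (h : Alternates w x y) : Cov w x y := by
  have hch := chain_of_alt h
  have hs := sorted_posP w (pxy x y)
  suffices aux : ∀ n m, m < n → n < w.length → g w m = x → g w n = x →
      ∃ t, m < t ∧ t < n ∧ g w t = y by
    intro m n h1 h2 h3 h4; exact aux n m h1 h2 h3 h4
  intro n
  induction n using Nat.strong_induction_on with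
  | _ n IH =>
    intro m hmn hn hm' hn'
    by_cases hex : ∃ t, m < t ∧ t < n ∧ (g w t = x ∨ g w t = y)
    · obtain ⟨t, ht1, ht2, ht3⟩ := hex
      cases ht3 with
      | inr h' => exact ⟨t, ht1, ht2, h'⟩
      | inl h' =>
        obtain ⟨s, hs1, hs2, hs3⟩ := IH t ht2 m ht1 (ht2.trans hn) hm' h'
        exact ⟨s, hs1, hs2.trans ht2, hs3⟩
    · exfalso
      push_neg at hex
      have hmF : m ∈ posP w (pxy x y) := mem_posP.2 ⟨hmn.trans hn, by simp [pxy, hm']⟩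
      have hnF : n ∈ posP w (pxy x y) := mem_posP.2 ⟨hn, by simp [pxy, hn']⟩
      have hadj : g w m ≠ g w n := by
        refine chain_adj hs hch hmF hnF hmn ?_
        intro t ht1 ht2 htF
        have := (mem_posP.1 htF).2
        simp only [pxy, decide_eq_true_eq] at this
        rcases this with h' | h'
        exacts [(hex t ht1 ht2).1 h', (hex t ht1 ht2).2 h']
      exact hadj (hm'.trans hn'.symm)

lemma alt_of_cov (hxy : x ≠ y) (h1 : Cov w x y) (h2 : Cov w y x) : Alternates w x y := by
  rw [Alternates, show (fun z : V7 => decide (z = x ∨ z = y)) = pxy x y from rfl, filt]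
  refine (List.isChain_map _).2 (List.isChain_iff_getElem.2 ?_)
  intro i hi
  set F := posP w (pxy x y) with hF
  have hs : F.Pairwise (· < ·) := sorted_posP w (pxy x y)
  have h1' : i < F.length := by omega
  have h2' : i + 1 < F.length := by omega
  set m := F.get ⟨i, h1'⟩ with hm
  set n := F.get ⟨i + 1, h2'⟩ with hn
  have hmn : m < n := (get_lt_get_iff hs).2 (by simp [Fin.lt_def])
  have hmF : m ∈ F := List.get_mem _ _
  have hnF : n ∈ F := List.get_mem _ _
  have hnlen : n < w.length := (mem_posP.1 hnF).1
  have hmlen : m < w.length := (mem_posP.1 hmF).1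
  have hnoF : ∀ t, m < t → t < n → t ∉ F := by
    intro t ht1 ht2 htF
    obtain ⟨j, hj⟩ := List.mem_iff_get.1 htF
    have hj1 : i < (j : ℕ) := by
      have h' : (⟨i, h1'⟩ : Fin F.length) < j := by
        rw [← get_lt_get_iff hs, hj]; exact ht1
      simpa [Fin.lt_def] using h'
    have hj2 : (j : ℕ) < i + 1 := by
      have h' : j < (⟨i + 1, h2'⟩ : Fin F.length) := by
        rw [← get_lt_get_iff hs, hj]; exact ht2
      simpa [Fin.lt_def] using h'
    omega
  have hmv := (mem_posP.1 hmF).2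
  have hnv := (mem_posP.1 hnF).2
  simp only [pxy, decide_eq_true_eq] at hmv hnv
  intro (hEq : g w m = g w n)
  rcases hmv with hmx | hmy
  · rcases hnv with hnx | hny
    · obtain ⟨t, ht1, ht2, ht3⟩ := h1 m n hmn hnlen hmx hnx
      exact hnoF t ht1 ht2 (mem_posP.2 ⟨ht2.trans hnlen, by simp [pxy, ht3]⟩)
    · exact hxy (hmx ▸ hny ▸ hEq)
  · rcases hnv with hnx | hny
    · exact hxy (hnx ▸ hmy ▸ hEq.symm)
    · obtain ⟨t, ht1, ht2, ht3⟩ := h2 m n hmn hnlen hmy hny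
      exact hnoF t ht1 ht2 (mem_posP.2 ⟨ht2.trans hnlen, by simp [pxy, ht3]⟩)

end NWR

namespace NWR
variable {w : List V7} {x y : V7} {k : ℕ}

lemma nth_ne (hxy : x ≠ y) {i j : ℕ} (hi : i < w.count x) (hj : j < w.count y) :
    nth w x i ≠ nth w y j := by
  intro h
  apply hxy
  rw [← g_nth hi, h, g_nth hj]

lemma il_of (hxy : x ≠ y) (hcx : w.count x = k) (hcy : w.count y = k)
    (covxy : Cov w x y) (covyx : Cov w y x) (h0 : nth w x 0 < nth w y 0) :
    IL w k x y := by
  have main : ∀ i, i < k →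
      nth w x i < nth w y i ∧ (∀ j, i = j + 1 → nth w y j < nth w x i) := by
    intro i
    induction i with
    | zero => exact fun _ => ⟨h0, fun j hj => absurd hj (by omega)⟩
    | succ i IH =>
      intro hik
      obtain ⟨h1, h2⟩ := IH (by omega)
      have hyx : nth w y i < nth w x (i + 1) := by
        rcases lt_or_ge (nth w y i) (nth w x (i + 1)) with h | h
        · exact h
        · exfalso
          have hlt : nth w x (i + 1) < nth w y i :=
            lt_of_le_of_ne h (nth_ne hxy (by omega) (by omega))
          have hxx : nth w x i < nth w x (i + 1) := nth_lt_nth (by omega) (by omega)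
          obtain ⟨t, ht1, ht2, ht3⟩ :=
            covxy _ _ hxx (nth_lt_length (by omega)) (g_nth (by omega)) (g_nth (by omega))
          obtain ⟨j, hjc, hjt⟩ := exists_nth_eq (ht2.trans (nth_lt_length (by omega))) ht3
          have hji : j < i := by
            refine nth_index_lt hjc (by omega) ?_
            rw [hjt]; omega
          rcases Nat.eq_zero_or_pos i with h0i | h0i
          · omega
          · have hu : nth w y (i - 1) < nth w x i := h2 (i - 1) (by omega)
            have hv : nth w y j ≤ nth w y (i - 1) := nth_le_nth (by omega) (by omega)
            omega
      refine ⟨?_, fun j hj => by obtain rfl : j = i := by omega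
                                 exact hyx⟩
      have hyy : nth w y i < nth w y (i + 1) := nth_lt_nth (by omega) (by omega)
      obtain ⟨t, ht1, ht2, ht3⟩ :=
        covyx _ _ hyy (nth_lt_length (by omega)) (g_nth (by omega)) (g_nth (by omega))
      obtain ⟨j, hjc, hjt⟩ := exists_nth_eq (ht2.trans (nth_lt_length (by omega))) ht3
      have hij : i < j := by
        refine nth_index_lt (by omega) hjc ?_
        rw [hjt]; omega
      have hle : nth w x (i + 1) ≤ nth w x j := nth_le_nth (by omega) hjc
      omega
  refine ⟨fun i hi => (main i hi).1, fun i hi => (main (i + 1) hi).2 i rfl⟩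

lemma il_or (hxy : x ≠ y) (hk : 0 < k) (hcx : w.count x = k) (hcy : w.count y = k)
    (halt : Alternates w x y) : IL w k x y ∨ IL w k y x := by
  have covxy := cov_of_alt hxy halt
  have covyx := cov_of_alt hxy.symm (alternates_comm.1 halt)
  have hne : nth w x 0 ≠ nth w y 0 := nth_ne hxy (by omega) (by omega)
  rcases lt_or_gt_of_ne hne with h | h
  · exact Or.inl (il_of hxy hcx hcy covxy covyx h)
  · exact Or.inr (il_of hxy.symm hcy hcx covyx covxy h)

lemma alt_of_il (hxy : x ≠ y) (hcx : w.count x = k) (hcy : w.count y = k)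
    (hil : IL w k x y) : Alternates w x y := by
  obtain ⟨hA, hB⟩ := hil
  refine alt_of_cov hxy ?_ ?_
  · intro m n hmn hn hm' hn'
    obtain ⟨i, hic, rfl⟩ := exists_nth_eq (hmn.trans hn) hm'
    obtain ⟨j, hjc, rfl⟩ := exists_nth_eq hn hn'
    have hij : i < j := nth_index_lt hic hjc hmn
    refine ⟨nth w y i, hA i (by omega), ?_, g_nth (by omega)⟩
    have h1 : nth w y i < nth w x (i + 1) := hB i (by omega)
    have h2 : nth w x (i + 1) ≤ nth w x j := nth_le_nth (by omega) hjc
    omega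
  · intro m n hmn hn hm' hn'
    obtain ⟨i, hic, rfl⟩ := exists_nth_eq (hmn.trans hn) hm'
    obtain ⟨j, hjc, rfl⟩ := exists_nth_eq hn hn'
    have hij : i < j := nth_index_lt hic hjc hmn
    refine ⟨nth w x (i + 1), hB i (by omega), ?_, g_nth (by omega)⟩
    have h1 : nth w x (i + 1) ≤ nth w x j := nth_le_nth (by omega) (by omega)
    have h2 : nth w x j < nth w y j := hA j (by omega)
    omega

end NWR

namespace NWR
variable {w : List V7} {x y : V7}

lemma head_count {l : List V7} (hxy : x ≠ y) (hall : ∀ z ∈ l, z = x ∨ z = y)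
    (hch : l.Chain' (· ≠ ·)) :
    l.count y ≤ l.count x + 1 ∧ (l.head? = some x → l.count y ≤ l.count x) := by
  induction l with
  | nil => simp
  | cons a t ih =>
    have hch' : t.Chain' (· ≠ ·) := hch.tail
    have hall' : ∀ z ∈ t, z = x ∨ z = y := fun z hz => hall z (List.mem_cons_of_mem _ hz)
    obtain ⟨ih1, ih2⟩ := ih hall' hch'
    rcases hall a (List.mem_cons_self) with rfl | rfl
    · have e1 : (a :: t).count y = t.count y := by
        simp [List.count_cons, hxy.symm, hxy]
      have e2 : (a :: t).count a = t.count a + 1 := by simp [List.count_cons]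
      exact ⟨by omega, fun _ => by omega⟩
    · have e1 : (a :: t).count a = t.count a + 1 := by simp [List.count_cons]
      have e2 : (a :: t).count x = t.count x := by simp [List.count_cons, hxy, hxy.symm]
      have hcnt : t.count a ≤ t.count x := by
        cases t with
        | nil => simp
        | cons b t' =>
          have hba : a ≠ b := (List.isChain_cons_cons.1 hch).1
          have hbx : b = x := ((hall' b (List.mem_cons_self)).resolve_right
            (fun h => hba h.symm))
          exact ih2 (by rw [hbx]; rfl)
      refine ⟨by omega, fun h => ?_⟩
      exact absurd (Option.some.inj h) (fun h' => hxy h'.symm)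

lemma head_idx (hxy : x ≠ y) : ∀ {w : List V7}, y ∈ w →
    w.idxOf y < w.idxOf x →
    (w.filter (fun z => decide (z = x ∨ z = y))).head? = some y := by
  intro w
  induction w with
  | nil => simp
  | cons a t ih =>
    intro hy hlt
    by_cases hay : a = y
    · subst hay
      rw [List.filter_cons, if_pos (by simp)]
      rfl
    · by_cases hax : a = x
      · subst hax
        rw [List.idxOf_cons_self] at hlt
        omega
      · have hy' : y ∈ t := by
          rcases List.mem_cons.1 hy with h | h
          · exact absurd h.symm hay
          · exact h
        have hlt' : t.idxOf y < t.idxOf x := by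
          rw [List.idxOf_cons_ne _ hay, List.idxOf_cons_ne _ hax] at hlt
          omega
        rw [List.filter_cons, if_neg (by simp [hax, hay])]
        exact ih hy' hlt'

lemma count_filter_pair_left :
    (w.filter (fun z => decide (z = x ∨ z = y))).count x = w.count x :=
  List.count_filter (by simp)

lemma count_filter_pair_right :
    (w.filter (fun z => decide (z = x ∨ z = y))).count y = w.count y :=
  List.count_filter (by simp)

lemma pre_step (hmin : ∀ y : V7, w.count x ≤ w.count y)
    (hidx : ∀ y, y ≠ x → w.count y = w.count x → Alternates w x y →
      w.idxOf y < w.idxOf x)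
    (hmem : ∀ v : V7, v ∈ w) :
    ∀ a b : V7, a ≠ b → (Alternates (x :: w) a b ↔ Alternates w a b) := by
  have aux : ∀ b, b ≠ x → (Alternates (x :: w) x b ↔ Alternates w x b) := by
    intro b hbx
    unfold Alternates
    rw [List.filter_cons, if_pos (by simp)]
    constructor
    · intro h; exact h.tail
    · intro h
      apply List.isChain_cons.2
      refine ⟨?_, h⟩
      intro z hz
      intro hzx
      subst hzx
      have hhead : (w.filter (fun z => decide (z = x ∨ z = b))).head? = some x := by
        cases hh : (w.filter (fun t => decide (t = x ∨ t = b))).head? with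
        | none => rw [hh] at hz; exact absurd hz (by simp)
        | some c =>
          rw [hh] at hz
          simp at hz
          rw [hz]
      have hall : ∀ z ∈ w.filter (fun z => decide (z = x ∨ z = b)), z = x ∨ z = b := by
        intro z hzm
        have := (List.mem_filter.1 hzm).2
        simpa using this
      have hcnt := (head_count (fun h => hbx h.symm) hall h).2 hhead
      rw [count_filter_pair_left, count_filter_pair_right] at hcnt
      have hcnt' : w.count b = w.count x := le_antisymm hcnt (hmin b)
      have hio := hidx b hbx hcnt' h
      have := head_idx (fun h => hbx h.symm) (hmem b) hio
      rw [hhead] at this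
      exact hbx (Option.some.inj this).symm
  intro a b hab
  by_cases hxa : x = a
  · subst hxa
    exact aux b hab.symm
  · by_cases hxb : x = b
    · subst hxb
      rw [alternates_comm (x := a), alternates_comm (x := a)]
      exact aux a hab
    · unfold Alternates
      rw [List.filter_cons, if_neg (by simp [hxa, hxb])]

lemma length_eq_sum_count (w : List V7) : w.length = ∑ v : Fin 7, w.count v := by
  induction w with
  | nil => simp
  | cons a t ih =>
    have : ∀ v : V7, (a :: t).count v = t.count v + if a = v then 1 else 0 := by
      intro v
      simp [List.count_cons]
    simp only [this, Finset.sum_add_distrib, List.length_cons, ← ih]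
    simp

lemma length_lt_of_lt {M : ℕ} (hub : ∀ v : V7, w.count v ≤ M)
    (hlt : ∃ v : V7, w.count v < M) : w.length < 7 * M := by
  obtain ⟨v0, hv0⟩ := hlt
  have := Finset.sum_lt_sum (f := fun v : V7 => w.count v) (g := fun _ : V7 => M)
    (s := Finset.univ) (fun i _ => hub i) ⟨v0, Finset.mem_univ _, hv0⟩
  rw [← length_eq_sum_count] at this
  simpa [Finset.sum_const, Finset.card_univ, Nat.mul_comm] using this

lemma unif : ∀ (D : ℕ) (w : List V7), (∀ v : V7, v ∈ w) →
    7 * (Finset.univ.sup fun v : V7 => w.count v) - w.length ≤ D →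
    ∃ (w' : List V7) (k : ℕ), 0 < k ∧ (∀ v : V7, w'.count v = k) ∧ (∀ v : V7, v ∈ w') ∧
      (∀ a b : V7, a ≠ b → (Alternates w' a b ↔ Alternates w a b)) := by
  intro D
  induction D with
  | zero =>
    intro w hmem hD
    set M := Finset.univ.sup fun v : V7 => w.count v with hM
    have hub : ∀ v : V7, w.count v ≤ M := fun v => by
      rw [hM]; exact Finset.le_sup (f := fun v : V7 => w.count v) (Finset.mem_univ v)
    have huni : ∀ v : V7, w.count v = M := by
      by_contra hne
      push_neg at hne
      obtain ⟨v0, hv0⟩ := hne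
      have : w.length < 7 * M := length_lt_of_lt hub ⟨v0, lt_of_le_of_ne (hub v0) hv0⟩
      omega
    refine ⟨w, M, ?_, huni, hmem, fun a b _ => Iff.rfl⟩
    have := huni 0
    have hpos : 0 < w.count (0 : V7) := List.count_pos_iff.2 (hmem 0)
    omega
  | succ D ih =>
    intro w hmem hD
    set M := Finset.univ.sup fun v : V7 => w.count v with hM
    have hub : ∀ v : V7, w.count v ≤ M := fun v => by
      rw [hM]; exact Finset.le_sup (f := fun v : V7 => w.count v) (Finset.mem_univ v)
    by_cases huni : ∀ v : V7, w.count v = M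
    · refine ⟨w, M, ?_, huni, hmem, fun a b _ => Iff.rfl⟩
      have := huni 0
      have hpos : 0 < w.count (0 : V7) := List.count_pos_iff.2 (hmem 0)
      omega
    · push_neg at huni
      obtain ⟨v1, hv1⟩ := huni
      have hv1' : w.count v1 < M := lt_of_le_of_ne (hub v1) hv1
      set B := Finset.univ.filter (fun v : V7 => w.count v < M) with hB
      have hBne : B.Nonempty := ⟨v1, by simp [hB, hv1']⟩
      obtain ⟨x0, hx0B, hx0min⟩ := Finset.exists_min_image B (fun v => w.count v) hBne
      set C := B.filter (fun v => w.count v = w.count x0) with hC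
      have hCne : C.Nonempty := ⟨x0, by simp [hC, hx0B]⟩
      obtain ⟨x, hxC, hxmax⟩ := Finset.exists_max_image C (fun v => w.idxOf v) hCne
      have hxcnt : w.count x = w.count x0 := by
        have := (Finset.mem_filter.1 hxC).2
        simpa using this
      have hxB : x ∈ B := (Finset.mem_filter.1 hxC).1
      have hxlt : w.count x < M := by
        have := (Finset.mem_filter.1 hxB).2
        simpa using this
      have hminx : ∀ y : V7, w.count x ≤ w.count y := by
        intro y
        by_cases hyM : w.count y < M
        · have hyB : y ∈ B := by simp [hB, hyM]
          rw [hxcnt]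
          exact hx0min y hyB
        · omega
      have hidxx : ∀ y, y ≠ x → w.count y = w.count x → Alternates w x y →
          w.idxOf y < w.idxOf x := by
        intro y hyx hcnt _
        have hyC : y ∈ C := by
          simp only [hC, hB, Finset.mem_filter, Finset.mem_univ, true_and]
          constructor
          · omega
          · omega
        have hle := hxmax y hyC
        have hne : w.idxOf y ≠ w.idxOf x := by
          intro hEq
          exact hyx ((List.idxOf_inj (hmem y)).1 hEq)
        omega
      have hstep := pre_step hminx hidxx hmem
      have hmem' : ∀ v : V7, v ∈ x :: w := fun v => List.mem_cons_of_mem _ (hmem v)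
      have hcnt' : ∀ v : V7, (x :: w).count v = w.count v + if x = v then 1 else 0 := by
        intro v
        simp [List.count_cons]
      have hub' : ∀ v : V7, (x :: w).count v ≤ M := by
        intro v
        rw [hcnt' v]
        by_cases hvx : x = v
        · rw [if_pos hvx, ← hvx]
          omega
        · rw [if_neg hvx]
          have := hub v
          omega
      have hMeq : (Finset.univ.sup fun v : V7 => (x :: w).count v) = M := by
        apply le_antisymm
        · exact Finset.sup_le fun v _ => hub' v
        · obtain ⟨v0, _, hv0⟩ := Finset.exists_mem_eq_sup (Finset.univ : Finset V7)
            Finset.univ_nonempty (fun v : V7 => w.count v)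
          have hv0M : w.count v0 = M := hv0.symm
          have hv0x : v0 ≠ x := by intro h; rw [h] at hv0M; omega
          have h2 : (x :: w).count v0 = M := by
            rw [hcnt' v0, if_neg (fun h => hv0x h.symm), hv0M]
            omega
          rw [← h2]
          exact Finset.le_sup (f := fun v : V7 => (x :: w).count v) (Finset.mem_univ v0)
      have hlen : w.length < 7 * M := length_lt_of_lt hub ⟨x, hxlt⟩
      have hD' : 7 * (Finset.univ.sup fun v : V7 => (x :: w).count v) - (x :: w).length ≤ D := by
        rw [hMeq, List.length_cons]
        omega
      obtain ⟨w', k, hk, hcntw', hmemw', hiff⟩ := ih (x :: w) hmem' hD'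
      exact ⟨w', k, hk, hcntw', hmemw',
        fun a b hab => (hiff a b hab).trans (hstep a b hab)⟩

end NWR

namespace NWR

lemma master {w : List V7} {k : ℕ} (hk : 0 < k) (a b c d p q r : V7)
    (hab : IL w k a b) (hbc : IL w k b c) (hac : IL w k a c)
    (had : IL w k a d ∨ IL w k d a) (hbd : IL w k b d ∨ IL w k d b)
    (hcd : IL w k c d ∨ IL w k d c)
    (hpa : IL w k p a ∨ IL w k a p) (hpb : IL w k p b ∨ IL w k b p)
    (hqa : IL w k q a ∨ IL w k a q) (hqc : IL w k q c ∨ IL w k c q)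
    (hrb : IL w k r b ∨ IL w k b r) (hrc : IL w k r c ∨ IL w k c r)
    (npc : ¬ IL w k p c) (npd : ¬ IL w k p d) (ndp : ¬ IL w k d p)
    (nqb : ¬ IL w k q b) (nbq : ¬ IL w k b q)
    (nqd : ¬ IL w k q d) (ndq : ¬ IL w k d q)
    (nar : ¬ IL w k a r)
    (nrd : ¬ IL w k r d) (ndr : ¬ IL w k d r) : False := by
  -- Step 1: q must be strictly between a and c in every round.
  rcases hqa with hqa | haq
  · rcases hqc with hqc | hcq
    · -- q first: q alternates with b, contradiction
      exact nqb ⟨fun i hi => (hqa.1 i hi).trans (hab.1 i hi),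
        fun i hi => (hbc.1 i (by omega)).trans (hqc.2 i hi)⟩
    · -- cyclic: q < a < c < q
      have h1 := hqa.1 0 hk
      have h2 := hac.1 0 hk
      have h3 := hcq.1 0 hk
      omega
  · rcases hqc with hqc | hcq
    · -- q middle; now case on position of d
      rcases had with had | hda <;> rcases hbd with hbd | hdb <;>
        rcases hcd with hcd | hdc
      · -- d last
        exact nqd ⟨fun i hi => (hqc.1 i hi).trans (hcd.1 i hi),
          fun i hi => (had.2 i hi).trans (haq.1 (i + 1) hi)⟩
      · -- d between b and c : case on r
        rcases hrb with hrb | hbr <;> rcases hrc with hrc | hcr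
        · exact nrd ⟨fun i hi => (hrb.1 i hi).trans (hbd.1 i hi),
            fun i hi => (hdc.1 i (by omega)).trans (hrc.2 i hi)⟩
        · have h1 := hrb.1 0 hk
          have h2 := hbc.1 0 hk
          have h3 := hcr.1 0 hk
          omega
        · exact nar ⟨fun i hi => (hab.1 i hi).trans (hbr.1 i hi),
            fun i hi => (hrc.1 i (by omega)).trans (hac.2 i hi)⟩
        · exact ndr ⟨fun i hi => (hdc.1 i hi).trans (hcr.1 i hi),
            fun i hi => (hbr.2 i hi).trans (hbd.1 (i + 1) hi)⟩
      · -- IL d b together with IL c d : cyclic with b < c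
        have h1 := hdb.1 0 hk
        have h2 := hbc.1 0 hk
        have h3 := hcd.1 0 hk
        omega
      · -- d between a and b : case on p
        rcases hpa with hpa | hap <;> rcases hpb with hpb | hbp
        · exact npd ⟨fun i hi => (hpa.1 i hi).trans (had.1 i hi),
            fun i hi => (hdb.1 i (by omega)).trans (hpb.2 i hi)⟩
        · have h1 := hpa.1 0 hk
          have h2 := hab.1 0 hk
          have h3 := hbp.1 0 hk
          omega
        · exact npc ⟨fun i hi => (hpb.1 i hi).trans (hbc.1 i hi),
            fun i hi => (hac.2 i hi).trans (hap.1 (i + 1) hi)⟩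
        · exact ndp ⟨fun i hi => (hdb.1 i hi).trans (hbp.1 i hi),
            fun i hi => (hap.2 i hi).trans (had.1 (i + 1) hi)⟩
      · -- IL d a and IL b d : cyclic
        have h1 := hda.1 0 hk
        have h2 := hab.1 0 hk
        have h3 := hbd.1 0 hk
        omega
      · have h1 := hda.1 0 hk
        have h2 := hab.1 0 hk
        have h3 := hbd.1 0 hk
        omega
      · have h1 := hda.1 0 hk
        have h2 := hac.1 0 hk
        have h3 := hcd.1 0 hk
        omega
      · -- d first
        exact ndq ⟨fun i hi => (hda.1 i hi).trans (haq.1 i hi),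
          fun i hi => (hqc.1 i (by omega)).trans (hdc.2 i hi)⟩
    · -- q last
      exact nbq ⟨fun i hi => (hbc.1 i hi).trans (hcq.1 i hi),
        fun i hi => (haq.2 i hi).trans (hab.1 (i + 1) hi)⟩

end NWR

instance : DecidableRel A3.Adj := fun a b =>
  decidable_of_iff _ (SimpleGraph.fromRel_adj _ a b).symm

open NWR in
/-- The graph `A₃` is not word-representable. -/
theorem stmt6 : ¬ WordRepresentable A3 := by
  rintro ⟨w0, hmem0, hrep0⟩
  obtain ⟨w, k, hk, hcnt, hmem, hiff⟩ := NWR.unif _ w0 hmem0 le_rfl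
  have hrep : ∀ x y : V7, x ≠ y → (Alternates w x y ↔ A3.Adj x y) :=
    fun x y hxy => (hiff x y hxy).trans (hrep0 x y hxy)
  have edge : ∀ x y : V7, x ≠ y → A3.Adj x y → IL w k x y ∨ IL w k y x := by
    intro x y hxy hadj
    exact NWR.il_or hxy hk (hcnt x) (hcnt y) ((hrep x y hxy).2 hadj)
  have nonedge : ∀ x y : V7, x ≠ y → ¬ A3.Adj x y → ¬ IL w k x y := by
    intro x y hxy hnadj hil
    exact hnadj ((hrep x y hxy).1 (NWR.alt_of_il hxy (hcnt x) (hcnt y) hil))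
  have h01 := edge 0 1 (by decide) (by decide)
  have h12 := edge 1 2 (by decide) (by decide)
  have h02 := edge 0 2 (by decide) (by decide)
  have e03 := edge 0 3 (by decide) (by decide)
  have e13 := edge 1 3 (by decide) (by decide)
  have e23 := edge 2 3 (by decide) (by decide)
  have e40 := edge 4 0 (by decide) (by decide)
  have e41 := edge 4 1 (by decide) (by decide)
  have e50 := edge 5 0 (by decide) (by decide)
  have e52 := edge 5 2 (by decide) (by decide)
  have e61 := edge 6 1 (by decide) (by decide)
  have e62 := edge 6 2 (by decide) (by decide)
  have n42 := nonedge 4 2 (by decide) (by decide)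
  have n24 := nonedge 2 4 (by decide) (by decide)
  have n43 := nonedge 4 3 (by decide) (by decide)
  have n34 := nonedge 3 4 (by decide) (by decide)
  have n51 := nonedge 5 1 (by decide) (by decide)
  have n15 := nonedge 1 5 (by decide) (by decide)
  have n53 := nonedge 5 3 (by decide) (by decide)
  have n35 := nonedge 3 5 (by decide) (by decide)
  have n60 := nonedge 6 0 (by decide) (by decide)
  have n06 := nonedge 0 6 (by decide) (by decide)
  have n63 := nonedge 6 3 (by decide) (by decide)
  have n36 := nonedge 3 6 (by decide) (by decide)
  rcases h01 with h01 | h10 <;> rcases h12 with h12 | h21 <;> rcases h02 with h02 | h20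
  · -- order 0 1 2 : p=4 q=5 r=6
    exact master hk 0 1 2 3 4 5 6 h01 h12 h02 e03 e13 e23 e40 e41 e50 e52 e61 e62
      n42 n43 n34 n51 n15 n53 n35 n06 n63 n36
  · -- 0<1, 1<2, 2<0 : cyclic
    have x1 := h01.1 0 hk; have x2 := h12.1 0 hk; have x3 := h20.1 0 hk; omega
  · -- order 0 2 1 : p=5 q=4 r=6
    exact master hk 0 2 1 3 5 4 6 h02 h21 h01 e03 e23 e13 e50 e52 e40 e41 e62 e61
      n51 n53 n35 n42 n24 n43 n34 n06 n63 n36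
  · -- 0<1? no: h10? combo (h10? ) careful ordering of cases
    exact master hk 2 0 1 3 5 6 4 h20 h01 h21 e23 e03 e13 e52 e50 e62 e61 e40 e41
      n51 n53 n35 n60 n06 n63 n36 n24 n43 n34
  · -- (h10, h12, h02) : order 1 0 2 : p=4 q=6 r=5
    exact master hk 1 0 2 3 4 6 5 h10 h02 h12 e13 e03 e23 e41 e40 e61 e62 e50 e52
      n42 n43 n34 n60 n06 n63 n36 n15 n53 n35
  · -- (h10, h12, h20) : order 1 2 0 : p=6 q=4 r=5
    exact master hk 1 2 0 3 6 4 5 h12 h20 h10 e13 e23 e03 e61 e62 e41 e40 e52 e50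
      n60 n63 n36 n42 n24 n43 n34 n15 n53 n35
  · -- (h10, h21, h02) : cyclic 1<0? 2<1, 0<2
    have x1 := h10.1 0 hk; have x2 := h21.1 0 hk; have x3 := h02.1 0 hk; omega
  · -- (h10, h21, h20) : order 2 1 0 : p=6 q=5 r=4
    exact master hk 2 1 0 3 6 5 4 h21 h10 h20 e23 e13 e03 e62 e61 e52 e50 e41 e40
      n60 n63 n36 n51 n15 n53 n35 n24 n43 n34
end

section
/- The graph A_3 admits no semi-transitive orientation. -/
def forceN {α : Sort*} (n : Nat) (f : Nat → α) : α := match n with | 0 => f 0 | m+1 => f (m+1)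

theorem forceN_eq {α : Sort*} (n : Nat) (f : Nat → α) : forceN n f = f n := by cases n <;> rfl

theorem peel (a : Nat) {b : Nat} (hb : b < 128) (j : Nat) :
    (a * 128 + b).testBit j = if j < 7 then b.testBit j else a.testBit (j - 7) := by
  have h128 : (128 : Nat) = 2 ^ 7 := by norm_num
  rw [h128] at hb ⊢
  rw [Nat.mul_comm]
  exact Nat.testBit_two_pow_mul_add a hb j

theorem band_bit {v sh i : Nat} (h : ((v >>> sh) &&& 127).testBit i = true) :
    v.testBit (sh + i) = true ∧ i < 7 := by
  have h127 : (127 : Nat) = 2 ^ 7 - 1 := by norm_num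
  simp only [Nat.testBit_and, Nat.testBit_shiftRight, h127, Nat.testBit_two_pow_sub_one,
    Bool.and_eq_true, decide_eq_true_eq] at h
  exact h

theorem cond_bit {b : Bool} {v i : Nat} (h : (bif b then v else 0).testBit i = true) :
    b = true ∧ v.testBit i = true := by
  cases b <;> simp_all

def cnd (b : Bool) (p q : Nat) : Nat := bif b then p else q

def row0 (b0 b1 b2 b6 b8 : Bool) : Nat := cnd b0 2 0 + cnd b1 4 0 + cnd b2 8 0 + cnd b6 16 0 + cnd b8 32 0
def row1 (b0 b3 b4 b7 b10 : Bool) : Nat := cnd b0 0 1 + cnd b3 4 0 + cnd b4 8 0 + cnd b7 16 0 + cnd b10 64 0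
def row2 (b1 b3 b5 b9 b11 : Bool) : Nat := cnd b1 0 1 + cnd b3 0 2 + cnd b5 8 0 + cnd b9 32 0 + cnd b11 64 0
def row3 (b2 b4 b5 : Bool) : Nat := cnd b2 0 1 + cnd b4 0 2 + cnd b5 0 4
def row4 (b6 b7 b12 b13 : Bool) : Nat := cnd b6 0 1 + cnd b7 0 2 + cnd b12 32 0 + cnd b13 64 0
def row5 (b8 b9 b12 b14 : Bool) : Nat := cnd b8 0 1 + cnd b9 0 4 + cnd b12 0 16 + cnd b14 64 0
def row6 (b10 b11 b13 b14 : Bool) : Nat := cnd b10 0 2 + cnd b11 0 4 + cnd b13 0 16 + cnd b14 0 32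

def ebuild (b0 b1 b2 b3 b4 b5 b6 b7 b8 b9 b10 b11 b12 b13 b14 : Bool) : Nat :=
  (((((row6 b10 b11 b13 b14 * 128 + row5 b8 b9 b12 b14) * 128 + row4 b6 b7 b12 b13) * 128
    + row3 b2 b4 b5) * 128 + row2 b1 b3 b5 b9 b11) * 128 + row1 b0 b3 b4 b7 b10) * 128
    + row0 b0 b1 b2 b6 b8

theorem r0lt : ∀ b0 b1 b2 b6 b8 : Bool, row0 b0 b1 b2 b6 b8 < 128 := by decide
theorem r1lt : ∀ b0 b3 b4 b7 b10 : Bool, row1 b0 b3 b4 b7 b10 < 128 := by decide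
theorem r2lt : ∀ b1 b3 b5 b9 b11 : Bool, row2 b1 b3 b5 b9 b11 < 128 := by decide
theorem r3lt : ∀ b2 b4 b5 : Bool, row3 b2 b4 b5 < 128 := by decide
theorem r4lt : ∀ b6 b7 b12 b13 : Bool, row4 b6 b7 b12 b13 < 128 := by decide
theorem r5lt : ∀ b8 b9 b12 b14 : Bool, row5 b8 b9 b12 b14 < 128 := by decide
theorem r6lt : ∀ b10 b11 b13 b14 : Bool, row6 b10 b11 b13 b14 < 128 := by decide

def rowsN (b0 b1 b2 b3 b4 b5 b6 b7 b8 b9 b10 b11 b12 b13 b14 : Bool) : List Nat :=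
  [row0 b0 b1 b2 b6 b8, row1 b0 b3 b4 b7 b10, row2 b1 b3 b5 b9 b11, row3 b2 b4 b5,
   row4 b6 b7 b12 b13, row5 b8 b9 b12 b14, row6 b10 b11 b13 b14]

theorem ebrow (b0 b1 b2 b3 b4 b5 b6 b7 b8 b9 b10 b11 b12 b13 b14 : Bool) (x y : Nat)
    (hx : x < 7) (hy : y < 7) :
    (ebuild b0 b1 b2 b3 b4 b5 b6 b7 b8 b9 b10 b11 b12 b13 b14).testBit (7*x + y)
      = ((rowsN b0 b1 b2 b3 b4 b5 b6 b7 b8 b9 b10 b11 b12 b13 b14).getD x 0).testBit y := by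
  interval_cases x
  · simp only [ebuild]
    rw [show 7*0+y = y from by omega, peel _ (r0lt b0 b1 b2 b6 b8), if_pos hy]; rfl
  · simp only [ebuild]
    rw [show 7*1+y = 7+y from by omega, peel _ (r0lt b0 b1 b2 b6 b8), if_neg (by omega),
      show 7+y-7 = y from by omega, peel _ (r1lt b0 b3 b4 b7 b10), if_pos hy]; rfl
  · simp only [ebuild]
    rw [show 7*2+y = 14+y from by omega, peel _ (r0lt b0 b1 b2 b6 b8), if_neg (by omega),
      show 14+y-7 = 7+y from by omega, peel _ (r1lt b0 b3 b4 b7 b10), if_neg (by omega),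
      show 7+y-7 = y from by omega, peel _ (r2lt b1 b3 b5 b9 b11), if_pos hy]; rfl
  · simp only [ebuild]
    rw [show 7*3+y = 21+y from by omega, peel _ (r0lt b0 b1 b2 b6 b8), if_neg (by omega),
      show 21+y-7 = 14+y from by omega, peel _ (r1lt b0 b3 b4 b7 b10), if_neg (by omega),
      show 14+y-7 = 7+y from by omega, peel _ (r2lt b1 b3 b5 b9 b11), if_neg (by omega),
      show 7+y-7 = y from by omega, peel _ (r3lt b2 b4 b5), if_pos hy]; rfl
  · simp only [ebuild]
    rw [show 7*4+y = 28+y from by omega, peel _ (r0lt b0 b1 b2 b6 b8), if_neg (by omega),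
      show 28+y-7 = 21+y from by omega, peel _ (r1lt b0 b3 b4 b7 b10), if_neg (by omega),
      show 21+y-7 = 14+y from by omega, peel _ (r2lt b1 b3 b5 b9 b11), if_neg (by omega),
      show 14+y-7 = 7+y from by omega, peel _ (r3lt b2 b4 b5), if_neg (by omega),
      show 7+y-7 = y from by omega, peel _ (r4lt b6 b7 b12 b13), if_pos hy]; rfl
  · simp only [ebuild]
    rw [show 7*5+y = 35+y from by omega, peel _ (r0lt b0 b1 b2 b6 b8), if_neg (by omega),
      show 35+y-7 = 28+y from by omega, peel _ (r1lt b0 b3 b4 b7 b10), if_neg (by omega),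
      show 28+y-7 = 21+y from by omega, peel _ (r2lt b1 b3 b5 b9 b11), if_neg (by omega),
      show 21+y-7 = 14+y from by omega, peel _ (r3lt b2 b4 b5), if_neg (by omega),
      show 14+y-7 = 7+y from by omega, peel _ (r4lt b6 b7 b12 b13), if_neg (by omega),
      show 7+y-7 = y from by omega, peel _ (r5lt b8 b9 b12 b14), if_pos hy]; rfl
  · simp only [ebuild]
    rw [show 7*6+y = 42+y from by omega, peel _ (r0lt b0 b1 b2 b6 b8), if_neg (by omega),
      show 42+y-7 = 35+y from by omega, peel _ (r1lt b0 b3 b4 b7 b10), if_neg (by omega),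
      show 35+y-7 = 28+y from by omega, peel _ (r2lt b1 b3 b5 b9 b11), if_neg (by omega),
      show 28+y-7 = 21+y from by omega, peel _ (r3lt b2 b4 b5), if_neg (by omega),
      show 21+y-7 = 14+y from by omega, peel _ (r4lt b6 b7 b12 b13), if_neg (by omega),
      show 14+y-7 = 7+y from by omega, peel _ (r5lt b8 b9 b12 b14), if_neg (by omega),
      show 7+y-7 = y from by omega]; rfl

def rowsEB (b0 b1 b2 b3 b4 b5 b6 b7 b8 b9 b10 b11 b12 b13 b14 : Bool) : List (List Bool) :=
  [[false, b0, b1, b2, b6, b8, false],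
   [!b0, false, b3, b4, b7, false, b10],
   [!b1, !b3, false, b5, false, b9, b11],
   [!b2, !b4, !b5, false, false, false, false],
   [!b6, !b7, false, false, false, b12, b13],
   [!b8, false, !b9, false, !b12, false, b14],
   [false, !b10, !b11, false, !b13, !b14, false]]

def EB (b0 b1 b2 b3 b4 b5 b6 b7 b8 b9 b10 b11 b12 b13 b14 : Bool) (x y : Fin 7) : Bool :=
  ((rowsEB b0 b1 b2 b3 b4 b5 b6 b7 b8 b9 b10 b11 b12 b13 b14).getD x.val []).getD y.val false

theorem row0_sem : ∀ (b0 b1 b2 b6 b8 : Bool) (y : Fin 7),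
    (row0 b0 b1 b2 b6 b8).testBit y.val = [false, b0, b1, b2, b6, b8, false].getD y.val false := by decide
theorem row1_sem : ∀ (b0 b3 b4 b7 b10 : Bool) (y : Fin 7),
    (row1 b0 b3 b4 b7 b10).testBit y.val = [!b0, false, b3, b4, b7, false, b10].getD y.val false := by decide
theorem row2_sem : ∀ (b1 b3 b5 b9 b11 : Bool) (y : Fin 7),
    (row2 b1 b3 b5 b9 b11).testBit y.val = [!b1, !b3, false, b5, false, b9, b11].getD y.val false := by decide
theorem row3_sem : ∀ (b2 b4 b5 : Bool) (y : Fin 7),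
    (row3 b2 b4 b5).testBit y.val = [!b2, !b4, !b5, false, false, false, false].getD y.val false := by decide
theorem row4_sem : ∀ (b6 b7 b12 b13 : Bool) (y : Fin 7),
    (row4 b6 b7 b12 b13).testBit y.val = [!b6, !b7, false, false, false, b12, b13].getD y.val false := by decide
theorem row5_sem : ∀ (b8 b9 b12 b14 : Bool) (y : Fin 7),
    (row5 b8 b9 b12 b14).testBit y.val = [!b8, false, !b9, false, !b12, false, b14].getD y.val false := by decide
theorem row6_sem : ∀ (b10 b11 b13 b14 : Bool) (y : Fin 7),
    (row6 b10 b11 b13 b14).testBit y.val = [false, !b10, !b11, false, !b13, !b14, false].getD y.val false := by decide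

theorem ebuild_sem (b0 b1 b2 b3 b4 b5 b6 b7 b8 b9 b10 b11 b12 b13 b14 : Bool) (x y : Fin 7) :
    (ebuild b0 b1 b2 b3 b4 b5 b6 b7 b8 b9 b10 b11 b12 b13 b14).testBit (7*x.val + y.val)
      = EB b0 b1 b2 b3 b4 b5 b6 b7 b8 b9 b10 b11 b12 b13 b14 x y := by
  rw [ebrow b0 b1 b2 b3 b4 b5 b6 b7 b8 b9 b10 b11 b12 b13 b14 x.val y.val x.isLt y.isLt]
  fin_cases x <;>
    simp [rowsN, EB, rowsEB, List.getD, row0_sem, row1_sem, row2_sem, row3_sem, row4_sem,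
      row5_sem, row6_sem]

def orow (e rm : Nat) : Nat :=
  (bif rm.testBit 0 then (e >>> 0) &&& 127 else 0) |||
  (bif rm.testBit 1 then (e >>> 7) &&& 127 else 0) |||
  (bif rm.testBit 2 then (e >>> 14) &&& 127 else 0) |||
  (bif rm.testBit 3 then (e >>> 21) &&& 127 else 0) |||
  (bif rm.testBit 4 then (e >>> 28) &&& 127 else 0) |||
  (bif rm.testBit 5 then (e >>> 35) &&& 127 else 0) |||
  (bif rm.testBit 6 then (e >>> 42) &&& 127 else 0)

def nr (e m sh : Nat) : Nat := forceN ((m >>> sh) &&& 127) fun rm => rm ||| orow e rm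

def stepM (e m : Nat) : Nat :=
  (((((nr e m 42 * 128 + nr e m 35) * 128 + nr e m 28) * 128 + nr e m 21) * 128
    + nr e m 14) * 128 + nr e m 7) * 128 + nr e m 0

def clos (e : Nat) : Nat :=
  forceN (stepM e e) fun m1 => forceN (stepM e m1) fun m2 => stepM e m2

theorem or_lt128 {x y : Nat} (hx : x < 128) (hy : y < 128) : x ||| y < 128 := by
  have h : (128:Nat) = 2^7 := by norm_num
  rw [h] at hx hy ⊢
  exact Nat.or_lt_two_pow hx hy

theorem and127_lt (v : Nat) : v &&& 127 < 128 :=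
  Nat.and_lt_two_pow v (show (127:Nat) < 2^7 by norm_num)

theorem cond127_lt (b : Bool) (w : Nat) : (bif b then w &&& 127 else 0) < 128 := by
  cases b
  · simp
  · simpa using and127_lt w

theorem nr_lt (e m sh : Nat) : nr e m sh < 128 := by
  rw [nr, forceN_eq]
  refine or_lt128 (and127_lt _) ?_
  rw [orow]
  exact or_lt128 (or_lt128 (or_lt128 (or_lt128 (or_lt128 (or_lt128 (cond127_lt _ _)
    (cond127_lt _ _)) (cond127_lt _ _)) (cond127_lt _ _)) (cond127_lt _ _))
    (cond127_lt _ _)) (cond127_lt _ _)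

def nrL (e m : Nat) : List Nat :=
  [nr e m 0, nr e m 7, nr e m 14, nr e m 21, nr e m 28, nr e m 35, nr e m 42]

theorem steprow (e m : Nat) (x y : Nat) (hx : x < 7) (hy : y < 7) :
    (stepM e m).testBit (7*x + y) = ((nrL e m).getD x 0).testBit y := by
  interval_cases x
  · simp only [stepM]
    rw [show 7*0+y = y from by omega, peel _ (nr_lt e m 0), if_pos hy]; rfl
  · simp only [stepM]
    rw [show 7*1+y = 7+y from by omega, peel _ (nr_lt e m 0), if_neg (by omega),
      show 7+y-7 = y from by omega, peel _ (nr_lt e m 7), if_pos hy]; rfl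
  · simp only [stepM]
    rw [show 7*2+y = 14+y from by omega, peel _ (nr_lt e m 0), if_neg (by omega),
      show 14+y-7 = 7+y from by omega, peel _ (nr_lt e m 7), if_neg (by omega),
      show 7+y-7 = y from by omega, peel _ (nr_lt e m 14), if_pos hy]; rfl
  · simp only [stepM]
    rw [show 7*3+y = 21+y from by omega, peel _ (nr_lt e m 0), if_neg (by omega),
      show 21+y-7 = 14+y from by omega, peel _ (nr_lt e m 7), if_neg (by omega),
      show 14+y-7 = 7+y from by omega, peel _ (nr_lt e m 14), if_neg (by omega),
      show 7+y-7 = y from by omega, peel _ (nr_lt e m 21), if_pos hy]; rfl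
  · simp only [stepM]
    rw [show 7*4+y = 28+y from by omega, peel _ (nr_lt e m 0), if_neg (by omega),
      show 28+y-7 = 21+y from by omega, peel _ (nr_lt e m 7), if_neg (by omega),
      show 21+y-7 = 14+y from by omega, peel _ (nr_lt e m 14), if_neg (by omega),
      show 14+y-7 = 7+y from by omega, peel _ (nr_lt e m 21), if_neg (by omega),
      show 7+y-7 = y from by omega, peel _ (nr_lt e m 28), if_pos hy]; rfl
  · simp only [stepM]
    rw [show 7*5+y = 35+y from by omega, peel _ (nr_lt e m 0), if_neg (by omega),
      show 35+y-7 = 28+y from by omega, peel _ (nr_lt e m 7), if_neg (by omega),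
      show 28+y-7 = 21+y from by omega, peel _ (nr_lt e m 14), if_neg (by omega),
      show 21+y-7 = 14+y from by omega, peel _ (nr_lt e m 21), if_neg (by omega),
      show 14+y-7 = 7+y from by omega, peel _ (nr_lt e m 28), if_neg (by omega),
      show 7+y-7 = y from by omega, peel _ (nr_lt e m 35), if_pos hy]; rfl
  · simp only [stepM]
    rw [show 7*6+y = 42+y from by omega, peel _ (nr_lt e m 0), if_neg (by omega),
      show 42+y-7 = 35+y from by omega, peel _ (nr_lt e m 7), if_neg (by omega),
      show 35+y-7 = 28+y from by omega, peel _ (nr_lt e m 14), if_neg (by omega),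
      show 28+y-7 = 21+y from by omega, peel _ (nr_lt e m 21), if_neg (by omega),
      show 21+y-7 = 14+y from by omega, peel _ (nr_lt e m 28), if_neg (by omega),
      show 14+y-7 = 7+y from by omega, peel _ (nr_lt e m 35), if_neg (by omega),
      show 7+y-7 = y from by omega]; rfl

theorem nr_bit {e m sh i : Nat} (_hi : i < 7) (h : (nr e m sh).testBit i = true) :
    m.testBit (sh + i) = true ∨
      ∃ z : Fin 7, m.testBit (sh + z.val) = true ∧ e.testBit (7*z.val + i) = true := by
  rw [nr, forceN_eq, Nat.testBit_or, Bool.or_eq_true] at h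
  rcases h with h | h
  · exact Or.inl (band_bit h).1
  · rw [orow] at h
    simp only [Nat.testBit_or, Bool.or_eq_true] at h
    rcases h with ((((((h | h) | h) | h) | h) | h) | h) <;>
      [ (exact Or.inr ⟨⟨0, by omega⟩, (band_bit (cond_bit h).1).1, (band_bit (cond_bit h).2).1⟩);
        (exact Or.inr ⟨⟨1, by omega⟩, (band_bit (cond_bit h).1).1, (band_bit (cond_bit h).2).1⟩);
        (exact Or.inr ⟨⟨2, by omega⟩, (band_bit (cond_bit h).1).1, (band_bit (cond_bit h).2).1⟩);
        (exact Or.inr ⟨⟨3, by omega⟩, (band_bit (cond_bit h).1).1, (band_bit (cond_bit h).2).1⟩);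
        (exact Or.inr ⟨⟨4, by omega⟩, (band_bit (cond_bit h).1).1, (band_bit (cond_bit h).2).1⟩);
        (exact Or.inr ⟨⟨5, by omega⟩, (band_bit (cond_bit h).1).1, (band_bit (cond_bit h).2).1⟩);
        (exact Or.inr ⟨⟨6, by omega⟩, (band_bit (cond_bit h).1).1, (band_bit (cond_bit h).2).1⟩)]

theorem stepM_sound {e m : Nat} (x y : Fin 7)
    (h : (stepM e m).testBit (7*x.val + y.val) = true) :
    m.testBit (7*x.val + y.val) = true ∨
      ∃ z : Fin 7, m.testBit (7*x.val + z.val) = true ∧ e.testBit (7*z.val + y.val) = true := by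
  rw [steprow e m x.val y.val x.isLt y.isLt] at h
  fin_cases x <;> exact nr_bit y.isLt h


def NEL : List (Fin 7 × Fin 7) := [(0,6),(1,5),(2,4),(3,4),(3,5),(3,6),(4,2),(4,3),(5,1),(5,3),(6,0),(6,3)]
def EDL : List (Fin 7 × Fin 7) := [(0,1),(1,0),(0,2),(2,0),(0,3),(3,0),(1,2),(2,1),(1,3),(3,1),(2,3),(3,2),
  (0,4),(4,0),(1,4),(4,1),(0,5),(5,0),(2,5),(5,2),(1,6),(6,1),(2,6),(6,2),(4,5),(5,4),(4,6),(6,4),(5,6),(6,5)]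

def rbit (t : Nat) (x y : Fin 7) : Bool := x == y || t.testBit (7*x.val + y.val)

def acycB (t : Nat) : Bool := (List.finRange 7).all fun x => !(t.testBit (7*x.val + x.val))

def viol (e t : Nat) : Bool :=
  NEL.any fun ab => t.testBit (7*ab.1.val + ab.2.val) &&
    (EDL.any fun uw => e.testBit (7*uw.1.val + uw.2.val) && rbit t uw.1 ab.1 && rbit t ab.2 uw.2)

def triB (p q r : Bool) : Bool := (p && q && !r) || (!p && !q && r)

def triCycB (b0 b1 b2 b3 b4 b5 b6 b7 b8 b9 b10 b11 b12 b13 b14 : Bool) : Bool :=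
  triB b0 b3 b1 || triB b0 b4 b2 || triB b1 b5 b2 || triB b3 b5 b4 ||
  triB b0 b7 b6 || triB b1 b9 b8 || triB b3 b11 b10 || triB b12 b14 b13

def checkB (b0 b1 b2 b3 b4 b5 b6 b7 b8 b9 b10 b11 b12 b13 b14 : Bool) : Bool :=
  triCycB b0 b1 b2 b3 b4 b5 b6 b7 b8 b9 b10 b11 b12 b13 b14 ||
  forceN (ebuild b0 b1 b2 b3 b4 b5 b6 b7 b8 b9 b10 b11 b12 b13 b14) fun e =>
  forceN (clos e) fun t => !(acycB t) || viol e t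

def allB (f : Bool → Bool) : Bool := f false && f true

theorem allB_true {f : Bool → Bool} (h : allB f = true) (b : Bool) : f b = true := by
  have h' := h
  rw [allB, Bool.and_eq_true] at h'
  cases b
  · exact h'.1
  · exact h'.2

theorem chain_of_rtg {V : Type*} {D : V → V → Prop} {x y : V}
    (h : Relation.ReflTransGen D x y) :
    ∃ (k : ℕ) (p : ℕ → V), p 0 = x ∧ p k = y ∧ ∀ i < k, D (p i) (p (i+1)) := by
  induction h with
  | refl => exact ⟨0, fun _ => x, rfl, rfl, by omega⟩
  | @tail b c _ hbc ih =>
    obtain ⟨k, p, h0, hk, hc⟩ := ih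
    refine ⟨k+1, fun i => if i ≤ k then p i else c, by simp [h0], by simp, ?_⟩
    intro i hi
    rcases Nat.lt_or_ge i k with hik | hik
    · simp only [if_pos (by omega : i ≤ k), if_pos (by omega : i + 1 ≤ k)]
      exact hc i hik
    · have : i = k := by omega
      subst this
      simp only [if_pos (le_refl i), if_neg (by omega : ¬ i + 1 ≤ i)]
      rw [hk]
      exact hbc

theorem chain_of_tg {V : Type*} {D : V → V → Prop} {x y : V}
    (h : Relation.TransGen D x y) :
    ∃ (k : ℕ) (p : ℕ → V), 1 ≤ k ∧ p 0 = x ∧ p k = y ∧ ∀ i < k, D (p i) (p (i+1)) := by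
  induction h with
  | @single b hxy =>
    refine ⟨1, fun i => if i = 0 then x else b, le_refl 1, by simp, by simp, ?_⟩
    intro i hi
    have : i = 0 := by omega
    subst this
    simpa using hxy
  | @tail b c _ hbc ih =>
    obtain ⟨k, p, hk1, h0, hk, hc⟩ := ih
    refine ⟨k+1, fun i => if i ≤ k then p i else c, by omega, by simp [h0], by simp, ?_⟩
    intro i hi
    rcases Nat.lt_or_ge i k with hik | hik
    · simp only [if_pos (by omega : i ≤ k), if_pos (by omega : i + 1 ≤ k)]
      exact hc i hik
    · have : i = k := by omega
      subst this
      simp only [if_pos (le_refl i), if_neg (by omega : ¬ i + 1 ≤ i)]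
      rw [hk]
      exact hbc

theorem chain_concat {V : Type*} {D : V → V → Prop} {k1 k2 : ℕ} {p q : ℕ → V}
    (hp : ∀ i < k1, D (p i) (p (i+1))) (hq : ∀ i < k2, D (q i) (q (i+1)))
    (hj : p k1 = q 0) :
    ∃ r : ℕ → V, (∀ i ≤ k1, r i = p i) ∧ (∀ j ≤ k2, r (k1+j) = q j) ∧
      ∀ i < k1+k2, D (r i) (r (i+1)) := by
  refine ⟨fun i => if i ≤ k1 then p i else q (i - k1), fun i hi => by simp [hi], ?_, ?_⟩
  · intro j hj2
    rcases Nat.eq_zero_or_pos j with h0 | h0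
    · subst h0
      simp [hj]
    · simp only [if_neg (by omega : ¬ k1 + j ≤ k1)]
      congr 1
      omega
  · intro i hi
    rcases Nat.lt_or_ge i k1 with hik | hik
    · simp only [if_pos (by omega : i ≤ k1), if_pos (by omega : i + 1 ≤ k1)]
      exact hp i hik
    · rcases Nat.eq_or_lt_of_le hik with heq | hgt
      · subst heq
        simp only [if_pos (le_refl k1), if_neg (by omega : ¬ k1 + 1 ≤ k1)]
        rw [hj, show k1 + 1 - k1 = 1 from by omega]
        exact hq 0 (by omega)
      · simp only [if_neg (by omega : ¬ i ≤ k1), if_neg (by omega : ¬ i + 1 ≤ k1)]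
        rw [show i + 1 - k1 = (i - k1) + 1 from by omega]
        exact hq (i - k1) (by omega)

theorem semiKey {V : Type*} {G : SimpleGraph V} {D : V → V → Prop}
    (hst : IsSemiTransitiveOrientation G D) {u w a b : V}
    (huw : D u w) (hua : Relation.ReflTransGen D u a)
    (hab : Relation.TransGen D a b) (hbw : Relation.ReflTransGen D b w) : D a b := by
  obtain ⟨k1, p, hp0, hpk, hpc⟩ := chain_of_rtg hua
  obtain ⟨k2, q, hk2, hq0, hqk, hqc⟩ := chain_of_tg hab
  obtain ⟨k3, s, hs0, hsk, hsc⟩ := chain_of_rtg hbw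
  rcases Nat.lt_or_ge k2 2 with h2 | h2
  · have hk21 : k2 = 1 := by omega
    have := hqc 0 (by omega)
    rw [hq0, show (0:ℕ)+1 = k2 from by omega, hqk] at this
    exact this
  · obtain ⟨r1, hr1p, hr1q, hr1c⟩ := chain_concat hpc hqc (hpk.trans hq0.symm)
    obtain ⟨r, hrl, hrr, hrc⟩ := chain_concat hr1c hsc
      (by rw [hr1q k2 (le_refl k2), hqk, hs0])
    have hr0 : r 0 = u := by rw [hrl 0 (by omega), hr1p 0 (by omega), hp0]
    have hrend : r (k1+k2+k3) = w := by rw [hrr k3 (le_refl k3), hsk]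
    have hra : r k1 = a := by
      rw [hrl k1 (by omega), hr1p k1 (le_refl k1), hpk]
    have hrb : r (k1+k2) = b := by
      rw [hrl (k1+k2) (le_refl _), hr1q k2 (le_refl k2), hqk]
    rcases hst.2.2 (k1+k2+k3) r (by omega) hrc with hna | hall
    · exfalso
      rw [hr0, hrend] at hna
      exact hna (hst.1.1 u w huw)
    · have := hall k1 (k1+k2) (by omega) (by omega)
      rwa [hra, hrb] at this

noncomputable def dB (D : Fin 7 → Fin 7 → Prop) (u v : Fin 7) : Bool :=
  @decide (D u v) (Classical.propDecidable _)

theorem dB_true {D : Fin 7 → Fin 7 → Prop} {u v : Fin 7} : dB D u v = true ↔ D u v := by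
  simp [dB]

theorem dB_false {D : Fin 7 → Fin 7 → Prop} {u v : Fin 7} : dB D u v = false ↔ ¬ D u v := by
  simp [dB]

instance inst_s7 : DecidableRel A3.Adj := fun x y =>
  decidable_of_iff (x ≠ y ∧ ((x, y) ∈ ([(0,1),(0,2),(0,3),(1,2),(1,3),(2,3),
      (0,4),(1,4),(0,5),(2,5),(1,6),(2,6),(4,5),(4,6),(5,6)] : List (Fin 7 × Fin 7)) ∨
    (y, x) ∈ ([(0,1),(0,2),(0,3),(1,2),(1,3),(2,3),
      (0,4),(1,4),(0,5),(2,5),(1,6),(2,6),(4,5),(4,6),(5,6)] : List (Fin 7 × Fin 7))))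
    (by rw [A3]
        exact (SimpleGraph.fromRel_adj (fun a b => (a, b) ∈ ([(0,1),(0,2),(0,3),(1,2),(1,3),(2,3),
          (0,4),(1,4),(0,5),(2,5),(1,6),(2,6),(4,5),(4,6),(5,6)] : List (Fin 7 × Fin 7))) x y).symm)

theorem core : allB (fun b0 => allB fun b1 => allB fun b2 => allB fun b3 => allB fun b4 =>
    allB fun b5 => allB fun b6 => allB fun b7 => allB fun b8 => allB fun b9 => allB fun b10 =>
    allB fun b11 => allB fun b12 => allB fun b13 => allB fun b14 =>
    checkB b0 b1 b2 b3 b4 b5 b6 b7 b8 b9 b10 b11 b12 b13 b14) = true := by decide +kernel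

/-- The graph `A₃` admits no semi-transitive orientation. -/
theorem stmt7 : ¬ ∃ D : Fin 7 → Fin 7 → Prop, IsSemiTransitiveOrientation A3 D := by
  rintro ⟨D, hst⟩
  obtain ⟨⟨hD1, hD2, hD3⟩, hacyc, -⟩ := id hst
  have hcheck : checkB (dB D 0 1) (dB D 0 2) (dB D 0 3) (dB D 1 2) (dB D 1 3) (dB D 2 3) (dB D 0 4) (dB D 1 4) (dB D 0 5) (dB D 2 5) (dB D 1 6) (dB D 2 6) (dB D 4 5) (dB D 4 6) (dB D 5 6) = true :=
    allB_true (allB_true (allB_true (allB_true (allB_true (allB_true (allB_true (allB_true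
      (allB_true (allB_true (allB_true (allB_true (allB_true (allB_true (allB_true
      core _) _) _) _) _) _) _) _) _) _) _) _) _) _) _
  set eD := ebuild (dB D 0 1) (dB D 0 2) (dB D 0 3) (dB D 1 2) (dB D 1 3) (dB D 2 3) (dB D 0 4) (dB D 1 4) (dB D 0 5) (dB D 2 5) (dB D 1 6) (dB D 2 6) (dB D 4 5) (dB D 4 6) (dB D 5 6) with heD
  set tD := clos eD with htD
  have hE : ∀ x y : Fin 7, eD.testBit (7*x.val + y.val) = true → D x y := by
    intro x y h
    rw [heD, ebuild_sem] at h
    fin_cases x <;> fin_cases y <;>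
      simp only [EB, rowsEB, List.getD_cons_zero, List.getD_cons_succ, Bool.not_eq_true',
        dB_true, dB_false, Fin.isValue, Fin.val_zero, Fin.val_one] at h <;>
      first
        | exact h
        | exact (hD2 _ _ (by decide)).resolve_left h
        | exact absurd h (by simp)
  have hsound : ∀ x y : Fin 7, tD.testBit (7*x.val + y.val) = true → Relation.TransGen D x y := by
    have hbase : ∀ x y : Fin 7, eD.testBit (7*x.val + y.val) = true → Relation.TransGen D x y :=
      fun x y h => Relation.TransGen.single (hE x y h)
    have hstep : ∀ (m : Nat),
        (∀ x y : Fin 7, m.testBit (7*x.val + y.val) = true → Relation.TransGen D x y) →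
        ∀ x y : Fin 7, (stepM eD m).testBit (7*x.val + y.val) = true → Relation.TransGen D x y := by
      intro m hm x y h
      rcases stepM_sound x y h with h1 | ⟨z, hz1, hz2⟩
      · exact hm x y h1
      · exact (hm x z hz1).tail (hE z y hz2)
    have hclos : tD = stepM eD (stepM eD (stepM eD eD)) := by
      rw [htD]; simp only [clos, forceN_eq]
    rw [hclos]
    exact hstep _ (hstep _ (hstep _ hbase))
  have hglue : ∀ {x y z : Fin 7}, D x y → D y z → D z x → False := fun hxy hyz hzx =>
    hacyc _ (Relation.TransGen.head hxy (Relation.TransGen.head hyz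
      (Relation.TransGen.single hzx)))
  have hflip : ∀ {u v : Fin 7}, A3.Adj u v → ¬ D u v → D v u := fun hadj hn =>
    (hD2 _ _ hadj).resolve_left hn
  have htri : triCycB (dB D 0 1) (dB D 0 2) (dB D 0 3) (dB D 1 2) (dB D 1 3) (dB D 2 3) (dB D 0 4) (dB D 1 4) (dB D 0 5) (dB D 2 5) (dB D 1 6) (dB D 2 6) (dB D 4 5) (dB D 4 6) (dB D 5 6) = false := by
    by_contra hcon
    have hcon' : triCycB (dB D 0 1) (dB D 0 2) (dB D 0 3) (dB D 1 2) (dB D 1 3) (dB D 2 3) (dB D 0 4) (dB D 1 4) (dB D 0 5) (dB D 2 5) (dB D 1 6) (dB D 2 6) (dB D 4 5) (dB D 4 6) (dB D 5 6) = true := by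
      revert hcon; cases triCycB (dB D 0 1) (dB D 0 2) (dB D 0 3) (dB D 1 2) (dB D 1 3) (dB D 2 3) (dB D 0 4) (dB D 1 4) (dB D 0 5) (dB D 2 5) (dB D 1 6) (dB D 2 6) (dB D 4 5) (dB D 4 6) (dB D 5 6) <;> simp
    simp only [triCycB, triB, Bool.or_eq_true, Bool.and_eq_true, Bool.not_eq_true',
      dB_true, dB_false] at hcon'
    rcases hcon' with ((((((((⟨⟨h1,h2⟩,h3⟩|⟨⟨h1,h2⟩,h3⟩)|(⟨⟨h1,h2⟩,h3⟩|⟨⟨h1,h2⟩,h3⟩))|(⟨⟨h1,h2⟩,h3⟩|⟨⟨h1,h2⟩,h3⟩))|(⟨⟨h1,h2⟩,h3⟩|⟨⟨h1,h2⟩,h3⟩))|(⟨⟨h1,h2⟩,h3⟩|⟨⟨h1,h2⟩,h3⟩))|(⟨⟨h1,h2⟩,h3⟩|⟨⟨h1,h2⟩,h3⟩))|(⟨⟨h1,h2⟩,h3⟩|⟨⟨h1,h2⟩,h3⟩))|(⟨⟨h1,h2⟩,h3⟩|⟨⟨h1,h2⟩,h3⟩)) <;>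
      first
        | exact hglue h1 h2 (hflip (by decide) h3)
        | exact hglue h3 (hflip (by decide) h2) (hflip (by decide) h1)
  have hacycB : acycB tD = true := by
    rw [acycB, List.all_eq_true]
    intro x _
    by_contra hcon
    have hcon' : tD.testBit (7*x.val + x.val) = true := by
      revert hcon; cases tD.testBit (7*x.val + x.val) <;> simp
    exact hacyc x (hsound x x hcon')
  have hviol : viol eD tD = false := by
    by_contra hcon
    have hv : viol eD tD = true := by
      revert hcon; cases viol eD tD <;> simp
    rw [viol, List.any_eq_true] at hv
    obtain ⟨ab, habmem, hab⟩ := hv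
    rw [Bool.and_eq_true, List.any_eq_true] at hab
    obtain ⟨hT, uw, _huwmem, huw⟩ := hab
    rw [Bool.and_eq_true, Bool.and_eq_true] at huw
    obtain ⟨⟨hEuw, hru⟩, hrb⟩ := huw
    have hDuw : D uw.1 uw.2 := hE _ _ hEuw
    have hTab : Relation.TransGen D ab.1 ab.2 := hsound _ _ hT
    have hRua : Relation.ReflTransGen D uw.1 ab.1 := by
      rw [rbit, Bool.or_eq_true] at hru
      rcases hru with h | h
      · exact (beq_iff_eq.mp h) ▸ Relation.ReflTransGen.refl
      · exact (hsound _ _ h).to_reflTransGen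
    have hRbw : Relation.ReflTransGen D ab.2 uw.2 := by
      rw [rbit, Bool.or_eq_true] at hrb
      rcases hrb with h | h
      · exact (beq_iff_eq.mp h) ▸ Relation.ReflTransGen.refl
      · exact (hsound _ _ h).to_reflTransGen
    have hDab : D ab.1 ab.2 := semiKey hst hDuw hRua hTab hRbw
    have hne : ∀ p ∈ NEL, ¬ A3.Adj p.1 p.2 := by decide
    exact hne ab habmem (hD1 _ _ hDab)
  have hfin : checkB (dB D 0 1) (dB D 0 2) (dB D 0 3) (dB D 1 2) (dB D 1 3) (dB D 2 3) (dB D 0 4) (dB D 1 4) (dB D 0 5) (dB D 2 5) (dB D 1 6) (dB D 2 6) (dB D 4 5) (dB D 4 6) (dB D 5 6) = false := by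
    simp only [checkB, forceN_eq]
    rw [← heD, ← htD, htri, hacycB, hviol]
    rfl
  rw [hcheck] at hfin
  exact absurd hfin (by simp)
end

section
/- The graph B_4 is not word-representable. -/
/-- The graph `B₄` on vertices `{1,…,8}` (vertex `i` of the paper is `i - 1` here):
a clique on `{1,2,3,4}` together with the edges
`{1,5},{1,6},{1,7},{1,8},{2,5},{2,8},{3,7},{3,8},{5,6},{5,7},{5,8},{6,7},{6,8},{7,8}`. -/
def B4 : SimpleGraph (Fin 8) :=
  SimpleGraph.fromRel (fun a b => (a, b) ∈
    ([(0,1),(0,2),(0,3),(1,2),(1,3),(2,3),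
      (0,4),(0,5),(0,6),(0,7),(1,4),(1,7),(2,6),(2,7),
      (4,5),(4,6),(4,7),(5,6),(5,7),(6,7)] : List (Fin 8 × Fin 8)))

open List

namespace NB4

variable {α : Type*} [DecidableEq α]

theorem filter_dedup (q : α → Bool) : ∀ (l : List α), (l.filter q).dedup = l.dedup.filter q := by
  intro l
  induction l with
  | nil => simp
  | cons a t ih =>
    by_cases hm : a ∈ t
    · rw [dedup_cons_of_mem hm]
      by_cases hq : q a
      · rw [filter_cons_of_pos hq, dedup_cons_of_mem (mem_filter.mpr ⟨hm, hq⟩), ih]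
      · rw [filter_cons_of_neg (by simpa using hq), ih]
    · rw [dedup_cons_of_notMem hm]
      by_cases hq : q a
      · rw [filter_cons_of_pos hq, filter_cons_of_pos hq,
          dedup_cons_of_notMem (fun h => hm (mem_of_mem_filter h)), ih]
      · rw [filter_cons_of_neg (by simpa using hq), filter_cons_of_neg (by simpa using hq), ih]

theorem dedup_alt {x y : α} (hxy : x ≠ y) :
    ∀ (u : List α), u.Chain' (· ≠ ·) → (∀ z ∈ u, z = x ∨ z = y) → x ∈ u → y ∈ u →
      ∃ a b, a ≠ b ∧ u.dedup = [a, b] ∧ u.getLast? = some b := by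
  intro u
  induction u with
  | nil => intro _ _ hx; exact absurd hx (by simp)
  | cons a t ih =>
    intro hch hel hx hy
    match t, hch, hel, hx, hy with
    | [], _, hel, hx, hy =>
      simp only [mem_singleton] at hx hy; exact absurd (hx.trans hy.symm) hxy
    | [b], hch, hel, hx, hy =>
      have hab : a ≠ b := (isChain_cons_cons.mp hch).1
      refine ⟨a, b, hab, ?_, rfl⟩
      rw [dedup_cons_of_notMem (by simpa using hab), dedup_cons_of_notMem (by simp)]
      simp
    | b :: c :: t, hch, hel, hx, hy =>
      have hab : a ≠ b := (isChain_cons_cons.mp hch).1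
      have hbc : b ≠ c := (isChain_cons_cons.mp (isChain_cons_cons.mp hch).2).1
      have hca : c = a := by
        rcases hel a (by simp) with ha | ha <;> rcases hel b (by simp) with hb | hb <;>
          rcases hel c (by simp) with hc | hc <;> simp_all
      have hmem : a ∈ b :: c :: t := by rw [← hca]; simp
      have hx' : x ∈ b :: c :: t := by
        rcases mem_cons.mp hx with h | h
        · rw [h, ← hca]; simp
        · exact h
      have hy' : y ∈ b :: c :: t := by
        rcases mem_cons.mp hy with h | h
        · rw [h, ← hca]; simp
        · exact h
      obtain ⟨a', b', h1, h2, h3⟩ := ih (isChain_cons_cons.mp hch).2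
        (fun z hz => hel z (mem_cons_of_mem _ hz)) hx' hy'
      exact ⟨a', b', h1, by rw [dedup_cons_of_mem hmem, h2], by rw [getLast?_cons_cons, h3]⟩

theorem alternates_append_dedup {w : List α} {x y : α} (hxy : x ≠ y)
    (hx : x ∈ w) (hy : y ∈ w) :
    Alternates (w ++ w.dedup) x y ↔ Alternates w x y := by
  unfold Alternates
  rw [filter_append, ← filter_dedup]
  set u := w.filter (fun z => decide (z = x ∨ z = y)) with hu
  have hxu : x ∈ u := mem_filter.mpr ⟨hx, by simp⟩
  have hyu : y ∈ u := mem_filter.mpr ⟨hy, by simp⟩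
  have hel : ∀ z ∈ u, z = x ∨ z = y := fun z hz => by
    have := (mem_filter.mp hz).2; simpa using this
  constructor
  · exact fun h => (isChain_append.mp h).1
  · intro h
    obtain ⟨a, b, h1, h2, h3⟩ := dedup_alt hxy u h hel hxu hyu
    simp only [Chain']; rw [isChain_append, h2, h3]
    refine ⟨h, by simpa using h1, ?_⟩
    intro z hz v hv
    simp only [Option.mem_def, Option.some.injEq] at hz
    simp only [head?_cons, Option.mem_def, Option.some.injEq] at hv
    rw [← hz, ← hv]
    exact h1.symm

abbrev V8 := Fin 8

/-- glue a list of blocks with separator `0`. -/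
def glue : List (List V8) → List V8
  | [] => []
  | [b] => b
  | b :: c :: R => b ++ 0 :: glue (c :: R)

theorem glue_cons_cons (b c : List V8) (R : List (List V8)) :
    glue (b :: c :: R) = b ++ 0 :: glue (c :: R) := rfl

theorem exists_glue : ∀ w : List V8, ∃ b R, w = glue (b :: R) ∧
    (∀ l ∈ b :: R, (0 : V8) ∉ l) ∧ (b :: R).length = w.count 0 + 1 := by
  intro w
  induction w with
  | nil => exact ⟨[], [], rfl, by simp, by simp⟩
  | cons a t ih =>
    obtain ⟨b, R, h1, h2, h3⟩ := ih
    by_cases ha : a = 0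
    · subst ha
      refine ⟨[], b :: R, by rw [glue_cons_cons]; simpa using h1, ?_, ?_⟩
      · intro l hl
        rcases mem_cons.mp hl with h | h
        · subst h; simp
        · exact h2 l h
      · simp only [length_cons] at h3 ⊢
        rw [count_cons_self, ← h3]
    · refine ⟨a :: b, R, ?_, ?_, ?_⟩
      · cases R with
        | nil => simpa [glue] using congrArg (a :: ·) h1
        | cons c R' => rw [glue_cons_cons] at h1 ⊢; simpa using congrArg (a :: ·) h1
      · intro l hl
        rcases mem_cons.mp hl with h | h
        · subst h
          simp only [mem_cons]
          push_neg
          exact ⟨fun h => ha h.symm, h2 b (by simp)⟩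
        · exact h2 l (mem_cons_of_mem _ h)
      · simp only [length_cons] at h3 ⊢
        rw [count_cons_of_ne ha, ← h3]

/-- filtering (with a predicate false at 0) through glue -/
theorem filter_glue_eq {p : V8 → Bool} (hp : p 0 = false) :
    ∀ B : List (List V8), B ≠ [] → (∀ l ∈ B, (0 : V8) ∉ l) →
      (glue B).filter p = (B.map (List.filter p)).flatten := by
  intro B
  induction B with
  | nil => simp
  | cons b R ih =>
    intro _ h0
    cases R with
    | nil => simp [glue]
    | cons c R' =>
      rw [glue_cons_cons, filter_append, filter_cons_of_neg (by simp [hp])]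
      rw [ih (by simp) (fun l hl => h0 l (mem_cons_of_mem _ hl))]
      simp

theorem filter_zero_free {v : V8} {b : List V8} (h0 : (0 : V8) ∉ b) :
    b.filter (fun z => decide (z = 0 ∨ z = v)) = replicate (b.count v) v := by
  rw [filter_congr (q := fun z => decide (z = v))
    (fun z hz => by
      have : z ≠ 0 := fun h => h0 (h ▸ hz)
      simp [this])]
  exact filter_eq (l := b) v
theorem chain'_replicate_le {v : V8} {k : ℕ} (h : (replicate k v).Chain' (· ≠ ·)) : k ≤ 1 := by
  match k with
  | 0 => simp
  | 1 => simp
  | k + 2 =>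
    simp only [Chain'] at h; rw [replicate_succ, replicate_succ, isChain_cons_cons] at h
    exact absurd rfl h.1

theorem alt0 {v : V8} (hv : v ≠ 0) :
    ∀ (M : List (List V8)) (b₀ b₁ : List V8), (∀ l ∈ b₀ :: (M ++ [b₁]), (0:V8) ∉ l) →
    ((glue (b₀ :: (M ++ [b₁]))).filter (fun z => decide (z = 0 ∨ z = v))).Chain' (· ≠ ·) →
    (∀ b ∈ M, b.count v = 1) ∧ b₀.count v ≤ 1 ∧ b₁.count v ≤ 1 := by
  intro M
  induction M with
  | nil =>
    intro b₀ b₁ h0 hch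
    have h00 : (0:V8) ∉ b₀ := h0 b₀ (by simp)
    have h01 : (0:V8) ∉ b₁ := h0 b₁ (by simp)
    rw [show (b₀ :: ([] ++ [b₁]) : List (List V8)) = b₀ :: b₁ :: [] by simp] at hch
    rw [glue_cons_cons, show glue [b₁] = b₁ from rfl, filter_append,
      filter_cons_of_pos (by simp),
      filter_zero_free h00, filter_zero_free h01] at hch
    obtain ⟨c1, c2, _⟩ := isChain_append.mp hch
    exact ⟨by simp, chain'_replicate_le c1, chain'_replicate_le c2.tail⟩
  | cons m M' ih =>
    intro b₀ b₁ h0 hch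
    have h00 : (0:V8) ∉ b₀ := h0 b₀ (by simp)
    have h0m : (0:V8) ∉ m := h0 m (by simp)
    rw [show (b₀ :: ((m :: M') ++ [b₁]) : List (List V8)) = b₀ :: m :: (M' ++ [b₁]) by simp,
      glue_cons_cons, filter_append, filter_cons_of_pos (by simp),
      filter_zero_free h00] at hch
    obtain ⟨c1, c2, _⟩ := isChain_append.mp hch
    have hk0 : b₀.count v ≤ 1 := chain'_replicate_le c1
    have hGch : ((glue (m :: (M' ++ [b₁]))).filter
        (fun z => decide (z = 0 ∨ z = v))).Chain' (· ≠ ·) := c2.tail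
    obtain ⟨hM', hm, hb₁⟩ := ih m b₁ (fun l hl => h0 l (mem_cons_of_mem _ hl)) hGch
    -- now show count v m ≥ 1
    obtain ⟨c, L, hcL⟩ : ∃ c L, M' ++ [b₁] = c :: L := by
      cases M' with
      | nil => exact ⟨b₁, [], rfl⟩
      | cons a t => exact ⟨a, t ++ [b₁], by simp⟩
    have hcnt : 1 ≤ m.count v := by
      by_contra hlt
      push_neg at hlt
      interval_cases h : m.count v
      · rw [hcL, glue_cons_cons, filter_append, filter_zero_free h0m, h] at c2
        rw [filter_cons_of_pos (by simp)] at c2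
        simp only [replicate_zero, nil_append] at c2
        rw [isChain_cons_cons] at c2
        exact c2.1 rfl
    refine ⟨?_, hk0, hb₁⟩
    intro b hb
    rcases mem_cons.mp hb with h | h
    · subst h; omega
    · exact hM' b h

def F (x y : V8) (b : List V8) : List V8 := b.filter (fun z => decide (z = x ∨ z = y))

theorem Fcomm (x y : V8) (b : List V8) : F x y b = F y x b :=
  filter_congr (fun z _ => by simp [or_comm])

theorem FE0 {x y : V8} {b : List V8} (hx : x ∉ b) (hy : y ∉ b) : F x y b = [] := by
  rw [F, filter_eq_nil_iff]
  intro a ha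
  simp only [decide_eq_true_eq]
  rintro (rfl | rfl)
  exacts [hx ha, hy ha]

theorem FE1 {x y : V8} {b : List V8} (hx : x ∈ b) (hy : y ∉ b) (hc : b.count x ≤ 1) :
    F x y b = [x] := by
  have h1 : F x y b = b.filter (fun z => decide (z = x)) := by
    apply filter_congr
    intro z hz
    have : z ≠ y := fun h => hy (h ▸ hz)
    simp [this]
  rw [h1, filter_eq]
  have : b.count x = 1 := le_antisymm hc (count_pos_iff.mpr hx)
  rw [this, replicate_one]

theorem FE2 {x y : V8} (hxy : x ≠ y) :
    ∀ {b : List V8}, x ∈ b → y ∈ b → b.count x ≤ 1 → b.count y ≤ 1 →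
      b.idxOf x < b.idxOf y → F x y b = [x, y] := by
  intro b
  induction b with
  | nil => intro hx; exact absurd hx (by simp)
  | cons a t ih =>
    intro hx hy hcx hcy hlt
    rcases eq_or_ne x a with rfl | hax'
    · 
      have hxt : x ∉ t := by
        rw [count_cons_self] at hcx
        exact count_eq_zero.mp (by omega)
      have hyt : y ∈ t := by
        rcases mem_cons.mp hy with h | h
        · exact absurd h hxy.symm
        · exact h
      have : F x y (x :: t) = x :: F x y t := filter_cons_of_pos (by simp)
      rw [this, Fcomm, FE1 hyt hxt (by rwa [count_cons_of_ne hxy] at hcy)]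
    · rcases eq_or_ne y a with rfl | hay'
      · 
        rw [idxOf_cons_self, idxOf_cons_ne t (Ne.symm hax')] at hlt
        omega
      · have hxt : x ∈ t := (mem_cons.mp hx).resolve_left hax'
        have hyt : y ∈ t := (mem_cons.mp hy).resolve_left hay'
        have heq : F x y (a :: t) = F x y t := filter_cons_of_neg (by simp [Ne.symm hax', Ne.symm hay'])
        rw [idxOf_cons_ne t (Ne.symm hax'), idxOf_cons_ne t (Ne.symm hay')] at hlt
        rw [heq]
        refine ih hxt hyt ?_ ?_ (by omega)
        · rwa [count_cons_of_ne (Ne.symm hax')] at hcx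
        · rwa [count_cons_of_ne (Ne.symm hay')] at hcy

theorem idx_inj {x y : V8} {b : List V8} (hx : x ∈ b) (hy : y ∈ b)
    (h : b.idxOf x = b.idxOf y) : x = y := by
  have h1 := getElem_idxOf (idxOf_lt_length_iff.mpr hx)
  have h2 := getElem_idxOf (idxOf_lt_length_iff.mpr hy)
  rw [← h1, ← h2]
  congr 1

theorem idx_total {x y : V8} {b : List V8} (hx : x ∈ b) (hy : y ∈ b) (hxy : x ≠ y) :
    b.idxOf x < b.idxOf y ∨ b.idxOf y < b.idxOf x := by
  rcases Nat.lt_trichotomy (b.idxOf x) (b.idxOf y) with h | h | h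
  · exact Or.inl h
  · exact absurd (idx_inj hx hy h) hxy
  · exact Or.inr h

theorem FIFF {x y : V8} {b : List V8} (hxy : x ≠ y) (hx : x ∈ b) (hy : y ∈ b)
    (hcx : b.count x ≤ 1) (hcy : b.count y ≤ 1) :
    b.idxOf x < b.idxOf y ↔ F x y b = [x, y] := by
  constructor
  · exact FE2 hxy hx hy hcx hcy
  · intro hF
    rcases idx_total hx hy hxy with h | h
    · exact h
    · have := FE2 hxy.symm hy hx hcy hcx h
      rw [Fcomm] at hF
      rw [this] at hF
      injection hF with h1 _
      exact absurd h1 hxy.symm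

theorem CHF {x y : V8} {b : List V8} (hxy : x ≠ y) (hcx : b.count x ≤ 1)
    (hcy : b.count y ≤ 1) : (F x y b).Chain' (· ≠ ·) := by
  by_cases hx : x ∈ b <;> by_cases hy : y ∈ b
  · rcases idx_total hx hy hxy with h | h
    · rw [FE2 hxy hx hy hcx hcy h]; exact isChain_pair.mpr hxy
    · rw [Fcomm, FE2 hxy.symm hy hx hcy hcx h]; exact isChain_pair.mpr hxy.symm
  · rw [FE1 hx hy hcx]; simp [Chain']
  · rw [Fcomm, FE1 hy hx hcy]; simp [Chain']
  · rw [FE0 hx hy]; simp [Chain']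

theorem head?_flatten_const {x y : V8} {M : List (List V8)} (hM : M ≠ [])
    (hall : ∀ b ∈ M, F x y b = [x, y]) : ((M.map (F x y)).flatten).head? = some x := by
  match M, hM with
  | m :: M', _ =>
    have := hall m (by simp)
    simp [this]

theorem getLast?_flatten_const {x y : V8} : ∀ {M : List (List V8)}, M ≠ [] →
    (∀ b ∈ M, F x y b = [x, y]) → ((M.map (F x y)).flatten).getLast? = some y := by
  intro M
  induction M with
  | nil => simp
  | cons m M' ih =>
    intro _ hall
    cases M' with
    | nil => simp [hall m (by simp)]
    | cons m' M'' =>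
      have hrest := ih (by simp) (fun b hb => hall b (mem_cons_of_mem _ hb))
      rw [map_cons, flatten_cons, getLast?_append, hrest]
      rfl

theorem chain'_flatten_const {x y : V8} (hxy : x ≠ y) : ∀ {M : List (List V8)},
    (∀ b ∈ M, F x y b = [x, y]) → ((M.map (F x y)).flatten).Chain' (· ≠ ·) := by
  intro M
  induction M with
  | nil => simp [Chain']
  | cons m M' ih =>
    intro hall
    simp only [Chain']; rw [map_cons, flatten_cons, isChain_append]
    refine ⟨by rw [hall m (by simp)]; exact isChain_pair.mpr hxy,
      ih (fun b hb => hall b (mem_cons_of_mem _ hb)), ?_⟩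
    intro u hu v hv
    cases M' with
    | nil => simp at hv
    | cons m' M'' =>
      rw [head?_flatten_const (by simp) (fun b hb => hall b (mem_cons_of_mem _ hb))] at hv
      rw [hall m (by simp)] at hu
      simp only [Option.mem_def, Option.some.injEq] at hu hv
      have : u = y := Eq.symm (by simpa using hu)
      rw [this, ← hv]
      exact hxy.symm

theorem blocks_eq {x y : V8} (hxy : x ≠ y) : ∀ (M : List (List V8)) (m : List V8),
    (((m :: M).map (F x y)).flatten).Chain' (· ≠ ·) →
    (∀ b ∈ m :: M, F x y b = [x, y] ∨ F x y b = [y, x]) →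
    ∀ b ∈ M, F x y b = F x y m := by
  intro M
  induction M with
  | nil => intro m _ _ b hb; exact absurd hb (by simp)
  | cons m' M' ih =>
    intro m hch hall b hb
    rw [map_cons, flatten_cons] at hch
    have hch2 := (isChain_append.mp hch).2.1
    have hjun := (isChain_append.mp hch).2.2
    have heq : F x y m' = F x y m := by
      rcases hall m (by simp) with h1 | h1 <;> rcases hall m' (by simp) with h2 | h2 <;>
        rw [h1, h2]
      · exfalso
        have hh : (((m' :: M').map (F x y)).flatten).head? = some y := by
          rw [map_cons, flatten_cons, h2]; rfl
        have hl : (F x y m).getLast? = some y := by rw [h1]; rfl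
        exact hjun y hl y hh rfl
      · exfalso
        have hh : (((m' :: M').map (F x y)).flatten).head? = some x := by
          rw [map_cons, flatten_cons, h2]; rfl
        have hl : (F x y m).getLast? = some x := by rw [h1]; rfl
        exact hjun x hl x hh rfl
    rcases mem_cons.mp hb with h | h
    · rw [h, heq]
    · rw [ih m' hch2 (fun c hc => hall c (mem_cons_of_mem _ hc)) b h, heq]

theorem edgeL {x z : V8} (hxz : x ≠ z) {b₀ b₁ : List V8} {M : List (List V8)} (hM : M ≠ [])
    (hch : (F x z b₀ ++ (((M.map (F x z)).flatten) ++ F x z b₁)).Chain' (· ≠ ·))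
    (hblocks : ∀ b ∈ M, F x z b = [x, z])
    (hcx : b₀.count x ≤ 1) (hcz : b₀.count z ≤ 1)
    (hx : x ∈ b₀) : z ∈ b₀ ∧ b₀.idxOf x < b₀.idxOf z := by
  have hjun := (isChain_append.mp hch).2.2
  have hhead : ((((M.map (F x z)).flatten) ++ F x z b₁)).head? = some x := by
    rw [head?_append, head?_flatten_const hM hblocks]; rfl
  have hnotlast : (F x z b₀).getLast? ≠ some x := fun h => (hjun x h x hhead) rfl
  by_cases hz : z ∈ b₀
  · rcases idx_total hx hz hxz with h | h
    · exact ⟨hz, h⟩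
    · exact absurd (by rw [Fcomm, FE2 hxz.symm hz hx hcz hcx h]; rfl) hnotlast
  · exact absurd (by rw [FE1 hx hz hcx]; rfl) hnotlast

theorem edgeR {x z : V8} (hxz : x ≠ z) {b₀ b₁ : List V8} {M : List (List V8)} (hM : M ≠ [])
    (hch : (F x z b₀ ++ (((M.map (F x z)).flatten) ++ F x z b₁)).Chain' (· ≠ ·))
    (hblocks : ∀ b ∈ M, F x z b = [x, z])
    (hcx : b₁.count x ≤ 1) (hcz : b₁.count z ≤ 1)
    (hz : z ∈ b₁) : x ∈ b₁ ∧ b₁.idxOf x < b₁.idxOf z := by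
  have hch2 := (isChain_append.mp hch).2.1
  have hjun := (isChain_append.mp hch2).2.2
  have hlast : ((M.map (F x z)).flatten).getLast? = some z := getLast?_flatten_const hM hblocks
  have hnothead : (F x z b₁).head? ≠ some z := fun h => (hjun z hlast z h) rfl
  by_cases hxm : x ∈ b₁
  · rcases idx_total hxm hz hxz with h | h
    · exact ⟨hxm, h⟩
    · exact absurd (by rw [Fcomm, FE2 hxz.symm hz hxm hcz hcx h]; rfl) hnothead
  · exact absurd (by rw [Fcomm, FE1 hz hxm hcz]; rfl) hnothead

/-- all-[x,y] blocks for a pair, from one block plus alternation -/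
theorem pair_blocks {x y : V8} (hxy : x ≠ y) {b₀ b₁ m₀ : List V8} {M' : List (List V8)}
    (hc : ∀ b ∈ m₀ :: M', b.count x = 1 ∧ b.count y = 1)
    (halt : (F x y b₀ ++ ((((m₀ :: M').map (F x y)).flatten) ++ F x y b₁)).Chain' (· ≠ ·))
    (hord : m₀.idxOf x < m₀.idxOf y) :
    ∀ b ∈ m₀ :: M', F x y b = [x, y] := by
  have hmem : ∀ b ∈ m₀ :: M', x ∈ b ∧ y ∈ b := fun b hb =>
    ⟨count_pos_iff.mp (by rw [(hc b hb).1]; norm_num),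
     count_pos_iff.mp (by rw [(hc b hb).2]; norm_num)⟩
  have hm₀ : F x y m₀ = [x, y] :=
    FE2 hxy (hmem m₀ (by simp)).1 (hmem m₀ (by simp)).2
      (le_of_eq (hc m₀ (by simp)).1) (le_of_eq (hc m₀ (by simp)).2) hord
  have hflat : (((m₀ :: M').map (F x y)).flatten).Chain' (· ≠ ·) :=
    (isChain_append.mp ((isChain_append.mp halt).2.1)).1
  have hall2 : ∀ b ∈ m₀ :: M', F x y b = [x, y] ∨ F x y b = [y, x] := by
    intro b hb
    rcases idx_total (hmem b hb).1 (hmem b hb).2 hxy with h | h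
    · exact Or.inl (FE2 hxy (hmem b hb).1 (hmem b hb).2
        (le_of_eq (hc b hb).1) (le_of_eq (hc b hb).2) h)
    · refine Or.inr ?_
      rw [Fcomm]
      exact FE2 hxy.symm (hmem b hb).2 (hmem b hb).1
        (le_of_eq (hc b hb).2) (le_of_eq (hc b hb).1) h
  intro b hb
  rcases mem_cons.mp hb with h | h
  · rw [h, hm₀]
  · rw [blocks_eq hxy M' m₀ hflat hall2 b h, hm₀]

theorem keyNE {x z y : V8} (hxz : x ≠ z) (hzy : z ≠ y) (hxy : x ≠ y)
    {b₀ b₁ m₀ : List V8} {M' : List (List V8)}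
    (hcxM : ∀ b ∈ m₀ :: M', b.count x = 1) (hcx0 : b₀.count x ≤ 1) (hcx1 : b₁.count x ≤ 1)
    (hcyM : ∀ b ∈ m₀ :: M', b.count y = 1) (hcy0 : b₀.count y ≤ 1) (hcy1 : b₁.count y ≤ 1)
    (hczM : ∀ b ∈ m₀ :: M', b.count z = 1) (hcz0 : b₀.count z ≤ 1) (hcz1 : b₁.count z ≤ 1)
    (hxzalt : (F x z b₀ ++ ((((m₀ :: M').map (F x z)).flatten) ++ F x z b₁)).Chain' (· ≠ ·))
    (hzyalt : (F z y b₀ ++ ((((m₀ :: M').map (F z y)).flatten) ++ F z y b₁)).Chain' (· ≠ ·))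
    (hordxz : m₀.idxOf x < m₀.idxOf z)
    (hordzy : m₀.idxOf z < m₀.idxOf y) :
    (F x y b₀ ++ ((((m₀ :: M').map (F x y)).flatten) ++ F x y b₁)).Chain' (· ≠ ·) := by
  have hMne : (m₀ :: M') ≠ [] := by simp
  have hBxz : ∀ b ∈ m₀ :: M', F x z b = [x, z] :=
    pair_blocks hxz (fun b hb => ⟨hcxM b hb, hczM b hb⟩) hxzalt hordxz
  have hBzy : ∀ b ∈ m₀ :: M', F z y b = [z, y] :=
    pair_blocks hzy (fun b hb => ⟨hczM b hb, hcyM b hb⟩) hzyalt hordzy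
  -- memberships in middle blocks
  have hmem : ∀ (v : V8), (∀ b ∈ m₀ :: M', b.count v = 1) → ∀ b ∈ m₀ :: M', v ∈ b :=
    fun v hv b hb => count_pos_iff.mp (by rw [hv b hb]; norm_num)
  -- per-block order for (x,y)
  have hBxy : ∀ b ∈ m₀ :: M', F x y b = [x, y] := by
    intro b hb
    have h1 : b.idxOf x < b.idxOf z := (FIFF hxz (hmem x hcxM b hb) (hmem z hczM b hb)
      (le_of_eq (hcxM b hb)) (le_of_eq (hczM b hb))).mpr (hBxz b hb)
    have h2 : b.idxOf z < b.idxOf y := (FIFF hzy (hmem z hczM b hb) (hmem y hcyM b hb)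
      (le_of_eq (hczM b hb)) (le_of_eq (hcyM b hb))).mpr (hBzy b hb)
    exact FE2 hxy (hmem x hcxM b hb) (hmem y hcyM b hb)
      (le_of_eq (hcxM b hb)) (le_of_eq (hcyM b hb)) (lt_trans h1 h2)
  -- boundary facts
  have Hx := edgeL hxz hMne hxzalt hBxz hcx0 hcz0
  have Hz := edgeL hzy hMne hzyalt hBzy hcz0 hcy0
  have Kz := edgeR hxz hMne hxzalt hBxz hcx1 hcz1
  have Ky := edgeR hzy hMne hzyalt hBzy hcz1 hcy1
  have hA : (F x y b₀).getLast? ≠ some x := by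
    by_cases hx0 : x ∈ b₀
    · obtain ⟨hz0, h1⟩ := Hx hx0
      obtain ⟨hy0, h2⟩ := Hz hz0
      rw [FE2 hxy hx0 hy0 hcx0 hcy0 (lt_trans h1 h2)]
      intro h
      simp at h
      exact hxy h.symm
    · by_cases hy0 : y ∈ b₀
      · rw [Fcomm, FE1 hy0 hx0 hcy0]
        intro h
        simp at h
        exact hxy h.symm
      · rw [FE0 hx0 hy0]; simp
  have hC : (F x y b₁).head? ≠ some y := by
    by_cases hy1 : y ∈ b₁
    · obtain ⟨hz1, h2⟩ := Ky hy1
      obtain ⟨hx1, h1⟩ := Kz hz1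
      rw [FE2 hxy hx1 hy1 hcx1 hcy1 (lt_trans h1 h2)]
      intro h
      simp at h
      exact hxy h
    · by_cases hx1 : x ∈ b₁
      · rw [FE1 hx1 hy1 hcx1]
        intro h
        simp at h
        exact hxy h
      · rw [FE0 hx1 hy1]; simp
  -- assemble
  refine isChain_append.mpr ⟨CHF hxy hcx0 hcy0, isChain_append.mpr
    ⟨chain'_flatten_const hxy hBxy, CHF hxy hcx1 hcy1, ?_⟩, ?_⟩
  · intro u hu v hv
    rw [getLast?_flatten_const hMne hBxy] at hu
    have hu' : u = y := Eq.symm (by simpa using hu)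
    rw [Option.mem_def] at hv
    intro heq
    apply hC
    rw [hv, ← heq, hu']
  · intro u hu v hv
    rw [head?_append, head?_flatten_const hMne hBxy] at hv
    have hv' : v = x := Eq.symm (by simpa using hv)
    rw [Option.mem_def] at hu
    intro heq
    apply hA
    rw [hu, heq, hv']

theorem tree {r : V8 → V8 → Prop}
    (h0 : r 1 2 ∨ r 2 1)
    (h1 : r 1 3 ∨ r 3 1)
    (h2 : r 2 3 ∨ r 3 2)
    (h3 : r 4 5 ∨ r 5 4)
    (h4 : r 4 6 ∨ r 6 4)
    (h5 : r 4 7 ∨ r 7 4)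
    (h6 : r 5 6 ∨ r 6 5)
    (h7 : r 5 7 ∨ r 7 5)
    (h8 : r 6 7 ∨ r 7 6)
    (h9 : r 1 4 ∨ r 4 1)
    (h10 : r 1 7 ∨ r 7 1)
    (h11 : r 2 6 ∨ r 6 2)
    (h12 : r 2 7 ∨ r 7 2) :
    (r 1 2 ∧ r 2 6) ∨ (r 6 2 ∧ r 2 3) ∨ (r 3 2 ∧ r 2 7) ∨ (r 5 7 ∧ r 7 2) ∨ (r 1 7 ∧ r 7 5) ∨ (r 7 1 ∧ r 1 3) ∨ (r 3 1 ∧ r 1 4) ∨ (r 4 1 ∧ r 1 2) ∨ (r 2 1 ∧ r 1 4) ∨ (r 4 1 ∧ r 1 3) ∨ (r 3 1 ∧ r 1 7) ∨ (r 5 7 ∧ r 7 1) ∨ (r 2 7 ∧ r 7 5) ∨ (r 7 2 ∧ r 2 3) ∨ (r 3 2 ∧ r 2 6) ∨ (r 6 2 ∧ r 2 1) := by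
  rcases h0 with c0 | c0
  · -- 1->2
    rcases h1 with c1 | c1
    · -- 1->3
      rcases h2 with c2 | c2
      · -- 2->3
        rcases h11 with c3 | c3
        · -- 2->6
          exact Or.inl ⟨c0, c3⟩
        · -- 6->2
          exact Or.inr (Or.inl ⟨c3, c2⟩)
      · -- 3->2
        rcases h7 with c4 | c4
        · -- 5->7
          rcases h12 with c5 | c5
          · -- 2->7
            exact Or.inr (Or.inr (Or.inl ⟨c2, c5⟩))
          · -- 7->2
            exact Or.inr (Or.inr (Or.inr (Or.inl ⟨c4, c5⟩)))
        · -- 7->5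
          rcases h10 with c6 | c6
          · -- 1->7
            exact Or.inr (Or.inr (Or.inr (Or.inr (Or.inl ⟨c6, c4⟩))))
          · -- 7->1
            exact Or.inr (Or.inr (Or.inr (Or.inr (Or.inr (Or.inl ⟨c6, c1⟩)))))
    · -- 3->1
      rcases h9 with c7 | c7
      · -- 1->4
        exact Or.inr (Or.inr (Or.inr (Or.inr (Or.inr (Or.inr (Or.inl ⟨c1, c7⟩))))))
      · -- 4->1
        exact Or.inr (Or.inr (Or.inr (Or.inr (Or.inr (Or.inr (Or.inr (Or.inl ⟨c7, c0⟩)))))))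
  · -- 2->1
    rcases h1 with c8 | c8
    · -- 1->3
      rcases h9 with c9 | c9
      · -- 1->4
        exact Or.inr (Or.inr (Or.inr (Or.inr (Or.inr (Or.inr (Or.inr (Or.inr (Or.inl ⟨c0, c9⟩))))))))
      · -- 4->1
        exact Or.inr (Or.inr (Or.inr (Or.inr (Or.inr (Or.inr (Or.inr (Or.inr (Or.inr (Or.inl ⟨c9, c8⟩)))))))))
    · -- 3->1
      rcases h2 with c10 | c10
      · -- 2->3
        rcases h7 with c11 | c11
        · -- 5->7
          rcases h10 with c12 | c12
          · -- 1->7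
            exact Or.inr (Or.inr (Or.inr (Or.inr (Or.inr (Or.inr (Or.inr (Or.inr (Or.inr (Or.inr (Or.inl ⟨c8, c12⟩))))))))))
          · -- 7->1
            exact Or.inr (Or.inr (Or.inr (Or.inr (Or.inr (Or.inr (Or.inr (Or.inr (Or.inr (Or.inr (Or.inr (Or.inl ⟨c11, c12⟩)))))))))))
        · -- 7->5
          rcases h12 with c13 | c13
          · -- 2->7
            exact Or.inr (Or.inr (Or.inr (Or.inr (Or.inr (Or.inr (Or.inr (Or.inr (Or.inr (Or.inr (Or.inr (Or.inr (Or.inl ⟨c13, c11⟩))))))))))))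
          · -- 7->2
            exact Or.inr (Or.inr (Or.inr (Or.inr (Or.inr (Or.inr (Or.inr (Or.inr (Or.inr (Or.inr (Or.inr (Or.inr (Or.inr (Or.inl ⟨c13, c10⟩)))))))))))))
      · -- 3->2
        rcases h11 with c14 | c14
        · -- 2->6
          exact Or.inr (Or.inr (Or.inr (Or.inr (Or.inr (Or.inr (Or.inr (Or.inr (Or.inr (Or.inr (Or.inr (Or.inr (Or.inr (Or.inr (Or.inl ⟨c10, c14⟩))))))))))))))
        · -- 6->2
          exact Or.inr (Or.inr (Or.inr (Or.inr (Or.inr (Or.inr (Or.inr (Or.inr (Or.inr (Or.inr (Or.inr (Or.inr (Or.inr (Or.inr (Or.inr (⟨c14, c0⟩)))))))))))))))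

instance : DecidableRel B4.Adj :=
  fun a b => decidable_of_iff' _ (SimpleGraph.fromRel_adj _ a b)

end NB4

open NB4 List in
/-- The graph `B₄` is not word-representable. -/
theorem stmt12 : ¬ WordRepresentable B4 := by
  rintro ⟨w0, hmem0, hiff0⟩
  set w : List V8 := w0 ++ w0.dedup with hwdef
  have hmem : ∀ v : V8, v ∈ w := fun v => mem_append.mpr (Or.inl (hmem0 v))
  have hiff : ∀ x y : V8, x ≠ y → (Alternates w x y ↔ B4.Adj x y) := by
    intro x y hxy
    rw [hwdef, alternates_append_dedup hxy (hmem0 x) (hmem0 y)]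
    exact hiff0 x y hxy
  have hc : 2 ≤ w.count 0 := by
    rw [hwdef, count_append]
    have h1 : 0 < w0.count 0 := count_pos_iff.mpr (hmem0 0)
    have h2 : 0 < w0.dedup.count 0 := count_pos_iff.mpr (mem_dedup.mpr (hmem0 0))
    omega
  obtain ⟨b₀, R, hw, h0f, hlen⟩ := exists_glue w
  rcases R.eq_nil_or_concat with rfl | ⟨L, b₁, rfl⟩
  · simp at hlen; omega
  cases L with
  | nil => simp at hlen; omega
  | cons m₀ M' =>
  rw [concat_eq_append] at hw hlen
  rw [concat_eq_append] at h0f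
  -- counts
  have hcnt : ∀ v : V8, v ≠ 0 →
      ((∀ b ∈ m₀ :: M', b.count v = 1) ∧ b₀.count v ≤ 1 ∧ b₁.count v ≤ 1) := by
    intro v hv
    have hadj : B4.Adj 0 v := by
      revert hv; revert v; decide
    have halt : Alternates w 0 v := (hiff 0 v (Ne.symm hv)).mpr hadj
    unfold Alternates at halt
    rw [hw] at halt
    exact alt0 hv (m₀ :: M') b₀ b₁ h0f halt
  have hmemm : ∀ v : V8, v ≠ 0 → v ∈ m₀ := fun v hv =>
    count_pos_iff.mp (by rw [(hcnt v hv).1 m₀ (by simp)]; norm_num)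
  -- shape
  have shape : ∀ x y : V8, x ≠ 0 → y ≠ 0 →
      (w.filter (fun z => decide (z = x ∨ z = y))) =
        F x y b₀ ++ ((((m₀ :: M').map (F x y)).flatten) ++ F x y b₁) := by
    intro x y hx hy
    rw [hw, filter_glue_eq (by simp [Ne.symm hx, Ne.symm hy]) _ (by simp) h0f]
    simp only [map_cons, map_append, flatten_cons, flatten_append, map_nil, flatten_nil,
      append_nil, append_assoc]
    rfl
  -- contradiction engine
  have key : ∀ x z y : V8, x ≠ z → z ≠ y → x ≠ y → x ≠ 0 → y ≠ 0 → z ≠ 0 →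
      B4.Adj x z → B4.Adj z y → ¬ B4.Adj x y →
      m₀.idxOf x < m₀.idxOf z → m₀.idxOf z < m₀.idxOf y → False := by
    intro x z y hxz hzy hxy hx0 hy0 hz0 haxz hazy hnxy h1 h2
    have hxzalt := (hiff x z hxz).mpr haxz
    unfold Alternates at hxzalt
    rw [shape x z hx0 hz0] at hxzalt
    have hzyalt := (hiff z y hzy).mpr hazy
    unfold Alternates at hzyalt
    rw [shape z y hz0 hy0] at hzyalt
    have hres := keyNE hxz hzy hxy
      (hcnt x hx0).1 (hcnt x hx0).2.1 (hcnt x hx0).2.2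
      (hcnt y hy0).1 (hcnt y hy0).2.1 (hcnt y hy0).2.2
      (hcnt z hz0).1 (hcnt z hz0).2.1 (hcnt z hz0).2.2
      hxzalt hzyalt h1 h2
    apply hnxy
    apply (hiff x y hxy).mp
    unfold Alternates
    rw [shape x y hx0 hy0]
    exact hres
  -- totality of the block order on relevant pairs
  have tot : ∀ a b : V8, a ≠ 0 → b ≠ 0 → a ≠ b →
      (m₀.idxOf a < m₀.idxOf b ∨ m₀.idxOf b < m₀.idxOf a) :=
    fun a b ha hb hab => idx_total (hmemm a ha) (hmemm b hb) hab
  have htree := tree (r := fun a b => m₀.idxOf a < m₀.idxOf b)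
    (tot 1 2 (by decide) (by decide) (by decide)) (tot 1 3 (by decide) (by decide) (by decide))
    (tot 2 3 (by decide) (by decide) (by decide)) (tot 4 5 (by decide) (by decide) (by decide))
    (tot 4 6 (by decide) (by decide) (by decide)) (tot 4 7 (by decide) (by decide) (by decide))
    (tot 5 6 (by decide) (by decide) (by decide)) (tot 5 7 (by decide) (by decide) (by decide))
    (tot 6 7 (by decide) (by decide) (by decide)) (tot 1 4 (by decide) (by decide) (by decide))
    (tot 1 7 (by decide) (by decide) (by decide)) (tot 2 6 (by decide) (by decide) (by decide))
    (tot 2 7 (by decide) (by decide) (by decide))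
  rcases htree with h|h|h|h|h|h|h|h|h|h|h|h|h|h|h|h <;>
    exact key _ _ _ (by decide) (by decide) (by decide) (by decide) (by decide) (by decide)
      (by decide) (by decide) (by decide) h.1 h.2
end
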